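/- arXiv:1705.01275 — 6 statements merged into one kernel-verified Lean document; each statement's English description precedes it below -/
import Mathlib

section
/- Let G be a finite non-abelian AC-group, and let X₁, …, Xₙ be the distinct centralizers of non-central elements of G, ordered so that |X₁| ≤ |X₂| ≤ … ≤ |Xₙ|. Then the Laplacian spectrum of the non-commuting graph 𝒜_G is {0^1, (|G| − |Xₙ|)^{|Xₙ| − |Z(G)| − 1}, …, (|G| − |X₁|)^{|X₁| − |Z(G)| − 1}, (|G| − |Z(G)|)^{n − 1}}; equivalently, the characteristic polynomial of L(𝒜_G) equals X · ∏_{i=1}^{n} (X − (|G| − |Xᵢ|))^{|Xᵢ| − |Z(G)| − 1} · (X − (|G| − |Z(G)|))^{n − 1}. -/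
open Polynomial

/-- The non-commuting graph of a group `G`: vertices are the non-central elements,
two vertices adjacent iff they do not commute. -/
def nonCommGraph (G : Type*) [Group G] : SimpleGraph {x : G // x ∉ Subgroup.center G} where
  Adj x y := ¬ Commute (x : G) (y : G)
  symm := ⟨fun _ _ h hc => h hc.symm⟩
  loopless := ⟨fun _ h => h (Commute.refl _)⟩

/-- The Laplacian matrix of the non-commuting graph, over `ℝ`. -/
noncomputable def ncLap (G : Type*) [Group G] [Fintype G] :
    Matrix {x : G // x ∉ Subgroup.center G} {x : G // x ∉ Subgroup.center G} ℝ :=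
  letI := Classical.decEq G
  letI : DecidablePred (fun x : G => x ∉ Subgroup.center G) := fun _ => Classical.dec _
  letI : DecidableRel (nonCommGraph G).Adj := fun _ _ => Classical.dec _
  (nonCommGraph G).lapMatrix ℝ

/-- The characteristic polynomial of the Laplacian matrix of the non-commuting graph. -/
noncomputable def ncCharpoly (G : Type*) [Group G] [Fintype G] : Polynomial ℝ :=
  letI := Classical.decEq G
  letI : DecidablePred (fun x : G => x ∉ Subgroup.center G) := fun _ => Classical.dec _
  (ncLap G).charpoly

/-- The non-commuting graph of `G` is L-integral: every eigenvalue of its Laplacian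
matrix is an integer. -/
def ncLIntegral (G : Type*) [Group G] [Fintype G] : Prop :=
  letI := Classical.decEq G
  letI : DecidablePred (fun x : G => x ∉ Subgroup.center G) := fun _ => Classical.dec _
  ∀ μ ∈ spectrum ℝ (ncLap G), ∃ k : ℤ, μ = (k : ℝ)

section LinAlg
open Matrix in

theorem charpoly_blowup {V : Type*} [Fintype V] [DecidableEq V] {n : ℕ} (hn : 0 < n) (f : V → Fin n)
    (hfib : ∀ i, 0 < (Finset.univ.filter fun z : V => f z = i).card)
    (L : Matrix V V ℝ)
    (hL : ∀ x y, L x y = if x = y then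
        ((Fintype.card V : ℝ) - ((Finset.univ.filter fun z : V => f z = f x).card : ℝ))
      else if f x = f y then 0 else -1) :
    L.charpoly = X * (∏ i : Fin n,
        (X - C ((Fintype.card V : ℝ) - ((Finset.univ.filter fun z : V => f z = i).card : ℝ))) ^
          ((Finset.univ.filter fun z : V => f z = i).card - 1)) *
      (X - C ((Fintype.card V : ℝ))) ^ (n - 1) := by
  classical
  set m : Fin n → ℕ := fun i => (Finset.univ.filter fun z : V => f z = i).card with hm
  set N : ℕ := Fintype.card V with hN
  set φ : ℝ[X] →+* RatFunc ℝ := (algebraMap ℝ[X] (RatFunc ℝ) : ℝ[X] →+* RatFunc ℝ) with hφdef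
  have hφ : Function.Injective φ := RatFunc.algebraMap_injective ℝ
  apply hφ
  set K := RatFunc ℝ
  set t : K := φ X with ht
  set u : K := φ (X - C (N : ℝ)) with hu
  set d : Fin n → K := fun i => φ (X - C ((N : ℝ) - (m i : ℝ))) with hd
  have hu0 : u ≠ 0 := by
    intro h
    have h2 : φ (X - C ((N:ℕ) : ℝ)) = φ 0 := by rw [map_zero]; exact h
    exact X_sub_C_ne_zero (R := ℝ) _ (hφ h2)
  have hd0 : ∀ i, d i ≠ 0 := by
    intro i h
    have h2 : φ (X - C ((N : ℝ) - (m i : ℝ))) = φ 0 := by rw [map_zero]; exact h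
    exact X_sub_C_ne_zero (R := ℝ) _ (hφ h2)
  have hdu : ∀ i, d i = u + (m i : K) := by
    intro i
    have hpoly : (X - C ((N : ℝ) - (m i : ℝ))) = (X - C ((N:ℕ):ℝ)) + C ((m i : ℕ) : ℝ) := by
      rw [map_sub C]; ring
    show φ (X - C ((N : ℝ) - (m i : ℝ))) = u + (m i : K)
    rw [hpoly, map_add, hu]
    congr 1
    rw [C_eq_natCast]
    exact map_natCast φ (m i)
  have htu : t = u + (N : K) := by
    have hpoly : (X : ℝ[X]) = (X - C ((N:ℕ):ℝ)) + C ((N : ℕ) : ℝ) := by ring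
    show φ X = u + (N : K)
    rw [hpoly, map_add, hu]
    congr 1
    rw [C_eq_natCast]
    exact map_natCast φ N
  have hsum : ∑ i : Fin n, (m i : K) = (N : K) := by
    have h1 : ∑ i : Fin n, m i = N := by
      rw [hN, ← Finset.card_univ]
      exact (Finset.card_eq_sum_card_fiberwise (fun x _ => Finset.mem_univ (f x))).symm
    rw [← h1, Nat.cast_sum]
  -- matrices
  set U : Matrix V (Fin n) K := Matrix.of (fun v i => if f v = i then 1 else 0) with hU
  set Cn : Matrix (Fin n) (Fin n) K := Matrix.of (fun i j => if i = j then 0 else 1) with hCn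
  set Δ : Matrix V V K := Matrix.diagonal (fun v => d (f v)) with hΔ
  set Δ' : Matrix V V K := Matrix.diagonal (fun v => (d (f v))⁻¹) with hΔ'
  set D : Matrix (Fin n) (Fin n) K := Matrix.diagonal (fun i => (m i : K) * (d i)⁻¹) with hD
  set E : Matrix (Fin n) (Fin n) K := Matrix.diagonal (fun i => u * (d i)⁻¹) with hE
  set E' : Matrix (Fin n) (Fin n) K := Matrix.diagonal (fun i => d i * u⁻¹) with hE'
  set Jn : Matrix (Fin n) (Fin n) K := Matrix.of (fun _ _ => (1:K)) with hJn
  set co : Matrix (Fin n) Unit K := Matrix.replicateCol Unit (fun _ => (1:K)) with hco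
  set ro : Matrix Unit (Fin n) K := Matrix.replicateRow Unit (fun _ => (1:K)) with hro
  have hUCU : ∀ v w, (U * Cn * Uᵀ) v w = if f v = f w then 0 else 1 := by
    intro v w
    rw [Matrix.mul_apply]
    have h1 : ∀ j, (U * Cn) v j = if f v = j then 0 else 1 := by
      intro j
      rw [Matrix.mul_apply, Finset.sum_eq_single (f v)]
      · simp [hU, hCn]
      · intro x _ hx
        simp [hU, hCn, Ne.symm hx]
      · simp
    have h2 : ∀ j, Uᵀ j w = if f w = j then (1:K) else 0 := fun j => by
      simp [hU, Matrix.transpose_apply]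
    calc ∑ j, (U * Cn) v j * Uᵀ j w
        = ∑ j, (if f v = j then (0:K) else 1) * (if f w = j then 1 else 0) :=
          Finset.sum_congr rfl fun j _ => by rw [h1, h2]
      _ = if f v = f w then 0 else 1 := by
          rw [Finset.sum_eq_single (f w)]
          · simp
          · intro j _ hj
            simp [Ne.symm hj]
          · simp
  have step1 : (charmatrix L).map φ = Δ + U * Cn * Uᵀ := by
    ext v w
    rcases eq_or_ne v w with rfl | hvw
    · rw [Matrix.map_apply, charmatrix_apply_eq, Matrix.add_apply, hUCU, if_pos rfl,
        hΔ, Matrix.diagonal_apply_eq, hL]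
      rw [if_pos rfl, add_zero, hd]
    · rw [Matrix.map_apply, charmatrix_apply_ne _ _ _ hvw, Matrix.add_apply, hUCU,
        hΔ, Matrix.diagonal_apply_ne _ hvw, hL, if_neg hvw, zero_add]
      split_ifs with h <;> simp
  have hΔΔ' : Δ * Δ' = 1 := by
    rw [hΔ, hΔ', diagonal_mul_diagonal]
    have hfun : (fun v : V => d (f v) * (d (f v))⁻¹) = fun _ => (1:K) :=
      funext fun v => mul_inv_cancel₀ (hd0 _)
    rw [hfun, Matrix.diagonal_one]
  have hfact : Δ + U * Cn * Uᵀ = Δ * (1 + (Δ' * U * Cn) * Uᵀ) := by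
    rw [Matrix.mul_add, Matrix.mul_one, ← Matrix.mul_assoc, ← Matrix.mul_assoc,
      ← Matrix.mul_assoc, hΔΔ', Matrix.one_mul]
  have hUdU : Uᵀ * Δ' * U = D := by
    rw [hD]
    ext i j
    rw [Matrix.mul_apply]
    have hterm : ∀ v : V, (Uᵀ * Δ') i v * U v j
        = if f v = i then (if i = j then (d i)⁻¹ else 0) else 0 := by
      intro v
      rw [Matrix.mul_diagonal, Matrix.transpose_apply, hU]
      simp only [Matrix.of_apply]
      rcases eq_or_ne (f v) i with rfl | hvi
      · rcases eq_or_ne (f v) j with h | h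
        · simp [h]
        · simp [h]
      · simp [hvi]
    rw [Finset.sum_congr rfl (fun v _ => hterm v), Finset.sum_ite, Finset.sum_const,
      Finset.sum_const_zero, add_zero]
    rcases eq_or_ne i j with rfl | hij
    · rw [Matrix.diagonal_apply_eq, if_pos rfl, nsmul_eq_mul]
    · rw [Matrix.diagonal_apply_ne _ hij, if_neg hij, smul_zero]
  have hcomm1 : (Cn * Uᵀ) * (Δ' * U) = Cn * D := by
    rw [Matrix.mul_assoc, ← Matrix.mul_assoc Uᵀ Δ' U, hUdU]
  have hE1D : E = 1 - D := by
    rw [hE, hD, ← Matrix.diagonal_one, Matrix.diagonal_sub]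
    refine congrArg Matrix.diagonal (funext fun i => ?_)
    have h1 : d i - (m i : K) = u := by rw [hdu i]; ring
    rw [← h1, sub_mul, mul_inv_cancel₀ (hd0 i)]
  have hEE' : E * E' = 1 := by
    rw [hE, hE', diagonal_mul_diagonal]
    have hfun : (fun i => (u * (d i)⁻¹) * (d i * u⁻¹)) = fun _ => (1:K) := by
      funext i
      calc u * (d i)⁻¹ * (d i * u⁻¹) = (u * u⁻¹) * ((d i)⁻¹ * d i) := by ring
        _ = 1 := by rw [mul_inv_cancel₀ hu0, inv_mul_cancel₀ (hd0 i), one_mul]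
    rw [hfun, Matrix.diagonal_one]
  have hJco : Jn = co * ro := by
    ext i j
    simp [hJn, hco, hro, Matrix.mul_apply]
  have hCnD : (1 : Matrix (Fin n) (Fin n) K) + Cn * D = E * (1 + (E' * co) * (ro * D)) := by
    have hCnJ : Cn = Jn - 1 := by
      ext i j
      rcases eq_or_ne i j with rfl | hij
      · simp [hCn, hJn]
      · simp [hCn, hJn, hij, Matrix.one_apply_ne hij]
    rw [Matrix.mul_add, Matrix.mul_one]
    have hassoc : E * (E' * co * (ro * D)) = Jn * D := by
      rw [Matrix.mul_assoc E', ← Matrix.mul_assoc E E', hEE', Matrix.one_mul,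
        ← Matrix.mul_assoc co ro D, ← hJco]
    rw [hassoc, hE1D, hCnJ, Matrix.sub_mul, Matrix.one_mul]
    abel
  have hdetΔ : Δ.det = ∏ i : Fin n, d i ^ m i := by
    have hfw := Finset.prod_fiberwise_of_maps_to' (s := (Finset.univ : Finset V))
      (t := (Finset.univ : Finset (Fin n))) (g := f) (fun x _ => Finset.mem_univ (f x)) d
    rw [hΔ, Matrix.det_diagonal, ← hfw]
    exact Finset.prod_congr rfl fun i _ => by rw [Finset.prod_const]
  have hdetE : E.det = ∏ i : Fin n, (u * (d i)⁻¹) := by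
    rw [hE, Matrix.det_diagonal]
  have hunit : ((1 : Matrix Unit Unit K) + (ro * D) * (E' * co)).det = 1 + (N : K) * u⁻¹ := by
    rw [Matrix.det_unique, Matrix.add_apply, Matrix.one_apply_eq, Matrix.mul_apply]
    congr 1
    calc ∑ i : Fin n, (ro * D) default i * (E' * co) i default
        = ∑ i : Fin n, (m i : K) * u⁻¹ := by
          refine Finset.sum_congr rfl fun i _ => ?_
          rw [hD, Matrix.mul_diagonal, hE', Matrix.diagonal_mul, hro, hco]
          simp only [Matrix.replicateRow_apply, Matrix.replicateCol_apply, one_mul, mul_one]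
          calc (m i : K) * (d i)⁻¹ * (d i * u⁻¹) = (m i : K) * u⁻¹ * ((d i)⁻¹ * d i) := by ring
            _ = (m i : K) * u⁻¹ := by rw [inv_mul_cancel₀ (hd0 i), mul_one]
      _ = (N : K) * u⁻¹ := by rw [← Finset.sum_mul, hsum]
  -- assemble
  have lhs_eq : φ L.charpoly
      = (∏ i : Fin n, d i ^ m i) * ((∏ i : Fin n, (u * (d i)⁻¹)) * (1 + (N:K) * u⁻¹)) := by
    rw [Matrix.charpoly, RingHom.map_det, RingHom.mapMatrix_apply, step1, hfact, det_mul,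
      Matrix.mul_assoc (Δ' * U) Cn Uᵀ]
    rw [show Δ' * U * (Cn * Uᵀ) = (Δ' * U) * (Cn * Uᵀ) from rfl]
    rw [Matrix.det_one_add_mul_comm, hcomm1, hCnD, det_mul, hdetΔ, hdetE]
    congr 1
    congr 1
    rw [Matrix.det_one_add_mul_comm, hunit]
  have rhs_eq : φ (X * (∏ i : Fin n,
        (X - C ((N : ℝ) - ((Finset.univ.filter fun z : V => f z = i).card : ℝ))) ^
          ((Finset.univ.filter fun z : V => f z = i).card - 1)) *
      (X - C ((N : ℝ))) ^ (n - 1))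
      = t * (∏ i : Fin n, d i ^ (m i - 1)) * u ^ (n - 1) := by
    rw [_root_.map_mul, _root_.map_mul, map_pow, map_prod]
    simp only [map_pow]
    rfl
  have hgoal : (∏ i : Fin n, d i ^ m i) * ((∏ i : Fin n, (u * (d i)⁻¹)) * (1 + (N:K) * u⁻¹))
      = t * (∏ i : Fin n, d i ^ (m i - 1)) * u ^ (n - 1) := by
    have h1 : ∏ i : Fin n, (u * (d i)⁻¹) = u ^ (n-1) * u * ∏ i : Fin n, (d i)⁻¹ := by
      have hnn : n - 1 + 1 = n := by omega
      rw [Finset.prod_mul_distrib, Finset.prod_const, Finset.card_univ, Fintype.card_fin,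
        ← pow_succ, hnn]
    have h2 : ∏ i : Fin n, d i ^ m i = (∏ i : Fin n, d i ^ (m i - 1)) * ∏ i : Fin n, d i := by
      rw [← Finset.prod_mul_distrib]
      refine Finset.prod_congr rfl fun i _ => ?_
      rw [← pow_succ]
      congr 1
      have hmi : 0 < m i := hfib i
      omega
    have h3 : (∏ i : Fin n, d i) * ∏ i : Fin n, (d i)⁻¹ = 1 := by
      rw [← Finset.prod_mul_distrib]
      exact Finset.prod_eq_one fun i _ => mul_inv_cancel₀ (hd0 i)
    have h4 : 1 + (N:K) * u⁻¹ = t * u⁻¹ := by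
      rw [htu]
      rw [add_mul, mul_inv_cancel₀ hu0]
    have h5 : u * u⁻¹ = 1 := mul_inv_cancel₀ hu0
    rw [h1, h2, h4]
    calc (∏ i : Fin n, d i ^ (m i - 1)) * (∏ i : Fin n, d i)
          * (u ^ (n-1) * u * (∏ i : Fin n, (d i)⁻¹) * (t * u⁻¹))
        = t * (∏ i : Fin n, d i ^ (m i - 1)) * u ^ (n-1)
          * (((∏ i : Fin n, d i) * (∏ i : Fin n, (d i)⁻¹)) * (u * u⁻¹)) := by ring
      _ = t * (∏ i : Fin n, d i ^ (m i - 1)) * u ^ (n-1) := by rw [h3, h5, mul_one, mul_one]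
  rw [lhs_eq, rhs_eq]
  exact hgoal

end LinAlg

section Group
variable (G : Type*) [Group G] [Fintype G]

-- instance-irrelevance of charpoly
lemma charpoly_irrel {V : Type*} (M : Matrix V V ℝ) (i1 i2 : DecidableEq V) (j1 j2 : Fintype V) :
    @Matrix.charpoly ℝ _ V i1 j1 M = @Matrix.charpoly ℝ _ V i2 j2 M := by
  rw [Subsingleton.elim i1 i2, Subsingleton.elim j1 j2]

variable {G}

lemma self_mem_centralizer' {x : G} : x ∈ Subgroup.centralizer {x} :=
  Subgroup.mem_centralizer_iff.2 (fun g hg => by rw [Set.mem_singleton_iff] at hg; rw [hg])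

lemma key_centralizer_eq (hAC : ∀ x : G, x ∉ Subgroup.center G →
      ∀ a ∈ Subgroup.centralizer {x}, ∀ b ∈ Subgroup.centralizer {x}, a * b = b * a)
    {x y : G} (hx : x ∉ Subgroup.center G) (hy : y ∉ Subgroup.center G)
    (hxy : x * y = y * x) :
    Subgroup.centralizer {x} = Subgroup.centralizer {y} := by
  have hyx : y ∈ Subgroup.centralizer {x} :=
    Subgroup.mem_centralizer_iff.2 (fun g hg => by rw [Set.mem_singleton_iff] at hg; rw [hg, hxy])
  have hxy' : x ∈ Subgroup.centralizer {y} :=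
    Subgroup.mem_centralizer_iff.2 (fun g hg => by
      rw [Set.mem_singleton_iff] at hg; rw [hg, hxy])
  apply le_antisymm
  · intro a ha
    refine Subgroup.mem_centralizer_iff.2 (fun g hg => ?_)
    rw [Set.mem_singleton_iff] at hg
    rw [hg]
    exact hAC x hx y hyx a ha
  · intro a ha
    refine Subgroup.mem_centralizer_iff.2 (fun g hg => ?_)
    rw [Set.mem_singleton_iff] at hg
    rw [hg]
    exact hAC y hy x hxy' a ha

end Group


/-- Laplacian spectrum of the non-commuting graph of a finite
non-abelian AC-group, where `S 1, ..., S n` are the distinct centralizers of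
non-central elements, ordered by increasing cardinality. -/
theorem laplacian_spectrum_nc_graph_AC_group
    (G : Type*) [Group G] [Fintype G]
    (hna : ¬ ∀ a b : G, a * b = b * a)
    (hAC : ∀ x : G, x ∉ Subgroup.center G →
      ∀ a ∈ Subgroup.centralizer {x}, ∀ b ∈ Subgroup.centralizer {x}, a * b = b * a)
    (n : ℕ) (S : Fin n → Subgroup G)
    (hinj : Function.Injective S)
    (hcent : ∀ i, ∃ x : G, x ∉ Subgroup.center G ∧ S i = Subgroup.centralizer {x})
    (hall : ∀ x : G, x ∉ Subgroup.center G → ∃ i, Subgroup.centralizer {x} = S i)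
    (hmono : Monotone fun i => Nat.card (S i)) :
    ncCharpoly G =
      X *
      (∏ i : Fin n,
        (X - C ((Fintype.card G : ℝ) - (Nat.card (S i) : ℝ))) ^
          (Nat.card (S i) - Nat.card (Subgroup.center G) - 1)) *
      (X - C ((Fintype.card G : ℝ) - (Nat.card (Subgroup.center G) : ℝ))) ^ (n - 1) := by
    classical
  choose f hf using fun x : {x : G // x ∉ Subgroup.center G} => hall (x : G) x.2
  have hexV : ∃ g : G, g ∉ Subgroup.center G := by
    by_contra h
    push_neg at h
    exact hna fun a b => Subgroup.mem_center_iff.1 (h b) a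
  obtain ⟨g₀, hg₀⟩ := hexV
  obtain ⟨i₀, -⟩ := hall g₀ hg₀
  have hn : 0 < n := i₀.pos
  have hAdj : ∀ x y : {x : G // x ∉ Subgroup.center G},
      (nonCommGraph G).Adj x y ↔ f x ≠ f y := by
    intro x y
    constructor
    · intro hadj hfe
      apply (show ¬ Commute (x:G) (y:G) from hadj)
      have hCeq : Subgroup.centralizer {(x:G)} = Subgroup.centralizer {(y:G)} := by
        rw [hf x, hf y, hfe]
      have hy : (y:G) ∈ Subgroup.centralizer {(x:G)} := by
        rw [hCeq]; exact self_mem_centralizer'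
      exact Subgroup.mem_centralizer_iff.1 hy (x:G) rfl
    · intro hne; show ¬ Commute (x:G) (y:G); intro hc
      exact hne (hinj (by rw [← hf x, ← hf y, key_centralizer_eq hAC x.2 y.2 hc.eq]))
  have hfmem : ∀ (g : G) (hg : g ∉ Subgroup.center G) (i : Fin n),
      f ⟨g, hg⟩ = i ↔ g ∈ S i := by
    intro g hg i
    constructor
    · intro h
      rw [← h, ← hf ⟨g, hg⟩]
      exact self_mem_centralizer'
    · intro hgS
      obtain ⟨x₀, hx₀Z, hx₀⟩ := hcent i
      have hgC : g ∈ Subgroup.centralizer {x₀} := by rw [← hx₀]; exact hgS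
      have hcom : x₀ * g = g * x₀ := Subgroup.mem_centralizer_iff.1 hgC x₀ rfl
      have hCg : Subgroup.centralizer {g} = S i := by
        rw [← key_centralizer_eq hAC hx₀Z hg hcom, hx₀]
      exact hinj ((hf ⟨g, hg⟩).symm.trans hCg)
  -- cardinalities
  have hzcard : Nat.card (Subgroup.center G)
      = (Finset.univ.filter fun g : G => g ∈ Subgroup.center G).card := by
    rw [Nat.card_eq_fintype_card]
    exact Fintype.card_subtype _
  have hcardS : ∀ i, Nat.card (S i)
      = (Finset.univ.filter fun x : {x : G // x ∉ Subgroup.center G} => f x = i).card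
        + Nat.card (Subgroup.center G) := by
    intro i
    obtain ⟨x₀, hx₀Z, hx₀⟩ := hcent i
    have hZle : ∀ g : G, g ∈ Subgroup.center G → g ∈ S i := by
      intro g hg; rw [hx₀]; exact Subgroup.center_le_centralizer _ hg
    have h1 : Nat.card (S i) = (Finset.univ.filter fun g : G => g ∈ S i).card := by
      rw [Nat.card_eq_fintype_card]
      exact Fintype.card_subtype _
    have key := Finset.card_filter_add_card_filter_not
      (s := Finset.univ.filter fun g : G => g ∈ S i)
      (p := fun g : G => g ∈ Subgroup.center G)
    rw [Finset.filter_filter, Finset.filter_filter] at key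
    have e1 : (Finset.univ.filter fun g : G => g ∈ S i ∧ g ∈ Subgroup.center G)
        = Finset.univ.filter fun g : G => g ∈ Subgroup.center G :=
      Finset.filter_congr fun g _ => and_iff_right_of_imp (hZle g)
    have e2 : (Finset.univ.filter fun x : {x : G // x ∉ Subgroup.center G} => f x = i).card
        = (Finset.univ.filter fun g : G => g ∈ S i ∧ g ∉ Subgroup.center G).card := by
      apply Finset.card_bij (fun (x : {x : G // x ∉ Subgroup.center G}) _ => (x : G))
      · intro x hx
        rw [Finset.mem_filter] at hx ⊢
        exact ⟨Finset.mem_univ _, (hfmem x.1 x.2 i).1 hx.2, x.2⟩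
      · intro a _ b _ h
        exact Subtype.ext h
      · intro g hg
        rw [Finset.mem_filter] at hg
        obtain ⟨-, hgS, hgZ⟩ := hg
        exact ⟨⟨g, hgZ⟩, Finset.mem_filter.2 ⟨Finset.mem_univ _, (hfmem g hgZ i).2 hgS⟩, rfl⟩
    rw [h1, ← key, e1, e2, hzcard]
    omega
  have hGcard : Fintype.card G
      = Fintype.card {x : G // x ∉ Subgroup.center G} + Nat.card (Subgroup.center G) := by
    have key := Finset.card_filter_add_card_filter_not
      (s := (Finset.univ : Finset G)) (p := fun g : G => g ∉ Subgroup.center G)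
    have e3 : (Finset.univ.filter fun g : G => ¬ g ∉ Subgroup.center G)
        = Finset.univ.filter fun g : G => g ∈ Subgroup.center G :=
      Finset.filter_congr fun g _ => not_not
    rw [e3] at key
    rw [hzcard, Fintype.card_subtype, ← Finset.card_univ]
    omega
  have hfib : ∀ i, 0 < (Finset.univ.filter
      fun x : {x : G // x ∉ Subgroup.center G} => f x = i).card := by
    intro i
    obtain ⟨x₀, hx₀Z, hx₀⟩ := hcent i
    have : x₀ ∈ S i := by rw [hx₀]; exact self_mem_centralizer'
    exact Finset.card_pos.2 ⟨⟨x₀, hx₀Z⟩,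
      Finset.mem_filter.2 ⟨Finset.mem_univ _, (hfmem x₀ hx₀Z i).2 this⟩⟩
  have hL : ∀ x y : {x : G // x ∉ Subgroup.center G}, ncLap G x y = if x = y then
      ((Fintype.card {x : G // x ∉ Subgroup.center G} : ℝ)
        - ((Finset.univ.filter fun z : {x : G // x ∉ Subgroup.center G} => f z = f x).card : ℝ))
    else if f x = f y then 0 else -1 := by
    intro x y
    unfold ncLap
    rw [SimpleGraph.lapMatrix, Matrix.sub_apply, SimpleGraph.degMatrix]
    rcases eq_or_ne x y with rfl | hxy
    · rw [Matrix.diagonal_apply_eq, if_pos rfl, SimpleGraph.adjMatrix_apply,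
        if_neg ((nonCommGraph G).loopless.irrefl x), sub_zero]
      have hdeg : ∀ (inst : Fintype ((nonCommGraph G).neighborSet x)),
          @SimpleGraph.degree _ (nonCommGraph G) x inst
          = Fintype.card {x : G // x ∉ Subgroup.center G}
            - (Finset.univ.filter fun z : {x : G // x ∉ Subgroup.center G} => f z = f x).card := by
        intro inst
        have h0 : @SimpleGraph.degree _ (nonCommGraph G) x inst
            = Nat.card ((nonCommGraph G).neighborSet x) := by
          show ((nonCommGraph G).neighborSet x).toFinset.card = _
          rw [Set.toFinset_card]
          exact (@Nat.card_eq_fintype_card _ inst).symm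
        have h1 : Nat.card ((nonCommGraph G).neighborSet x)
            = Nat.card {z : {x : G // x ∉ Subgroup.center G} // ¬ f z = f x} := by
          refine Nat.card_congr (Equiv.subtypeEquivRight fun z => ?_)
          rw [SimpleGraph.mem_neighborSet, hAdj x z]
          exact ne_comm
        rw [h0, h1, Nat.card_eq_fintype_card, Fintype.card_subtype, Finset.filter_not,
          Finset.card_sdiff_of_subset (Finset.filter_subset _ _), Finset.card_univ]
      rw [hdeg _, Nat.cast_sub ((Finset.card_filter_le _ _).trans_eq Finset.card_univ)]
    · rw [Matrix.diagonal_apply_ne _ hxy, if_neg hxy, zero_sub, SimpleGraph.adjMatrix_apply]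
      by_cases h : f x = f y
      · rw [if_pos h, if_neg (fun hadj => ((hAdj x y).1 hadj) h), neg_zero]
      · rw [if_neg h, if_pos ((hAdj x y).2 h)]
  have hcore := charpoly_blowup hn f hfib (ncLap G) hL
  have hcp : ncCharpoly G = (ncLap G).charpoly := by
    unfold ncCharpoly
    exact charpoly_irrel _ _ _ _ _
  rw [hcp, hcore]
  congr 1
  · congr 1
    refine Finset.prod_congr rfl fun i _ => ?_
    have h1 := hcardS i
    have hc : ((Fintype.card {x : G // x ∉ Subgroup.center G} : ℝ)
        - ((Finset.univ.filter fun z : {x : G // x ∉ Subgroup.center G} => f z = i).card : ℝ))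
        = (Fintype.card G : ℝ) - (Nat.card (S i) : ℝ) := by
      rw [hGcard, h1]
      push_cast
      ring
    rw [hc]
    congr 1
    omega
  · have hc : ((Fintype.card {x : G // x ∉ Subgroup.center G}) : ℝ)
        = (Fintype.card G : ℝ) - (Nat.card (Subgroup.center G) : ℝ) := by
      rw [hGcard]
      push_cast
      ring
    rw [hc]
end

section
/- Let G be a finite group such that G/Z(G) is isomorphic to the Suzuki group Sz(2), i.e. the group of order 20 presented by ⟨a, b : a⁵ = b⁴ = 1, b⁻¹ab = a²⟩. Then the Laplacian spectrum of the non-commuting graph 𝒜_G is {0^1, (15|Z(G)|)^{4|Z(G)| − 1}, (16|Z(G)|)^{15|Z(G)| − 5}, (19|Z(G)|)^5}. -/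
open Polynomial

/-- The relations of the presentation `⟨a, b : a⁵ = b⁴ = 1, b⁻¹ab = a²⟩` of the
Suzuki group `Sz(2)`. -/
def szRels : Set (FreeGroup (Fin 2)) :=
  {FreeGroup.of 0 ^ 5, FreeGroup.of 1 ^ 4,
   (FreeGroup.of 1)⁻¹ * FreeGroup.of 0 * FreeGroup.of 1 * (FreeGroup.of 0 ^ 2)⁻¹}

def KK := ZMod 5 × ZMod 4
instance : DecidableEq KK := by unfold KK; infer_instance
instance : Fintype KK := by unfold KK; infer_instance

private lemma pow3mod (x : ℕ) : (3:ZMod 5)^x = 3^(x % 4) := by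
  conv_lhs => rw [← Nat.div_add_mod x 4]
  rw [pow_add, pow_mul]
  have h81 : (3:ZMod 5)^4 = 1 := by decide
  rw [h81, one_pow, one_mul]

private lemma pow3add (a b : ZMod 4) :
    (3:ZMod 5)^(a+b).val = 3^a.val * 3^b.val := by
  rw [ZMod.val_add, ← pow3mod, pow_add]

instance : Group KK where
  mul u v := (u.1 + 3 ^ u.2.val * v.1, u.2 + v.2)
  one := ((0 : ZMod 5), (0 : ZMod 4))
  inv u := (-(3 ^ (-u.2).val * u.1), -u.2)
  mul_assoc u v w := by
    show (_, _) = (_, _)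
    rw [Prod.mk.injEq]
    constructor
    · show u.1 + 3 ^ u.2.val * v.1 + 3 ^ (u.2 + v.2).val * w.1 =
        u.1 + 3 ^ u.2.val * (v.1 + 3 ^ v.2.val * w.1)
      rw [pow3add]; ring
    · exact add_assoc _ _ _
  one_mul u := by
    show ((0:ZMod 5) + 3 ^ (0:ZMod 4).val * u.1, 0 + u.2) = u
    simp
    rfl
  mul_one u := by
    show (u.1 + 3 ^ u.2.val * (0:ZMod 5), u.2 + 0) = u
    simp
    rfl
  inv_mul_cancel u := by
    show (-(3 ^ (-u.2).val * u.1) + 3 ^ (-u.2).val * u.1, -u.2 + u.2) = ((0:ZMod 5), (0:ZMod 4))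
    simp

def pt (u : KK) : Fin 6 :=
  if u.2 = 0 then 0 else
    ⟨(u.1 * ![0, 2, 3, 4] ⟨u.2.val, ZMod.val_lt u.2⟩).val + 1,
      Nat.succ_lt_succ (ZMod.val_lt _)⟩

def repK : Fin 6 → KK :=
  ![((1:ZMod 5),(0:ZMod 4)), ((0:ZMod 5),(1:ZMod 4)), ((3:ZMod 5),(1:ZMod 4)),
    ((1:ZMod 5),(1:ZMod 4)), ((4:ZMod 5),(1:ZMod 4)), ((2:ZMod 5),(1:ZMod 4))]

lemma kk_card : Fintype.card KK = 20 := by decide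
lemma kk_comm_pow : ∀ u v : KK, u ≠ 1 → u * v = v * u →
    (∃ i : Fin 5, v = u ^ (i : ℕ)) ∨ (∃ i : Fin 5, u = v ^ (i : ℕ)) := by decide
lemma kk_pt_iff : ∀ u v : KK, u ≠ 1 → v ≠ 1 → (u * v = v * u ↔ pt u = pt v) := by decide
lemma kk_count : ∀ b : Fin 6, Fintype.card {u : KK // u ≠ 1 ∧ pt u = b}
    = if b = 0 then 4 else 3 := by decide
lemma kk_rep : ∀ b : Fin 6, repK b ≠ 1 ∧ pt (repK b) = b := by decide
lemma kk_card_ne : Fintype.card {u : KK // u ≠ 1} = 19 := by decide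

section PGSection

def fgen : Fin 2 → KK := ![repK 0, repK 1]

lemma hrels : ∀ r ∈ szRels, FreeGroup.lift fgen r = 1 := by
  intro r hr
  simp only [szRels, Set.mem_insert_iff, Set.mem_singleton_iff] at hr
  rcases hr with h | h | h <;> subst h <;>
    simp only [map_pow, map_mul, map_inv, FreeGroup.lift_apply_of] <;> decide

def piK : PresentedGroup szRels →* KK := PresentedGroup.toGroup hrels

local notation "A" => (PresentedGroup.of (rels := szRels) 0)
local notation "B" => (PresentedGroup.of (rels := szRels) 1)

lemma mk_rel {r : FreeGroup (Fin 2)} (hr : r ∈ szRels) :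
    PresentedGroup.mk szRels r = 1 :=
  (QuotientGroup.eq_one_iff _).2 (Subgroup.subset_normalClosure hr)

lemma relA : A ^ 5 = 1 := by
  have := mk_rel (r := FreeGroup.of 0 ^ 5) (by left; rfl)
  rw [map_pow] at this; exact this

lemma relB : B ^ 4 = 1 := by
  have := mk_rel (r := FreeGroup.of 1 ^ 4) (by right; left; rfl)
  rw [map_pow] at this; exact this

lemma relC : A * B = B * A ^ 2 := by
  have h0 := mk_rel (r := (FreeGroup.of 1)⁻¹ * FreeGroup.of 0 * FreeGroup.of 1 *
    (FreeGroup.of 0 ^ 2)⁻¹) (by right; right; rfl)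
  simp only [map_mul, map_inv, map_pow] at h0
  have h2 : B⁻¹ * A * B = A ^ 2 := mul_inv_eq_one.mp h0
  calc A * B = B * (B⁻¹ * (A * B)) := (mul_inv_cancel_left _ _).symm
  _ = B * (B⁻¹ * A * B) := by rw [mul_assoc]
  _ = B * A ^ 2 := by rw [h2]

lemma powA_mod (a : ℕ) : A ^ a = A ^ (a % 5) := by
  conv_lhs => rw [← Nat.div_add_mod a 5]
  rw [pow_add, pow_mul, relA, one_pow, one_mul]

lemma powB_mod (a : ℕ) : B ^ a = B ^ (a % 4) := by
  conv_lhs => rw [← Nat.div_add_mod a 4]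
  rw [pow_add, pow_mul, relB, one_pow, one_mul]

lemma swapAB : B * A = A ^ 3 * B := by
  have h2 : B * A ^ 2 = A * B := relC.symm
  have h4 : B * A ^ 4 = A * (A * B) := by
    rw [show (4:ℕ) = 2+2 from rfl, pow_add, ← mul_assoc, h2, mul_assoc, h2]
  have h6 : B * A ^ 6 = A * (A * (A * B)) := by
    rw [show (6:ℕ) = 2+4 from rfl, pow_add, ← mul_assoc, h2, mul_assoc, h4]
  have hA6 : A ^ 6 = A := by
    rw [show (6:ℕ) = 5+1 from rfl, pow_add, relA, one_mul, pow_one]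
  conv_lhs => rw [← hA6]
  rw [h6, pow_succ, pow_two]
  simp only [mul_assoc]

lemma swap_pow (i : ℕ) : B * A ^ i = A ^ (3 * i) * B := by
  induction i with
  | zero => simp
  | succ n ih =>
    calc B * A ^ (n + 1) = (B * A ^ n) * A := by rw [pow_succ, ← mul_assoc]
    _ = A ^ (3 * n) * (B * A) := by rw [ih, mul_assoc]
    _ = A ^ (3 * n) * (A ^ 3 * B) := by rw [swapAB]
    _ = A ^ (3 * (n + 1)) * B := by rw [← mul_assoc, ← pow_add, Nat.mul_succ]

lemma swap_powj (j i : ℕ) : B ^ j * A ^ i = A ^ (3 ^ j * i) * B ^ j := by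
  induction j generalizing i with
  | zero => simp
  | succ n ih =>
    calc B ^ (n + 1) * A ^ i = B ^ n * (B * A ^ i) := by rw [pow_succ, mul_assoc]
    _ = B ^ n * (A ^ (3 * i) * B) := by rw [swap_pow]
    _ = (B ^ n * A ^ (3 * i)) * B := by rw [← mul_assoc]
    _ = (A ^ (3 ^ n * (3 * i)) * B ^ n) * B := by rw [ih (3 * i)]
    _ = A ^ (3 ^ (n + 1) * i) * B ^ (n + 1) := by
      rw [mul_assoc, ← pow_succ, show 3 ^ (n+1) * i = 3 ^ n * (3 * i) from by ring]

def TT : Set (PresentedGroup szRels) :=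
  {g | ∃ i j : ℕ, i < 5 ∧ j < 4 ∧ g = A ^ i * B ^ j}

lemma T_mul {g₁ g₂ : PresentedGroup szRels} (h₁ : g₁ ∈ TT) (h₂ : g₂ ∈ TT) :
    g₁ * g₂ ∈ TT := by
  obtain ⟨i, j, hi, hj, rfl⟩ := h₁
  obtain ⟨i', j', hi', hj', rfl⟩ := h₂
  refine ⟨(i + 3 ^ j * i') % 5, (j + j') % 4, Nat.mod_lt _ (by norm_num),
    Nat.mod_lt _ (by norm_num), ?_⟩
  rw [← powA_mod, ← powB_mod]
  calc A ^ i * B ^ j * (A ^ i' * B ^ j')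
      = A ^ i * (B ^ j * A ^ i') * B ^ j' := by simp only [mul_assoc]
  _ = A ^ i * (A ^ (3 ^ j * i') * B ^ j) * B ^ j' := by rw [swap_powj]
  _ = A ^ (i + 3 ^ j * i') * B ^ (j + j') := by
      rw [pow_add, pow_add]; simp only [mul_assoc]

lemma T_inv {g : PresentedGroup szRels} (h : g ∈ TT) : g⁻¹ ∈ TT := by
  obtain ⟨i, j, hi, hj, rfl⟩ := h
  have key : (A ^ i * B ^ j) * (B ^ (4 - j) * A ^ (5 - i)) = 1 := by
    calc (A ^ i * B ^ j) * (B ^ (4 - j) * A ^ (5 - i))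
        = A ^ i * (B ^ j * B ^ (4 - j)) * A ^ (5 - i) := by simp only [mul_assoc]
    _ = A ^ i * (B ^ (j + (4 - j))) * A ^ (5 - i) := by rw [← pow_add]
    _ = A ^ i * (B ^ 4) * A ^ (5 - i) := by rw [Nat.add_sub_cancel' (le_of_lt hj)]
    _ = A ^ i * A ^ (5 - i) := by rw [relB, mul_one]
    _ = A ^ (i + (5 - i)) := by rw [← pow_add]
    _ = A ^ 5 := by rw [Nat.add_sub_cancel' (le_of_lt hi)]
    _ = 1 := relA
  have hinv : (A ^ i * B ^ j)⁻¹ = B ^ (4 - j) * A ^ (5 - i) :=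
    inv_eq_of_mul_eq_one_right key
  rw [hinv]
  refine ⟨(3 ^ (4 - j) * (5 - i)) % 5, (4 - j) % 4, Nat.mod_lt _ (by norm_num),
    Nat.mod_lt _ (by norm_num), ?_⟩
  rw [← powA_mod, ← powB_mod, ← swap_powj]

lemma T_all (g : PresentedGroup szRels) : g ∈ TT := by
  induction g using PresentedGroup.induction_on with
  | H z =>
    induction z using FreeGroup.induction_on with
    | C1 => exact ⟨0, 0, by norm_num, by norm_num, by simp⟩
    | of x =>
      fin_cases x
      · exact ⟨1, 0, by norm_num, by norm_num, by simp; rfl⟩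
      · exact ⟨0, 1, by norm_num, by norm_num, by simp; rfl⟩
    | inv_of x ih =>
      rw [map_inv]
      exact T_inv ih
    | mul x y ihx ihy =>
      rw [map_mul]
      exact T_mul ihx ihy

lemma piK_A : piK A = fgen 0 := PresentedGroup.toGroup.of hrels
lemma piK_B : piK B = fgen 1 := PresentedGroup.toGroup.of hrels

lemma piK_bijective : Function.Bijective piK := by
  constructor
  · rw [injective_iff_map_eq_one]
    intro g hg
    obtain ⟨i, j, hi, hj, rfl⟩ := T_all g
    rw [map_mul, map_pow, map_pow, piK_A, piK_B] at hg
    have key : ∀ (i : Fin 5) (j : Fin 4),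
        fgen 0 ^ (i : ℕ) * fgen 1 ^ (j : ℕ) = 1 → i = 0 ∧ j = 0 := by decide
    have := key ⟨i, hi⟩ ⟨j, hj⟩ hg
    obtain ⟨h1, h2⟩ := this
    have : i = 0 := by simpa using congrArg Fin.val h1
    have : j = 0 := by simpa using congrArg Fin.val h2
    subst_vars
    simp
  · intro k
    have key : ∀ k : KK, ∃ (i : Fin 5) (j : Fin 4),
        fgen 0 ^ (i : ℕ) * fgen 1 ^ (j : ℕ) = k := by decide
    obtain ⟨i, j, hk⟩ := key k
    exact ⟨A ^ (i : ℕ) * B ^ (j : ℕ), by rw [map_mul, map_pow, map_pow, piK_A, piK_B, hk]⟩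

noncomputable def isoPK : PresentedGroup szRels ≃* KK := MulEquiv.ofBijective piK piK_bijective

end PGSection


open Polynomial Matrix Finset

section CharpolyReduction

variable {R V B : Type*} [CommRing R] [Fintype V] [DecidableEq V] [Fintype B] [DecidableEq B]

lemma my_charpoly_conj (P Q N : Matrix V V R) (h : P * Q = 1) :
    (P * N * Q).charpoly = N.charpoly := by
  have hPQ : (P.map C) * (Q.map C) = (1 : Matrix V V R[X]) := by
    rw [← Matrix.map_mul, h]
    exact Matrix.map_one _ (map_zero _) (map_one _)
  have hcomm : (Matrix.scalar V (X : R[X])) * (Q.map C) =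
      (Q.map C) * (Matrix.scalar V (X : R[X])) :=
    scalar_commute (X : R[X]) (fun r => Commute.all _ _) (Q.map C)
  have hc : charmatrix (P * N * Q) = (P.map C) * (charmatrix N) * (Q.map C) := by
    unfold charmatrix
    rw [Matrix.mul_sub, Matrix.sub_mul]
    congr 1
    · rw [Matrix.mul_assoc, hcomm, ← Matrix.mul_assoc, hPQ, Matrix.one_mul]
    · show (P * N * Q).map C = (P.map C) * (N.map C) * (Q.map C)
      rw [Matrix.map_mul, Matrix.map_mul]
  unfold Matrix.charpoly
  rw [hc, Matrix.det_mul, Matrix.det_mul, mul_comm, ← mul_assoc, mul_comm (Q.map C).det,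
    ← Matrix.det_mul, hPQ, Matrix.det_one, one_mul]

variable (c : V → B) (d : B → R) (g : B → V → R)

/-- The quotient matrix. -/
def quotMat : Matrix B B R :=
  fun b' b => (if b' = b then d b else 0) + ∑ u ∈ univ.filter (fun u => c u = b'), g b u

theorem charpoly_reduction (s : B → V) (hsc : ∀ b, c (s b) = b)
    (M : Matrix V V R)
    (hM : ∀ u v, M u v = (if u = v then d (c v) else 0) + g (c v) u) :
    M.charpoly = (∏ v ∈ univ.filter (fun v => v ≠ s (c v)), (X - C (d (c v)))) *
      (quotMat c d g).charpoly := by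
  classical
  set E : Matrix V V R := fun u v => if v ≠ s (c v) ∧ u = s (c v) then -1 else 0 with hE
  set P : Matrix V V R := 1 + E with hP
  set P' : Matrix V V R := 1 - E with hP'
  have hrep_of : ∀ w : V, ∀ b : B, w = s b → w = s (c w) := by
    intro w b hw; rw [hw, hsc]
  have hE2 : E * E = 0 := by
    ext u v
    rw [Matrix.mul_apply]
    simp only [Matrix.zero_apply]
    apply Finset.sum_eq_zero
    intro w _
    by_cases h1 : v ≠ s (c v) ∧ w = s (c v)
    · have : ¬ (w ≠ s (c w) ∧ u = s (c w)) := fun h2 => h2.1 (hrep_of w (c v) h1.2)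
      rw [hE]; dsimp only; rw [if_neg this, zero_mul]
    · rw [hE]; dsimp only; rw [if_neg h1, mul_zero]
  have hPP' : P * P' = 1 := by
    rw [hP, hP']
    have expand : ((1 + E) * (1 - E) : Matrix V V R) = 1 + E - E - E * E := by noncomm_ring
    rw [expand, hE2]
    abel
  set A : Matrix V V R := fun u v =>
    if v ≠ s (c v) then (if u = v then d (c v) else 0)
    else if u ≠ s (c u) then g (c v) u
    else quotMat c d g (c u) (c v) with hA
  have key : M * P = P * A := by
    ext u v
    have lhs_eq : (M * P) u v = M u v - (if v ≠ s (c v) then M u (s (c v)) else 0) := by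
      rw [Matrix.mul_apply]
      have step : ∀ w, M u w * P w v
          = (if w = v then M u w else 0) + (if v ≠ s (c v) ∧ w = s (c v) then -(M u w) else 0) := by
        intro w
        rw [hP, Matrix.add_apply]
        simp only [Matrix.one_apply, hE]
        rw [mul_add]
        congr 1
        · split_ifs with hh
          · rw [mul_one]
          · rw [mul_zero]
        · split_ifs with hh
          · rw [mul_neg_one]
          · rw [mul_zero]
      rw [Finset.sum_congr rfl (fun w _ => step w), Finset.sum_add_distrib]
      have h1 : (∑ w : V, if w = v then M u w else 0) = M u v := by
        rw [Finset.sum_ite_eq' univ v (fun w => M u w), if_pos (mem_univ v)]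
      have h2 : (∑ w : V, if v ≠ s (c v) ∧ w = s (c v) then -(M u w) else 0)
          = - (if v ≠ s (c v) then M u (s (c v)) else 0) := by
        by_cases hv : v ≠ s (c v)
        · have : ∀ w, (if v ≠ s (c v) ∧ w = s (c v) then -(M u w) else 0)
              = if w = s (c v) then -(M u w) else 0 := by
            intro w
            split_ifs with hh1 hh2 hh2
            · rfl
            · exact absurd hh1.2 hh2
            · exact absurd ⟨hv, hh2⟩ hh1
            · rfl
          rw [Finset.sum_congr rfl (fun w _ => this w),
            Finset.sum_ite_eq' univ (s (c v)) (fun w => -(M u w)), if_pos (mem_univ _),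
            if_pos hv]
        · rw [if_neg hv, neg_zero]
          apply Finset.sum_eq_zero
          intro w _
          rw [if_neg (fun hcon => hv hcon.1)]
      rw [h1, h2]
      ring
    have rhs_eq : (P * A) u v = A u v -
        (if u = s (c u) then ∑ w ∈ (univ.filter (fun w => c w = c u)).erase u, A w v else 0) := by
      rw [Matrix.mul_apply]
      have step : ∀ w, P u w * A w v
          = (if u = w then A w v else 0) + (if w ≠ s (c w) ∧ u = s (c w) then -(A w v) else 0) := by
        intro w
        rw [hP, Matrix.add_apply]
        simp only [Matrix.one_apply, hE]
        rw [add_mul]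
        congr 1
        · split_ifs with hh
          · rw [one_mul]
          · rw [zero_mul]
        · split_ifs with hh
          · rw [neg_one_mul]
          · rw [zero_mul]
      rw [Finset.sum_congr rfl (fun w _ => step w), Finset.sum_add_distrib]
      have h1 : (∑ w : V, if u = w then A w v else 0) = A u v := by
        rw [Finset.sum_ite_eq univ u (fun w => A w v), if_pos (mem_univ u)]
      have h2 : (∑ w : V, if w ≠ s (c w) ∧ u = s (c w) then -(A w v) else 0)
          = - (if u = s (c u) then ∑ w ∈ (univ.filter (fun w => c w = c u)).erase u, A w v
              else 0) := by
        by_cases hu : u = s (c u)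
        · have hset : univ.filter (fun w => w ≠ s (c w) ∧ u = s (c w))
              = (univ.filter (fun w => c w = c u)).erase u := by
            ext w
            simp only [Finset.mem_filter, Finset.mem_erase, Finset.mem_univ, true_and]
            constructor
            · rintro ⟨hw1, hw2⟩
              exact ⟨fun hwu => hw1 (hwu.trans hw2), by rw [hw2, hsc]⟩
            · rintro ⟨hw1, hw2⟩
              have hscw : s (c w) = u := by rw [hw2, ← hu]
              constructor
              · rw [hscw]; exact hw1
              · exact hscw.symm
          rw [← Finset.sum_filter, hset, if_pos hu, Finset.sum_neg_distrib]
        · rw [if_neg hu, neg_zero]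
          apply Finset.sum_eq_zero
          intro w _
          rw [if_neg (fun hcon => hu (hrep_of u (c w) hcon.2))]
      rw [h1, h2]
      ring
    rw [lhs_eq, rhs_eq]
    by_cases hv : v = s (c v) <;> by_cases hu : u = s (c u)
    · -- both representatives
      rw [if_neg (not_not_intro hv), if_pos hu, sub_zero]
      have hAuv : A u v = quotMat c d g (c u) (c v) := by
        rw [hA]; dsimp only
        rw [if_neg (not_not_intro hv), if_neg (not_not_intro hu)]
      have hAw : ∀ w ∈ (univ.filter (fun w => c w = c u)).erase u, A w v = g (c v) w := by
        intro w hw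
        simp only [Finset.mem_erase, Finset.mem_filter, Finset.mem_univ, true_and] at hw
        rw [hA]; dsimp only
        rw [if_neg (not_not_intro hv), if_pos]
        intro hcon
        apply hw.1
        rw [hcon, hw.2, ← hu]
      rw [hAuv, Finset.sum_congr rfl hAw]
      simp only [quotMat]
      have herase : ∑ w ∈ (univ.filter (fun w => c w = c u)).erase u, g (c v) w
          = (∑ w ∈ univ.filter (fun w => c w = c u), g (c v) w) - g (c v) u := by
        have hmem : u ∈ univ.filter (fun w => c w = c u) := by
          simp only [Finset.mem_filter, Finset.mem_univ, true_and]
        rw [eq_sub_iff_add_eq, Finset.sum_erase_add _ _ hmem]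
      rw [herase, hM]
      have hdelta : (if u = v then d (c v) else 0) = (if c u = c v then d (c v) else 0) := by
        by_cases he : u = v
        · rw [if_pos he, if_pos (by rw [he])]
        · rw [if_neg he, if_neg (fun hcon => he (hu.trans (by rw [hcon]; exact hv.symm)))]
      rw [hdelta]
      ring
    · -- v rep, u not rep
      rw [if_neg (not_not_intro hv), if_neg hu, sub_zero, sub_zero]
      rw [hM, hA]; dsimp only
      rw [if_neg (not_not_intro hv), if_pos hu,
        if_neg (fun (hcon : u = v) => hu (by rw [hcon]; exact hv))]
      ring
    · -- v not rep, u rep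
      rw [if_pos hv, if_pos hu]
      have hAuv : A u v = 0 := by
        rw [hA]; dsimp only
        rw [if_pos hv, if_neg (fun (hcon : u = v) => hv (by rw [← hcon]; exact hu))]
      have hAw : ∀ w, A w v = if w = v then d (c v) else 0 := by
        intro w
        rw [hA]; dsimp only
        rw [if_pos hv]
      have hsum : ∑ w ∈ (univ.filter (fun w => c w = c u)).erase u, A w v
          = if v ∈ (univ.filter (fun w => c w = c u)).erase u then d (c v) else 0 := by
        rw [Finset.sum_congr rfl (fun w _ => hAw w), Finset.sum_ite_eq' _ v (fun _ => d (c v))]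
      have hiff : (v ∈ (univ.filter (fun w => c w = c u)).erase u) ↔ u = s (c v) := by
        simp only [Finset.mem_erase, Finset.mem_filter, Finset.mem_univ, true_and]
        constructor
        · rintro ⟨hv1, hv2⟩
          rw [← hv2] at hu
          exact hu
        · intro hus
          have hcvu : c v = c u := by rw [hus, hsc]
          refine ⟨fun hcon => hv ?_, hcvu⟩
          rw [hcon]; exact hu
      rw [hAuv, hsum, hM u v, hM u (s (c v)), hsc]
      have h1 : (if u = v then d (c v) else 0) = 0 :=
        if_neg (fun (hcon : u = v) => hv (by rw [← hcon]; exact hu))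
      have h2 : (if v ∈ (univ.filter (fun w => c w = c u)).erase u then d (c v) else 0)
          = (if u = s (c v) then d (c v) else 0) := by
        by_cases hm : v ∈ (univ.filter (fun w => c w = c u)).erase u
        · rw [if_pos hm, if_pos (hiff.mp hm)]
        · rw [if_neg hm, if_neg (fun hcon => hm (hiff.mpr hcon))]
      rw [h1, h2]
      ring
    · -- both non-representatives
      rw [if_pos hv, if_neg hu, sub_zero]
      have hAuv : A u v = if u = v then d (c v) else 0 := by
        rw [hA]; dsimp only
        rw [if_pos hv]
      rw [hAuv, hM u v, hM u (s (c v)), hsc]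
      have h2 : (if u = s (c v) then d (c v) else 0) = 0 :=
        if_neg (fun hcon => hu (hrep_of u (c v) hcon))
      rw [h2]
      ring
  -- from the key identity to charpoly equality
  have hchar : M.charpoly = A.charpoly := by
    have hM' : M = P * A * P' := by
      rw [← key, Matrix.mul_assoc, hPP', Matrix.mul_one]
    rw [hM']
    exact my_charpoly_conj P P' A hPP'
  -- block decomposition
  have hrepS : ∀ b, s b = s (c (s b)) := fun b => by rw [hsc]
  set eB : B ≃ {v : V // v = s (c v)} :=
    { toFun := fun b => ⟨s b, hrepS b⟩
      invFun := fun v => c v.1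
      left_inv := fun b => hsc b
      right_inv := fun v => Subtype.ext v.2.symm } with heB
  set e2 : B ⊕ {v : V // ¬ v = s (c v)} ≃ V :=
    (Equiv.sumCongr eB (Equiv.refl _)).trans (Equiv.sumCompl (fun v => v = s (c v))) with he2
  have hre : A.charpoly = ((reindex e2.symm e2.symm) A).charpoly :=
    (Matrix.charpoly_reindex e2.symm A).symm
  have he2l : ∀ b, e2 (Sum.inl b) = s b := fun b => rfl
  have he2r : ∀ w, e2 (Sum.inr w) = w.1 := fun w => rfl
  have hblocks : (reindex e2.symm e2.symm) A =
      Matrix.fromBlocks (quotMat c d g) 0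
        (Matrix.of fun w b => g b w.1)
        (Matrix.diagonal (fun w : {v : V // ¬ v = s (c v)} => d (c w.1))) := by
    ext x y
    have happ : (reindex e2.symm e2.symm) A x y = A (e2 x) (e2 y) := by
      simp [Matrix.reindex_apply, Matrix.submatrix_apply]
    rw [happ]
    cases x with
    | inl b' =>
      cases y with
      | inl b =>
        rw [he2l, he2l, hA]; dsimp only
        rw [if_neg (not_not_intro (hrepS b)), if_neg (not_not_intro (hrepS b')), hsc, hsc]
        rfl
      | inr w =>
        rw [he2l, he2r, hA]; dsimp only
        rw [if_pos w.2, if_neg (fun hcon => w.2 (by rw [← hcon]; exact hrepS b'))]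
        rfl
    | inr w =>
      cases y with
      | inl b =>
        rw [he2r, he2l, hA]; dsimp only
        rw [if_neg (not_not_intro (hrepS b)), if_pos w.2, hsc]
        rfl
      | inr w' =>
        rw [he2r, he2r, hA]; dsimp only
        rw [if_pos w'.2]
        simp only [Matrix.fromBlocks_apply₂₂]
        by_cases hww : w = w'
        · subst hww
          rw [Matrix.diagonal_apply_eq, if_pos rfl]
        · rw [Matrix.diagonal_apply_ne _ hww,
            if_neg (fun hcon => hww (Subtype.ext hcon))]
  have hD : (Matrix.diagonal (fun w : {v : V // ¬ v = s (c v)} => d (c w.1))).charpoly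
      = ∏ v ∈ univ.filter (fun v => v ≠ s (c v)), (X - C (d (c v))) := by
    have hcm : charmatrix (Matrix.diagonal (fun w : {v : V // ¬ v = s (c v)} => d (c w.1)))
        = Matrix.diagonal (fun w : {v : V // ¬ v = s (c v)} => (X : R[X]) - C (d (c w.1))) := by
      ext i j
      by_cases h : i = j
      · subst h
        rw [charmatrix_apply_eq, Matrix.diagonal_apply_eq, Matrix.diagonal_apply_eq]
      · rw [charmatrix_apply_ne _ _ _ h, Matrix.diagonal_apply_ne _ h,
          Matrix.diagonal_apply_ne _ h, map_zero, neg_zero]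
    rw [Matrix.charpoly, hcm, Matrix.det_diagonal]
    exact (Finset.prod_subtype (univ.filter (fun v => v ≠ s (c v)))
      (by intro x; simp) (fun v => (X : R[X]) - C (d (c v)))).symm
  rw [hchar, hre, hblocks, Matrix.charpoly_fromBlocks_zero₁₂, hD, mul_comm]

end CharpolyReduction

section Multipartite

open Polynomial Matrix Finset

variable {R V B : Type*} [CommRing R] [Fintype V] [DecidableEq V] [Fintype B] [DecidableEq B]

theorem multipartite_charpoly (c : V → B) (s : B → V) (hsc : ∀ b, c (s b) = b) (b0 : B)
    (M : Matrix V V R)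
    (hM : ∀ u v, M u v = (if u = v then
        ((Fintype.card V : R) - ((univ.filter (fun w => c w = c v)).card : R)) else 0)
      + (if c u = c v then 0 else -1)) :
    M.charpoly = (∏ v ∈ univ.filter (fun v => v ≠ s (c v)),
        (X - C ((Fintype.card V : R) - ((univ.filter (fun w => c w = c v)).card : R)))) *
      ((∏ b ∈ univ.filter (fun b => b ≠ b0), (X - C (Fintype.card V : R))) * X) := by
  classical
  set N : R := (Fintype.card V : R) with hN
  set m : B → R := fun b => (((univ.filter (fun w => c w = b)).card : ℕ) : R) with hm
  set d1 : B → R := fun b => N - m b with hd1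
  set g1 : B → V → R := fun b u => if c u = b then 0 else -1 with hg1
  have hM' : ∀ u v, M u v = (if u = v then d1 (c v) else 0) + g1 (c v) u := by
    intro u v
    rw [hM u v]
  rw [charpoly_reduction c d1 g1 s hsc M hM']
  congr 1
  -- now compute the charpoly of the quotient matrix
  set d2 : Unit → R := fun _ => N with hd2
  set g2 : Unit → B → R := fun _ b' => -(m b') with hg2
  set c2 : B → Unit := fun _ => () with hc2
  set s2 : Unit → B := fun _ => b0 with hs2
  have hsc2 : ∀ u : Unit, c2 (s2 u) = u := fun u => rfl
  have hQ1 : ∀ b' b, quotMat c d1 g1 b' b = (if b' = b then d2 (c2 b) else 0) + g2 (c2 b) b' := by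
    intro b' b
    simp only [quotMat]
    by_cases hbb : b' = b
    · subst hbb
      rw [if_pos rfl, if_pos rfl]
      have hz : ∑ u ∈ univ.filter (fun u => c u = b'), g1 b' u = 0 := by
        apply Finset.sum_eq_zero
        intro u hu
        simp only [Finset.mem_filter, Finset.mem_univ, true_and] at hu
        rw [hg1]; dsimp only; rw [if_pos hu]
      rw [hz, hd1, hd2, hg2]
      dsimp only
      ring
    · rw [if_neg hbb, if_neg hbb]
      have hz : ∑ u ∈ univ.filter (fun u => c u = b'), g1 b u = -(m b') := by
        have : ∀ u ∈ univ.filter (fun u => c u = b'), g1 b u = -1 := by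
          intro u hu
          simp only [Finset.mem_filter, Finset.mem_univ, true_and] at hu
          rw [hg1]; dsimp only; rw [if_neg (by rw [hu]; exact hbb)]
        rw [Finset.sum_congr rfl this, Finset.sum_const, hm]
        simp [nsmul_eq_mul]
      rw [hz, hg2]
  rw [charpoly_reduction c2 d2 g2 s2 hsc2 (quotMat c d1 g1) hQ1]
  congr 1
  -- the 1×1 quotient matrix is zero, so its charpoly is X
  have hsum : ∑ b' : B, m b' = N := by
    rw [hm, hN]
    rw [← Nat.cast_sum]
    congr 1
    rw [← Finset.card_univ]
    exact (Finset.card_eq_sum_card_fiberwise (fun x _ => Finset.mem_univ (c x))).symm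
  have hQ2 : quotMat c2 d2 g2 () () = 0 := by
    simp only [quotMat, if_true, eq_self_iff_true]
    simp only [Finset.filter_true]
    rw [hd2, hg2]
    dsimp only
    rw [Finset.sum_neg_distrib, hsum]
    ring
  rw [Matrix.charpoly, Matrix.det_unique, charmatrix_apply_eq, hQ2, map_zero, sub_zero]

end Multipartite

/-- Laplacian spectrum of the non-commuting graph of a finite group
`G` with `G/Z(G) ≅ Sz(2)`. -/
theorem laplacian_spectrum_nc_graph_central_factor_Sz2
    (G : Type*) [Group G] [Fintype G]
    (h : Nonempty ((G ⧸ Subgroup.center G) ≃* PresentedGroup szRels)) :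
    ncCharpoly G =
      X *
      (X - C (15 * (Nat.card (Subgroup.center G) : ℝ))) ^
        (4 * Nat.card (Subgroup.center G) - 1) *
      (X - C (16 * (Nat.card (Subgroup.center G) : ℝ))) ^
        (15 * Nat.card (Subgroup.center G) - 5) *
      (X - C (19 * (Nat.card (Subgroup.center G) : ℝ))) ^ 5 := by
  classical
  obtain ⟨φ0⟩ := h
  set n := Nat.card (Subgroup.center G) with hn
  have npos : 0 < n := Nat.card_pos
  let φ : (G ⧸ Subgroup.center G) ≃* KK := φ0.trans isoPK
  let q : G →* KK := φ.toMonoidHom.comp (QuotientGroup.mk' (Subgroup.center G))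
  have hker : ∀ x : G, q x = 1 ↔ x ∈ Subgroup.center G := by
    intro x
    show φ ((QuotientGroup.mk' _) x) = 1 ↔ _
    rw [EmbeddingLike.map_eq_one_iff]
    exact QuotientGroup.eq_one_iff x
  have hqsurj : Function.Surjective q := by
    intro k
    obtain ⟨y, hy⟩ := φ.surjective k
    obtain ⟨x, hx⟩ := QuotientGroup.mk'_surjective (Subgroup.center G) y
    exact ⟨x, by show φ ((QuotientGroup.mk' _) x) = k; rw [hx, hy]⟩
  have hcomm : ∀ x y : G, x ∉ Subgroup.center G →
      (Commute x y ↔ q x * q y = q y * q x) := by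
    intro x y hx
    constructor
    · intro hxy
      rw [← _root_.map_mul, ← _root_.map_mul, hxy.eq]
    · intro hq
      have hx1 : q x ≠ 1 := fun h1 => hx ((hker x).mp h1)
      rcases kk_comm_pow (q x) (q y) hx1 hq with ⟨i, hi⟩ | ⟨i, hi⟩
      · have hz : y * (x ^ (i : ℕ))⁻¹ ∈ Subgroup.center G := by
          apply (hker _).mp
          rw [_root_.map_mul, map_inv, map_pow, ← hi, mul_inv_cancel]
        have hzc := Subgroup.mem_center_iff.mp hz
        have hy : (y * (x ^ (i : ℕ))⁻¹) * x ^ (i : ℕ) = y := inv_mul_cancel_right _ _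
        have hcom : Commute x ((y * (x ^ (i : ℕ))⁻¹) * x ^ (i : ℕ)) :=
          Commute.mul_right (hzc x) ((Commute.refl x).pow_right _)
        rwa [hy] at hcom
      · have hz : x * (y ^ (i : ℕ))⁻¹ ∈ Subgroup.center G := by
          apply (hker _).mp
          rw [_root_.map_mul, map_inv, map_pow, ← hi, mul_inv_cancel]
        have hzc := Subgroup.mem_center_iff.mp hz
        have hy : (x * (y ^ (i : ℕ))⁻¹) * y ^ (i : ℕ) = x := inv_mul_cancel_right _ _
        have hcom : Commute y ((x * (y ^ (i : ℕ))⁻¹) * y ^ (i : ℕ)) :=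
          Commute.mul_right (hzc y) ((Commute.refl y).pow_right _)
        rw [hy] at hcom
        exact hcom.symm
  -- the vertex set and its product structure
  have hfibG : ∀ u : KK, Fintype.card {x : G // q x = u} = n := by
    intro u
    obtain ⟨x0, hx0⟩ := hqsurj u
    have eqv : (Subgroup.center G) ≃ {x : G // q x = u} :=
      { toFun := fun z => ⟨z.1 * x0, by rw [_root_.map_mul, (hker z.1).mpr z.2, one_mul, hx0]⟩
        invFun := fun x => ⟨x.1 * x0⁻¹, (hker _).mp
          (by rw [_root_.map_mul, map_inv, x.2, hx0, mul_inv_cancel])⟩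
        left_inv := fun z => Subtype.ext (mul_inv_cancel_right _ _)
        right_inv := fun x => Subtype.ext (inv_mul_cancel_right _ _) }
    rw [← Fintype.card_congr eqv, hn, Nat.card_eq_fintype_card]
  let Vt := {x : G // x ∉ Subgroup.center G}
  let P19 := {u : KK // u ≠ 1}
  let Qmap : Vt → P19 := fun x => ⟨q x.1, fun h1 => x.2 ((hker x.1).mp h1)⟩
  have hfibV : ∀ u : P19, Fintype.card {x : Vt // Qmap x = u} = n := by
    intro u
    have eqv : {x : Vt // Qmap x = u} ≃ {x : G // q x = u.1} :=
      { toFun := fun y => ⟨y.1.1, congrArg Subtype.val y.2⟩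
        invFun := fun x => ⟨⟨x.1, fun hc => u.2 (by rw [← x.2]; exact (hker x.1).mpr hc)⟩,
          Subtype.ext x.2⟩
        left_inv := fun y => by ext; rfl
        right_inv := fun x => by ext; rfl }
    rw [Fintype.card_congr eqv, hfibG]
  let fEquiv : ∀ u : P19, {x : Vt // Qmap x = u} ≃ Fin n :=
    fun u => Fintype.equivFinOfCardEq (hfibV u)
  let e : Vt ≃ P19 × Fin n :=
    (Equiv.sigmaFiberEquiv Qmap).symm.trans
      ((Equiv.sigmaCongrRight fEquiv).trans (Equiv.sigmaEquivProd P19 (Fin n)))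
  have he1 : ∀ x : Vt, (e x).1 = Qmap x := fun x => rfl
  let cI : P19 × Fin n → Fin 6 := fun i => pt i.1.1
  let sI : Fin 6 → P19 × Fin n := fun b => (⟨repK b, (kk_rep b).1⟩, ⟨0, npos⟩)
  have hscI : ∀ b, cI (sI b) = b := fun b => (kk_rep b).2
  have hadj : ∀ x y : Vt, (nonCommGraph G).Adj x y ↔ cI (e x) ≠ cI (e y) := by
    intro x y
    show ¬ Commute x.1 y.1 ↔ ¬ (pt (e x).1.1 = pt (e y).1.1)
    rw [he1, he1]
    show ¬ Commute x.1 y.1 ↔ ¬ (pt (q x.1) = pt (q y.1))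
    rw [hcomm x.1 y.1 x.2, kk_pt_iff (q x.1) (q y.1)
      (fun h1 => x.2 ((hker x.1).mp h1)) (fun h1 => y.2 ((hker y.1).mp h1))]
  -- the Laplacian matrix and its charpoly
  have hVtfin : Fintype Vt := inferInstance
  have hdecR : DecidableRel (nonCommGraph G).Adj := fun _ _ => Classical.dec _
  set L : Matrix Vt Vt ℝ := (nonCommGraph G).lapMatrix ℝ with hL
  set N : ℕ := Fintype.card (P19 × Fin n) with hN
  have hcardI : N = 19 * n := by rw [hN, Fintype.card_prod, kk_card_ne, Fintype.card_fin]
  have hmI : ∀ b : Fin 6, (univ.filter (fun i : P19 × Fin n => cI i = b)).card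
      = (if b = 0 then 4 else 3) * n := by
    intro b
    rw [← Fintype.card_subtype]
    have eqv : {i : P19 × Fin n // cI i = b} ≃ {u : KK // u ≠ 1 ∧ pt u = b} × Fin n :=
      { toFun := fun i => (⟨i.1.1.1, i.1.1.2, i.2⟩, i.1.2)
        invFun := fun p => ⟨(⟨p.1.1, p.1.2.1⟩, p.2), p.1.2.2⟩
        left_inv := fun i => rfl
        right_inv := fun p => rfl }
    rw [Fintype.card_congr eqv, Fintype.card_prod, kk_count, Fintype.card_fin]
  have hM : ∀ i j : P19 × Fin n, (reindex e e L) i j =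
      (if i = j then ((N:ℝ) - (((univ.filter (fun w : P19 × Fin n => cI w = cI j)).card : ℕ) : ℝ))
        else 0)
      + (if cI i = cI j then 0 else -1) := by
    intro i j
    have happ : (reindex e e L) i j = L (e.symm i) (e.symm j) := rfl
    rw [happ, hL]
    simp only [SimpleGraph.lapMatrix, SimpleGraph.degMatrix, Matrix.sub_apply]
    by_cases hij : i = j
    · subst hij
      rw [Matrix.diagonal_apply_eq, SimpleGraph.adjMatrix_apply,
        if_neg ((nonCommGraph G).loopless.irrefl _), if_pos rfl, if_pos rfl]
      have hdeg : (nonCommGraph G).degree (e.symm i)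
          = N - (univ.filter (fun w : P19 × Fin n => cI w = cI i)).card := by
        simp only [SimpleGraph.degree]
        rw [SimpleGraph.neighborFinset_eq_filter]
        have hstep1 : univ.filter (fun w : Vt => (nonCommGraph G).Adj (e.symm i) w)
            = univ.filter (fun w : Vt => ¬ (cI (e w) = cI i)) := by
          apply Finset.filter_congr
          intro w _
          rw [hadj, Equiv.apply_symm_apply]
          exact ne_comm
        have hstep2 : (univ.filter (fun w : Vt => ¬ (cI (e w) = cI i))).card
            = (univ.filter (fun w : P19 × Fin n => ¬ (cI w = cI i))).card := by
          rw [← Fintype.card_subtype, ← Fintype.card_subtype]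
          exact Fintype.card_congr (e.subtypeEquiv (fun w => Iff.rfl))
        have hstep3 := Finset.card_filter_add_card_filter_not
          (s := (univ : Finset (P19 × Fin n))) (p := fun w => cI w = cI i)
        rw [hstep1, hstep2]
        rw [Finset.card_univ] at hstep3
        omega
      have hle : (univ.filter (fun w : P19 × Fin n => cI w = cI i)).card ≤ N := by
        rw [hN, ← Finset.card_univ]
        exact Finset.card_filter_le _ _
      rw [hdeg, Nat.cast_sub hle]
      ring
    · have hvw : e.symm i ≠ e.symm j := fun hcon => hij (e.symm.injective hcon)
      rw [Matrix.diagonal_apply_ne _ hvw, SimpleGraph.adjMatrix_apply, if_neg hij]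
      by_cases hcc : cI i = cI j
      · rw [if_pos hcc, if_neg (fun hadj' => ((hadj _ _).mp hadj')
          (by rwa [Equiv.apply_symm_apply, Equiv.apply_symm_apply]))]
        norm_num
      · rw [if_neg hcc, if_pos ((hadj _ _).mpr
          (by rwa [Equiv.apply_symm_apply, Equiv.apply_symm_apply]))]
        norm_num
  have hmain := multipartite_charpoly (R := ℝ) cI sI hscI 0 (reindex e e L) hM
  -- compute the first product
  have hNr : ((Fintype.card (P19 × Fin n) : ℕ) : ℝ) = 19 * (n:ℝ) := by
    rw [← hN, hcardI]; push_cast; ring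
  have hprod1 : (∏ v ∈ univ.filter (fun v : P19 × Fin n => v ≠ sI (cI v)),
        (X - C (((Fintype.card (P19 × Fin n) : ℕ) : ℝ)
          - (((univ.filter (fun w : P19 × Fin n => cI w = cI v)).card : ℕ) : ℝ))))
      = (X - C (15 * (n:ℝ))) ^ (4 * n - 1) * (X - C (16 * (n:ℝ))) ^ (15 * n - 5) := by
    rw [← Finset.prod_fiberwise_of_maps_to
      (g := cI) (t := (univ : Finset (Fin 6))) (fun v _ => Finset.mem_univ (cI v))]
    have hinner : ∀ b : Fin 6,
        (∏ v ∈ (univ.filter (fun v : P19 × Fin n => v ≠ sI (cI v))).filter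
            (fun v => cI v = b),
          (X - C (((Fintype.card (P19 × Fin n) : ℕ) : ℝ)
            - (((univ.filter (fun w : P19 × Fin n => cI w = cI v)).card : ℕ) : ℝ))))
        = (X - C (19 * (n:ℝ) - (((if b = 0 then 4 else 3) * n : ℕ) : ℝ)))
            ^ ((if b = 0 then 4 else 3) * n - 1) := by
      intro b
      have hsetb : (univ.filter (fun v : P19 × Fin n => v ≠ sI (cI v))).filter
            (fun v => cI v = b)
          = (univ.filter (fun v : P19 × Fin n => cI v = b)).erase (sI b) := by
        ext v
        simp only [Finset.mem_filter, Finset.mem_erase, Finset.mem_univ, true_and]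
        constructor
        · rintro ⟨hv1, hv2⟩
          exact ⟨by rw [← hv2]; exact hv1, hv2⟩
        · rintro ⟨hv1, hv2⟩
          exact ⟨by rw [hv2]; exact hv1, hv2⟩
      have hcongr : ∀ v ∈ (univ.filter (fun v : P19 × Fin n => cI v = b)).erase (sI b),
          (X - C (((Fintype.card (P19 × Fin n) : ℕ) : ℝ)
            - (((univ.filter (fun w : P19 × Fin n => cI w = cI v)).card : ℕ) : ℝ)))
          = (X - C (19 * (n:ℝ) - (((if b = 0 then 4 else 3) * n : ℕ) : ℝ))) := by
        intro v hv
        simp only [Finset.mem_erase, Finset.mem_filter, Finset.mem_univ, true_and] at hv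
        rw [hv.2, hNr, hmI b]
      have hmem : sI b ∈ univ.filter (fun v : P19 × Fin n => cI v = b) := by
        simp only [Finset.mem_filter, Finset.mem_univ, true_and]
        exact hscI b
      rw [hsetb, Finset.prod_congr rfl hcongr, Finset.prod_const,
        Finset.card_erase_of_mem hmem, hmI b]
    rw [Finset.prod_congr rfl (fun b _ => hinner b)]
    rw [Fin.prod_univ_six]
    have c0 : (19 * (n:ℝ) - (((4 * n : ℕ)) : ℝ)) = 15 * (n:ℝ) := by push_cast; ring
    have c1 : (19 * (n:ℝ) - (((3 * n : ℕ)) : ℝ)) = 16 * (n:ℝ) := by push_cast; ring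
    simp only [reduceIte,
      show (if (1:Fin 6) = 0 then (4:ℕ) else 3) = 3 from by decide,
      show (if (2:Fin 6) = 0 then (4:ℕ) else 3) = 3 from by decide,
      show (if (3:Fin 6) = 0 then (4:ℕ) else 3) = 3 from by decide,
      show (if (4:Fin 6) = 0 then (4:ℕ) else 3) = 3 from by decide,
      show (if (5:Fin 6) = 0 then (4:ℕ) else 3) = 3 from by decide]
    simp only [c0, c1]
    rw [mul_assoc, mul_assoc, mul_assoc, mul_assoc,
      ← pow_add, ← pow_add, ← pow_add, ← pow_add]
    have hexp : (3*n-1) + ((3*n-1) + ((3*n-1) + ((3*n-1) + (3*n-1)))) = 15*n - 5 := by omega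
    rw [hexp]
  -- compute the second product
  have hprod2 : (∏ b ∈ univ.filter (fun b : Fin 6 => b ≠ 0),
        (X - C (((Fintype.card (P19 × Fin n) : ℕ) : ℝ))))
      = (X - C (19 * (n:ℝ))) ^ 5 := by
    rw [Finset.prod_const, hNr]
    congr 1
  have hall : ((nonCommGraph G).lapMatrix ℝ : Matrix Vt Vt ℝ).charpoly =
      X * (X - C (15 * (n:ℝ))) ^ (4 * n - 1) * (X - C (16 * (n:ℝ))) ^ (15 * n - 5) *
        (X - C (19 * (n:ℝ))) ^ 5 := by
    rw [← Matrix.charpoly_reindex e, ← hL, hmain, hprod1, hprod2]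
    ring
  show ncCharpoly G = _
  unfold ncCharpoly ncLap
  convert hall using 2
  congr!
end

section
/- Let p be a prime and let G be a finite group such that G/Z(G) is isomorphic to ℤ_p × ℤ_p. Then the Laplacian spectrum of the non-commuting graph 𝒜_G is {0^1, ((p² − p)|Z(G)|)^{(p² − 1)|Z(G)| − p − 1}, ((p² − 1)|Z(G)|)^p}. -/
open Polynomial

/-! ### Auxiliary lemmas -/

open Matrix

set_option maxHeartbeats 1000000 in
set_option synthInstance.maxHeartbeats 200000 in
lemma NCG.det_smul_one_sub_one {F : Type*} [Field F] {m : ℕ} (hm : 0 < m) (c : F) (hc : c ≠ 0) :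
    (c • (1 : Matrix (Fin m) (Fin m) F) - Matrix.of (fun _ _ => (1:F))).det
      = c ^ (m - 1) * (c - m) := by
  have key : c • (1 : Matrix (Fin m) (Fin m) F) - Matrix.of (fun _ _ => (1:F))
      = c • ((1 : Matrix (Fin m) (Fin m) F) +
          Matrix.replicateCol Unit (fun _ : Fin m => -c⁻¹) * Matrix.replicateRow Unit (fun _ : Fin m => (1:F))) := by
    rw [smul_add]
    ext i j
    simp [Matrix.mul_apply, Matrix.sub_apply, hc, mul_comm, sub_eq_add_neg]
  rw [key, Matrix.det_smul, Matrix.det_one_add_replicateCol_mul_replicateRow]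
  have hd : (fun _ : Fin m => (1:F)) ⬝ᵥ (fun _ => -c⁻¹) = -(m * c⁻¹) := by
    simp [dotProduct, Finset.sum_const]
  rw [hd]
  obtain ⟨m', rfl⟩ := Nat.exists_eq_add_of_lt hm
  simp only [Nat.zero_add, Nat.add_sub_cancel, Fintype.card_fin]
  push_cast
  field_simp
  ring

set_option maxHeartbeats 1000000 in
set_option synthInstance.maxHeartbeats 200000 in
lemma NCG.lap_charpoly_aux {m : ℕ} (hm : 0 < m) {P : Type*} [Fintype P] [DecidableEq P]
    [Nonempty P] :
    (Matrix.of (fun x y : Fin m × P =>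
        if x = y then (((Fintype.card P - 1) * m : ℕ) : ℝ)
        else if x.2 = y.2 then 0 else -1)).charpoly
      = X * (X - C (((Fintype.card P - 1) * m : ℕ) : ℝ)) ^ (Fintype.card P * (m - 1))
          * (X - C ((Fintype.card P * m : ℕ) : ℝ)) ^ (Fintype.card P - 1) := by
  classical
  set k := Fintype.card P with hk
  have hk1 : 1 ≤ k := Fintype.card_pos
  set a : ℝ := (((k - 1) * m : ℕ) : ℝ) with ha
  set b : ℝ := ((k * m : ℕ) : ℝ) with hb
  set ψ : ℝ[X] →+* RatFunc ℝ := (algebraMap ℝ[X] (RatFunc ℝ)) with hψ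
  have hinj : Function.Injective ψ := IsFractionRing.injective _ _
  apply hinj
  rw [Matrix.charpoly, RingHom.map_det]
  set c : RatFunc ℝ := ψ (X - C a) with hc
  set u : Fin m × P → RatFunc ℝ := fun _ => 1 with hu
  set D : Matrix (Fin m) (Fin m) (RatFunc ℝ) :=
    c • (1 : Matrix (Fin m) (Fin m) (RatFunc ℝ)) - Matrix.of (fun _ _ => (1:RatFunc ℝ)) with hD
  set N : Matrix (Fin m × P) (Fin m × P) (RatFunc ℝ) :=
    Matrix.blockDiagonal (fun _ : P => D) with hN
  have hcne : c ≠ 0 := by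
    rw [hc]
    intro hcc
    exact (Polynomial.X_sub_C_ne_zero a) (hinj (by simpa using hcc))
  have habm : a + m = b := by
    rw [ha, hb, ← Nat.cast_add]
    congr 1
    have h2 : (k - 1) * m + m = ((k - 1) + 1) * m := by ring
    rw [h2, Nat.sub_add_cancel hk1]
  have hCm : ((m : ℕ) : RatFunc ℝ) = ψ (C (m : ℝ)) := by
    simp [map_natCast]
  have hcm : c - (m : RatFunc ℝ) = ψ (X - C b) := by
    rw [hc, hCm, ← map_sub, ← habm]
    congr 1
    rw [C_add]
    ring
  have hdne : c - (m : RatFunc ℝ) ≠ 0 := by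
    rw [hcm]
    intro hcc
    exact (Polynomial.X_sub_C_ne_zero b) (hinj (by simpa using hcc))
  have hA : ((charmatrix (Matrix.of (fun x y : Fin m × P =>
        if x = y then a else if x.2 = y.2 then 0 else -1))).map ψ)
      = N + Matrix.replicateCol Unit u * Matrix.replicateRow Unit u := by
    ext x y
    obtain ⟨i, q⟩ := x
    obtain ⟨j, q'⟩ := y
    have hcr : (Matrix.replicateCol Unit u * Matrix.replicateRow Unit u) (i, q) (j, q') = 1 := by
      simp [Matrix.mul_apply, hu]
    by_cases hxy : ((i, q) : Fin m × P) = (j, q')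
    · obtain ⟨rfl, rfl⟩ : i = j ∧ q = q' := by
        simpa [Prod.ext_iff] using hxy
      rw [Matrix.map_apply, charmatrix_apply_eq, Matrix.add_apply, hcr]
      have h1 : (Matrix.of (fun x y : Fin m × P =>
          if x = y then a else if x.2 = y.2 then 0 else -1)) (i,q) (i,q)
          = a := by simp
      rw [h1, hN, Matrix.blockDiagonal_apply_eq]
      have h2 : D i i = c - 1 := by
        simp [hD, Matrix.sub_apply, Matrix.one_apply_eq]
      rw [h2, ← hc]
      ring
    · rw [Matrix.map_apply, charmatrix_apply_ne _ _ _ hxy, Matrix.add_apply, hcr]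
      by_cases hq : q = q'
      · subst hq
        have hij : i ≠ j := fun hij => hxy (by rw [hij])
        have h1 : (Matrix.of (fun x y : Fin m × P =>
            if x = y then a else if x.2 = y.2 then 0 else -1)) (i,q) (j,q)
            = 0 := by simp [hxy]
        rw [h1, hN, Matrix.blockDiagonal_apply_eq]
        have h2 : D i j = -1 := by
          simp [hD, Matrix.sub_apply, Matrix.one_apply_ne hij]
        rw [h2]
        simp
      · have h1 : (Matrix.of (fun x y : Fin m × P =>
            if x = y then a else if x.2 = y.2 then 0 else -1)) (i,q) (j,q')
            = -1 := by simp [hxy, hq]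
        rw [h1, hN]
        have h2 : Matrix.blockDiagonal (fun _ : P => D) (i,q) (j,q') = 0 := by
          rw [Matrix.blockDiagonal_apply, if_neg hq]
        rw [h2]
        simp
  have hrowD : ∀ i : Fin m, (∑ j : Fin m, D i j) = c - m := by
    intro i
    have : ∀ j, D i j = (if i = j then c else 0) - 1 := by
      intro j
      by_cases hij : i = j
      · subst hij; simp [hD, Matrix.one_apply_eq]
      · simp [hD, Matrix.one_apply_ne hij, hij]
    simp only [this, Finset.sum_sub_distrib, Finset.sum_ite_eq, Finset.mem_univ, if_pos,
      Finset.sum_const, Finset.card_univ, Fintype.card_fin, nsmul_eq_mul, mul_one]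
  have hB : N * ((c - (m : RatFunc ℝ))⁻¹ •
        (Matrix.replicateCol Unit u * Matrix.replicateRow Unit u)) = Matrix.replicateCol Unit u * Matrix.replicateRow Unit u := by
    ext x y
    obtain ⟨i, q⟩ := x
    obtain ⟨j, q'⟩ := y
    have hcr : ∀ z : Fin m × P, (Matrix.replicateCol Unit u * Matrix.replicateRow Unit u) z (j, q') = 1 := by
      intro z; simp [Matrix.mul_apply, hu]
    rw [Matrix.mul_apply, hcr (i,q)]
    have : ∀ z : Fin m × P, N (i,q) z * ((c - (m : RatFunc ℝ))⁻¹ •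
        (Matrix.replicateCol Unit u * Matrix.replicateRow Unit u)) z (j, q')
        = N (i,q) z * (c - (m : RatFunc ℝ))⁻¹ := by
      intro z
      rw [Matrix.smul_apply, hcr z, smul_eq_mul, mul_one]
    rw [Finset.sum_congr rfl (fun z _ => this z), ← Finset.sum_mul]
    have hsum : (∑ z : Fin m × P, N (i,q) z) = c - m := by
      rw [Fintype.sum_prod_type_right]
      have : ∀ q'' : P, (∑ j' : Fin m, N (i,q) (j', q'')) = if q = q'' then c - m else 0 := by
        intro q''
        by_cases hqq : q = q''
        · subst hqq
          simp only [hN, Matrix.blockDiagonal_apply_eq, if_pos rfl]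
          exact hrowD i
        · simp only [hN, Matrix.blockDiagonal_apply, if_neg hqq]
          simp
      rw [Finset.sum_congr rfl (fun q'' _ => this q'')]
      simp
    rw [hsum, mul_inv_cancel₀ hdne]
  have hsplit : N + Matrix.replicateCol Unit u * Matrix.replicateRow Unit u
      = N * (1 + Matrix.replicateCol Unit ((c - (m : RatFunc ℝ))⁻¹ • u) * Matrix.replicateRow Unit u) := by
    have hcs : Matrix.replicateCol Unit ((c - (m : RatFunc ℝ))⁻¹ • u) * Matrix.replicateRow Unit u
        = (c - (m : RatFunc ℝ))⁻¹ • (Matrix.replicateCol Unit u * Matrix.replicateRow Unit u) := by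
      rw [Matrix.replicateCol_smul, Matrix.smul_mul]
    rw [Matrix.mul_add, Matrix.mul_one, hcs, hB]
  rw [RingHom.mapMatrix_apply, hA, hsplit, Matrix.det_mul, hN, Matrix.det_blockDiagonal,
    Finset.prod_const, Finset.card_univ, ← hk, NCG.det_smul_one_sub_one hm c hcne,
    Matrix.det_one_add_replicateCol_mul_replicateRow]
  have hdot : u ⬝ᵥ ((c - (m : RatFunc ℝ))⁻¹ • u)
      = (m * k : ℕ) * (c - (m : RatFunc ℝ))⁻¹ := by
    simp [dotProduct, hu, Finset.sum_const, Finset.card_univ, mul_comm, ← hk]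
  rw [hdot]
  set d : RatFunc ℝ := c - (m : RatFunc ℝ) with hd
  have hXpsi : ψ X = d + ((m * k : ℕ) : RatFunc ℝ) := by
    rw [hcm]
    have : ((m * k : ℕ) : RatFunc ℝ) = ψ (C (((k * m : ℕ) : ℝ))) := by
      rw [← hb]
      simp [map_natCast, hb]
      push_cast
      ring
    rw [this, ← map_add]
    congr 1
    ring
  have hfinal : (c ^ (m - 1) * d) ^ k * (1 + ((m * k : ℕ) : RatFunc ℝ) * d⁻¹)
      = ψ (X * (X - C a) ^ (k * (m - 1)) * (X - C b) ^ (k - 1)) := by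
    have hdk : d ^ k = d ^ (k - 1) * d := by
      conv_lhs => rw [← Nat.sub_add_cancel hk1]
      rw [pow_succ]
    have hdd : d * (1 + ((m * k : ℕ) : RatFunc ℝ) * d⁻¹) = d + ((m * k : ℕ) : RatFunc ℝ) := by
      field_simp
    rw [mul_pow, hdk, _root_.map_mul, _root_.map_mul, map_pow, map_pow, ← hc, ← hcm]
    rw [← pow_mul, mul_comm (m-1) k]
    calc c ^ (k * (m-1)) * (d ^ (k-1) * d) * (1 + ((m * k : ℕ) : RatFunc ℝ) * d⁻¹)
        = c ^ (k * (m-1)) * d ^ (k-1) * (d * (1 + ((m * k : ℕ) : RatFunc ℝ) * d⁻¹)) := by ring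
      _ = c ^ (k * (m-1)) * d ^ (k-1) * (ψ X) := by rw [hdd, hXpsi]
      _ = ψ X * c ^ (k * (m-1)) * d ^ (k-1) := by ring
  exact hfinal

lemma NCG.lap_charpoly_of_fibers {V : Type*} [Fintype V] [DecidableEq V]
    {P : Type*} [Fintype P] [DecidableEq P] [Nonempty P] (f : V → P) {m : ℕ} (hm : 0 < m)
    (hfib : ∀ q : P, Fintype.card {x : V // f x = q} = m)
    (M : Matrix V V ℝ)
    (hM : ∀ x y, M x y = if x = y then (((Fintype.card P - 1) * m : ℕ) : ℝ)
        else if f x = f y then 0 else -1) :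
    M.charpoly = X * (X - C (((Fintype.card P - 1) * m : ℕ) : ℝ)) ^ (Fintype.card P * (m - 1))
        * (X - C ((Fintype.card P * m : ℕ) : ℝ)) ^ (Fintype.card P - 1) := by
  classical
  let g : ∀ q : P, {x : V // f x = q} ≃ Fin m := fun q => Fintype.equivFinOfCardEq (hfib q)
  let E : V ≃ Fin m × P :=
    (Equiv.sigmaFiberEquiv f).symm.trans ((Equiv.sigmaCongrRight g).trans
      ((Equiv.sigmaEquivProd P (Fin m)).trans (Equiv.prodComm P (Fin m))))
  have hE2 : ∀ x : V, (E x).2 = f x := fun x => rfl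
  have hME : M = (Matrix.of (fun x y : Fin m × P =>
      if x = y then (((Fintype.card P - 1) * m : ℕ) : ℝ)
      else if x.2 = y.2 then 0 else -1)).submatrix E E := by
    ext x y
    rw [Matrix.submatrix_apply, Matrix.of_apply, hM x y]
    by_cases hxy : x = y
    · subst hxy; simp
    · have hExy : E x ≠ E y := fun hc => hxy (E.injective hc)
      rw [if_neg hxy, if_neg hExy, hE2, hE2]
  have hre : (Matrix.of (fun x y : Fin m × P =>
      if x = y then (((Fintype.card P - 1) * m : ℕ) : ℝ)
      else if x.2 = y.2 then 0 else -1)).submatrix E E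
      = Matrix.reindex E.symm E.symm (Matrix.of (fun x y : Fin m × P =>
      if x = y then (((Fintype.card P - 1) * m : ℕ) : ℝ)
      else if x.2 = y.2 then 0 else -1)) := by
    rw [Matrix.reindex_apply, Equiv.symm_symm]
  rw [hME, hre, Matrix.charpoly_reindex, NCG.lap_charpoly_aux hm]

lemma NCG.Qcard {p : ℕ} (hp : p.Prime) :
    Nat.card (Multiplicative (ZMod p) × Multiplicative (ZMod p)) = p ^ 2 := by
  haveI : Fact p.Prime := ⟨hp⟩
  rw [Nat.card_prod]
  have h1 : Nat.card (Multiplicative (ZMod p)) = p := by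
    rw [Nat.card_congr Multiplicative.toAdd, Nat.card_eq_fintype_card, ZMod.card]
  rw [h1]; ring

lemma NCG.Qpow {p : ℕ} (u : Multiplicative (ZMod p) × Multiplicative (ZMod p)) : u ^ p = 1 := by
  have key : ∀ a : Multiplicative (ZMod p), a ^ p = 1 := by
    intro a
    rw [← ofAdd_toAdd a, ← ofAdd_nsmul]
    have : p • (Multiplicative.toAdd a) = 0 := by
      rw [nsmul_eq_mul, ZMod.natCast_self, zero_mul]
    rw [this, ofAdd_zero]
  have : (u.1 ^ p, u.2 ^ p) = ((1 : Multiplicative (ZMod p)), (1 : Multiplicative (ZMod p))) := by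
    rw [key u.1, key u.2]
  simpa [Prod.pow_fst, Prod.pow_snd, Prod.ext_iff] using this

lemma NCG.Qorder {p : ℕ} (hp : p.Prime) (u : Multiplicative (ZMod p) × Multiplicative (ZMod p))
    (hu : u ≠ 1) : orderOf u = p := by
  have hdvd : orderOf u ∣ p := orderOf_dvd_of_pow_eq_one (NCG.Qpow u)
  rcases (Nat.Prime.eq_one_or_self_of_dvd hp _ hdvd) with h1 | h1
  · exact absurd (orderOf_eq_one_iff.mp h1) hu
  · exact h1

lemma NCG.Qzpowers_card {p : ℕ} (hp : p.Prime)
    (u : Multiplicative (ZMod p) × Multiplicative (ZMod p)) (hu : u ≠ 1) :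
    Nat.card (Subgroup.zpowers u) = p := by
  rw [Nat.card_zpowers, NCG.Qorder hp u hu]

lemma NCG.Qsup_top {p : ℕ} (hp : p.Prime)
    (u v : Multiplicative (ZMod p) × Multiplicative (ZMod p))
    (hu : u ≠ 1) (hv : v ∉ Subgroup.zpowers u) :
    Subgroup.zpowers u ⊔ Subgroup.zpowers v = ⊤ := by
  haveI : Fact p.Prime := ⟨hp⟩
  set H := Subgroup.zpowers u ⊔ Subgroup.zpowers v with hH
  have h1 : Nat.card (Subgroup.zpowers u) ∣ Nat.card H :=
    Subgroup.card_dvd_of_le le_sup_left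
  rw [NCG.Qzpowers_card hp u hu] at h1
  have h2 : Nat.card H ∣ p ^ 2 := by
    rw [← NCG.Qcard hp]
    exact Subgroup.card_subgroup_dvd_card H
  obtain ⟨i, hi2, hcard⟩ := (Nat.dvd_prime_pow hp).mp h2
  interval_cases i
  · rw [pow_zero] at hcard
    rw [hcard] at h1
    exact absurd (Nat.eq_one_of_dvd_one h1) hp.ne_one
  · exfalso
    have : Subgroup.zpowers u = H := by
      apply Subgroup.eq_of_le_of_card_ge le_sup_left
      rw [NCG.Qzpowers_card hp u hu, hcard, pow_one]
    exact hv (this ▸ (le_sup_right (a := Subgroup.zpowers u)) (Subgroup.mem_zpowers v))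
  · apply Subgroup.eq_top_of_card_eq
    rw [hcard, NCG.Qcard hp]

section NCGGroup
variable {p : ℕ} {G : Type*} [Group G] [Fintype G]
  (φ : G →* (Multiplicative (ZMod p) × Multiplicative (ZMod p)))

omit [Fintype G] in
lemma NCG.notcenter_iff (hker : φ.ker = Subgroup.center G) (x : G) :
    x ∉ Subgroup.center G ↔ φ x ≠ 1 := by
  rw [← hker, MonoidHom.mem_ker]

omit [Fintype G] in
lemma NCG.commute_iff (hp : p.Prime) (hker : φ.ker = Subgroup.center G)
    (x y : G) (hx : x ∉ Subgroup.center G) (hy : y ∉ Subgroup.center G) :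
    Commute x y ↔ Subgroup.zpowers (φ x) = Subgroup.zpowers (φ y) := by
  haveI : Fact p.Prime := ⟨hp⟩
  have hx1 : φ x ≠ 1 := (NCG.notcenter_iff φ hker x).mp hx
  have hy1 : φ y ≠ 1 := (NCG.notcenter_iff φ hker y).mp hy
  constructor
  · intro hxy
    have hmem : φ y ∈ Subgroup.zpowers (φ x) := by
      by_contra hne
      have htop : Subgroup.zpowers (φ x) ⊔ Subgroup.zpowers (φ y) = ⊤ :=
        NCG.Qsup_top hp (φ x) (φ y) hx1 hne
      set Cx := Subgroup.centralizer ({x} : Set G) with hCx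
      have hxC : x ∈ Cx := Subgroup.mem_centralizer_iff.mpr (by
        intro g hg
        rw [Set.mem_singleton_iff] at hg
        rw [hg])
      have hyC : y ∈ Cx := Subgroup.mem_centralizer_iff.mpr (by
        intro g hg
        rw [Set.mem_singleton_iff] at hg
        rw [hg]
        exact hxy)
      have hmap : Subgroup.map φ Cx = ⊤ := by
        rw [eq_top_iff, ← htop, sup_le_iff]
        constructor
        · rw [Subgroup.zpowers_le]
          exact Subgroup.mem_map_of_mem φ hxC
        · rw [Subgroup.zpowers_le]
          exact Subgroup.mem_map_of_mem φ hyC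
      have hCtop : Cx = ⊤ := by
        have h1 : Subgroup.comap φ (Subgroup.map φ Cx) = Cx ⊔ φ.ker :=
          Subgroup.comap_map_eq φ Cx
        rw [hmap, hker, Subgroup.comap_top] at h1
        have h2 : Subgroup.center G ≤ Cx := Subgroup.center_le_centralizer _
        rw [sup_of_le_left h2] at h1
        exact h1.symm
      apply hx
      rw [Subgroup.mem_center_iff]
      intro g
      have hg : g ∈ Cx := hCtop ▸ Subgroup.mem_top g
      exact (Subgroup.mem_centralizer_iff.mp hg x (Set.mem_singleton x)).symm
    have hle : Subgroup.zpowers (φ y) ≤ Subgroup.zpowers (φ x) := by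
      rw [Subgroup.zpowers_le]; exact hmem
    symm
    apply Subgroup.eq_of_le_of_card_ge hle
    rw [NCG.Qzpowers_card hp _ hx1, NCG.Qzpowers_card hp _ hy1]
  · intro hzp
    have hmem : φ y ∈ Subgroup.zpowers (φ x) := hzp ▸ Subgroup.mem_zpowers (φ y)
    obtain ⟨j, hj⟩ := hmem
    have hzZ : x ^ j * y⁻¹ ∈ Subgroup.center G := by
      rw [← hker, MonoidHom.mem_ker, _root_.map_mul, map_zpow, map_inv]
      simp only at hj
      rw [hj, mul_inv_cancel]
    have hyz : y = (x ^ j * y⁻¹)⁻¹ * x ^ j := by group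
    rw [hyz]
    apply Commute.mul_right
    · have := Subgroup.mem_center_iff.mp (inv_mem hzZ)
      exact (this x)
    · exact (Commute.refl x).zpow_right j

end NCGGroup

section NCGCounting
variable {G : Type*} [Group G] [Fintype G] {Q : Type*} [Group Q] [Fintype Q] [DecidableEq Q]
  (φ : G →* Q)

lemma NCG.card_fiber_eq [DecidableEq G] (hsurj : Function.Surjective φ) (u : Q) :
    (Finset.univ.filter (fun g : G => φ g = u)).card = Nat.card φ.ker := by
  classical
  obtain ⟨g₀, hg₀⟩ := hsurj u
  have equ : {g : G // φ g = u} ≃ φ.ker :=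
    { toFun := fun g => ⟨g₀⁻¹ * g.1, by
        rw [MonoidHom.mem_ker, _root_.map_mul, map_inv, hg₀, g.2, inv_mul_cancel]⟩
      invFun := fun z => ⟨g₀ * z.1, by
        rw [_root_.map_mul, hg₀, MonoidHom.mem_ker.mp z.2, mul_one]⟩
      left_inv := fun g => by
        apply Subtype.ext
        simp
      right_inv := fun z => by
        apply Subtype.ext
        simp }
  rw [← Fintype.card_subtype, ← Nat.card_eq_fintype_card, Nat.card_congr equ]

lemma NCG.card_preimage [DecidableEq G] (hsurj : Function.Surjective φ) (S : Finset Q) :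
    Nat.card {g : G // φ g ∈ S} = S.card * Nat.card φ.ker := by
  classical
  rw [Nat.card_eq_fintype_card, Fintype.card_subtype]
  rw [Finset.card_eq_sum_card_fiberwise
    (s := Finset.univ.filter (fun g : G => φ g ∈ S)) (f := φ) (t := S) (fun x hx => (Finset.mem_filter.mp hx).2)]
  have heach : ∀ u ∈ S, ((Finset.univ.filter (fun g : G => φ g ∈ S)).filter
      (fun g => φ g = u)).card = Nat.card φ.ker := by
    intro u hu
    rw [Finset.filter_filter]
    have : Finset.univ.filter (fun g : G => φ g ∈ S ∧ φ g = u)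
        = Finset.univ.filter (fun g : G => φ g = u) := by
      ext g
      simp only [Finset.mem_filter, Finset.mem_univ, true_and, and_iff_right_iff_imp]
      exact fun h => h ▸ hu
    rw [this, NCG.card_fiber_eq φ hsurj u]
  rw [Finset.sum_congr rfl heach, Finset.sum_const, smul_eq_mul]

end NCGCounting

set_option maxHeartbeats 1600000
set_option synthInstance.maxHeartbeats 400000

/-- Laplacian spectrum of the non-commuting graph of a finite group
`G` with `G/Z(G) ≅ ℤ_p × ℤ_p`. -/
theorem laplacian_spectrum_nc_graph_central_factor_ZpZp
    (p : ℕ) (hp : p.Prime) (G : Type*) [Group G] [Fintype G]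
    (h : Nonempty ((G ⧸ Subgroup.center G) ≃*
      (Multiplicative (ZMod p) × Multiplicative (ZMod p)))) :
    ncCharpoly G =
      X *
      (X - C (((p : ℝ) ^ 2 - (p : ℝ)) * (Nat.card (Subgroup.center G) : ℝ))) ^
        ((p ^ 2 - 1) * Nat.card (Subgroup.center G) - p - 1) *
      (X - C (((p : ℝ) ^ 2 - 1) * (Nat.card (Subgroup.center G) : ℝ))) ^ p := by
  classical
  obtain ⟨e⟩ := h
  haveI : Fact p.Prime := ⟨hp⟩
  set Z := Subgroup.center G with hZ
  set z := Nat.card Z with hz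
  let φ : G →* (Multiplicative (ZMod p) × Multiplicative (ZMod p)) :=
    e.toMonoidHom.comp (QuotientGroup.mk' Z)
  have hker : φ.ker = Z := by
    ext g
    rw [MonoidHom.mem_ker]
    show e (QuotientGroup.mk' Z g) = 1 ↔ g ∈ Z
    rw [MulEquiv.map_eq_one_iff]
    rw [QuotientGroup.mk'_apply]
    exact QuotientGroup.eq_one_iff g
  have hsurj : Function.Surjective φ := by
    intro u
    obtain ⟨w, hw⟩ := e.surjective u
    obtain ⟨g, hg⟩ := QuotientGroup.mk'_surjective Z w
    exact ⟨g, by show e (QuotientGroup.mk' Z g) = u; rw [hg, hw]⟩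
  -- the vertex type
  set V := {x : G // x ∉ Subgroup.center G} with hV
  let fV : V → Subgroup (Multiplicative (ZMod p) × Multiplicative (ZMod p)) :=
    fun x => Subgroup.zpowers (φ x.1)
  haveI hPfin : Fintype ↥(Set.range fV) := (Set.finite_range fV).fintype
  set P := ↥(Set.range fV) with hP
  let f : V → P := fun x => ⟨fV x, ⟨x, rfl⟩⟩
  set m := (p - 1) * z with hm'
  have hz1 : 1 ≤ z := Nat.one_le_iff_ne_zero.mpr
    (Nat.card_ne_zero.mpr ⟨⟨1, one_mem _⟩, inferInstance⟩)
  have hp2 : 2 ≤ p := hp.two_le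
  have hm : 0 < m := Nat.mul_pos (by omega) hz1
  -- fibers have size m
  have hfib : ∀ q : P, Fintype.card {x : V // f x = q} = m := by
    intro q
    obtain ⟨x₀, hx₀⟩ := q.2
    have hx01 : φ x₀.1 ≠ 1 := (NCG.notcenter_iff φ hker x₀.1).mp x₀.2
    have hiff : ∀ x : V, f x = q ↔ (φ x.1 ∈ Subgroup.zpowers (φ x₀.1) ∧ φ x.1 ≠ 1) := by
      intro x
      have hx1 : φ x.1 ≠ 1 := (NCG.notcenter_iff φ hker x.1).mp x.2
      rw [Subtype.ext_iff]
      constructor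
      · intro hfx
        refine ⟨?_, hx1⟩
        have heq : Subgroup.zpowers (φ x.1) = Subgroup.zpowers (φ x₀.1) := by
          show fV x = fV x₀
          rw [show (f x).1 = fV x from rfl] at hfx
          rw [hfx, ← hx₀]
        exact heq ▸ Subgroup.mem_zpowers (φ x.1)
      · rintro ⟨hmem, -⟩
        show fV x = q.1
        rw [← hx₀]
        apply Subgroup.eq_of_le_of_card_ge (Subgroup.zpowers_le.mpr hmem)
        rw [NCG.Qzpowers_card hp _ hx01, NCG.Qzpowers_card hp _ hx1]
    have equ : {x : V // f x = q} ≃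
        {g : G // φ g ∈ Subgroup.zpowers (φ x₀.1) ∧ φ g ≠ 1} :=
      { toFun := fun x => ⟨x.1.1, (hiff x.1).mp x.2⟩
        invFun := fun g => ⟨⟨g.1, (NCG.notcenter_iff φ hker g.1).mpr g.2.2⟩, (hiff _).mpr g.2⟩
        left_inv := fun x => Subtype.ext (Subtype.ext rfl)
        right_inv := fun g => Subtype.ext rfl }
    have hpred : ∀ g : G, (φ g ∈ Subgroup.zpowers (φ x₀.1) ∧ φ g ≠ 1) ↔
        φ g ∈ (Finset.univ.filter
          (fun u => u ∈ Subgroup.zpowers (φ x₀.1) ∧ u ≠ 1)) := by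
      intro g; simp
    have hS : (Finset.univ.filter
        (fun u => u ∈ Subgroup.zpowers (φ x₀.1) ∧ u ≠ 1)).card = p - 1 := by
      have h1 : (Finset.univ.filter
          (fun u => u ∈ Subgroup.zpowers (φ x₀.1) ∧ u ≠ 1))
          = (Finset.univ.filter (fun u => u ∈ Subgroup.zpowers (φ x₀.1))).erase 1 := by
        ext u
        simp [Finset.mem_erase, and_comm]
      rw [h1, Finset.card_erase_of_mem (by simp [one_mem])]
      congr 1
      rw [← Fintype.card_subtype, ← Nat.card_eq_fintype_card]
      exact NCG.Qzpowers_card hp _ hx01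
    have hkerZ : Nat.card φ.ker = z := by rw [hker]
    rw [← Nat.card_eq_fintype_card, Nat.card_congr equ,
      Nat.card_congr (Equiv.subtypeEquivRight hpred), NCG.card_preimage φ hsurj, hS, hkerZ]
  -- nonemptiness
  haveI hVne : Nonempty V := by
    haveI : Fact (1 < p) := ⟨hp.one_lt⟩
    let u : Multiplicative (ZMod p) × Multiplicative (ZMod p) :=
      (Multiplicative.ofAdd (1 : ZMod p), 1)
    have hu : u ≠ 1 := fun hc => one_ne_zero (α := ZMod p) (by
      have := congrArg (fun w : Multiplicative (ZMod p) × Multiplicative (ZMod p) =>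
        Multiplicative.toAdd w.1) hc
      simpa [u] using this)
    obtain ⟨g, hg⟩ := hsurj u
    exact ⟨⟨g, (NCG.notcenter_iff φ hker g).mpr (by rw [hg]; exact hu)⟩⟩
  haveI : Nonempty P := ⟨f (Classical.arbitrary V)⟩
  -- cardinalities
  have hGcard : Nat.card G = p ^ 2 * z := by
    rw [hz, hZ, Subgroup.card_eq_card_quotient_mul_card_subgroup (Subgroup.center G)]
    congr 1
    rw [Nat.card_congr e.toEquiv, NCG.Qcard hp]
  have hZfin : Fintype.card {x : G // x ∈ Subgroup.center G} = z := by
    rw [← Nat.card_eq_fintype_card]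
  have hn : Fintype.card V = (p ^ 2 - 1) * z := by
    have hsub : Fintype.card {x : G // x ∉ Subgroup.center G} = (p ^ 2 - 1) * z := by
      rw [Fintype.card_subtype_compl, hZfin, ← Nat.card_eq_fintype_card (α := G), hGcard,
        tsub_mul, one_mul]
    exact hsub
  have hnP : Fintype.card V = Fintype.card P * m := by
    rw [← Fintype.card_congr (Equiv.sigmaFiberEquiv f), Fintype.card_sigma,
      Finset.sum_congr rfl (fun q _ => hfib q), Finset.sum_const, Finset.card_univ, smul_eq_mul]
  have h1 : (p + 1) * m = (p ^ 2 - 1) * z := by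
    rw [hm', ← mul_assoc]
    congr 1
    have h2 : p ^ 2 - 1 ^ 2 = (p + 1) * (p - 1) := Nat.sq_sub_sq p 1
    rw [one_pow] at h2
    rw [← h2]
  have hkP : Fintype.card P = p + 1 := by
    apply Nat.eq_of_mul_eq_mul_right hm
    rw [← hnP, hn, ← h1]
  -- adjacency
  have hadj : ∀ x y : V, (nonCommGraph G).Adj x y ↔ f x ≠ f y := by
    intro x y
    show (¬ Commute (x.1 : G) y.1) ↔ f x ≠ f y
    have hfeq : f x = f y ↔ Subgroup.zpowers (φ x.1) = Subgroup.zpowers (φ y.1) := by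
      rw [Subtype.ext_iff]
    rw [NCG.commute_iff φ hp hker x.1 y.1 x.2 y.2]
    exact not_congr hfeq.symm
  -- degree
  letI : DecidableRel (nonCommGraph G).Adj := fun _ _ => Classical.dec _
  have hdeg : ∀ x : V, (nonCommGraph G).degree x = (Fintype.card P - 1) * m := by
    intro x
    rw [← SimpleGraph.card_neighborSet_eq_degree]
    have e1 : ((nonCommGraph G).neighborSet x) ≃ {y : V // ¬ (f y = f x)} :=
      Equiv.subtypeEquivRight (fun y => by
        have : (nonCommGraph G).Adj x y ↔ f x ≠ f y := hadj x y
        rw [SimpleGraph.mem_neighborSet, this, ne_comm])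
    rw [Fintype.card_congr e1, Fintype.card_subtype_compl, hfib (f x), hnP, tsub_mul, one_mul]
  -- the matrix entries
  have hlap : ncLap G = (nonCommGraph G).lapMatrix ℝ := by
    unfold ncLap
    congr!
  have hM : ∀ x y : V, (ncLap G) x y = if x = y then (((Fintype.card P - 1) * m : ℕ) : ℝ)
      else if f x = f y then 0 else -1 := by
    intro x y
    rw [hlap, SimpleGraph.lapMatrix, Matrix.sub_apply]
    by_cases hxy : x = y
    · subst hxy
      rw [if_pos rfl, SimpleGraph.degMatrix, Matrix.diagonal_apply_eq,
        SimpleGraph.adjMatrix_apply, if_neg ((nonCommGraph G).loopless.irrefl x), hdeg x]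
      ring
    · rw [if_neg hxy, SimpleGraph.degMatrix, Matrix.diagonal_apply_ne _ hxy,
        SimpleGraph.adjMatrix_apply]
      by_cases hf : f x = f y
      · rw [if_pos hf, if_neg (fun hc => ((hadj x y).mp hc) hf)]
        ring
      · rw [if_neg hf, if_pos ((hadj x y).mpr hf)]
        ring
  have hmain := NCG.lap_charpoly_of_fibers f hm hfib (ncLap G) hM
  have hgoal : ncCharpoly G = (ncLap G).charpoly := by
    unfold ncCharpoly
    congr!
  rw [hgoal, hmain, hkP]
  -- final arithmetic rewriting
  have hzcast : ((z : ℕ) : ℝ) = (Nat.card (Subgroup.center G) : ℝ) := by rw [hz, hZ]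
  have hc1 : (((p + 1 - 1) * m : ℕ) : ℝ)
      = ((p : ℝ) ^ 2 - (p : ℝ)) * (Nat.card (Subgroup.center G) : ℝ) := by
    rw [← hzcast, show p + 1 - 1 = p by omega, hm']
    push_cast [Nat.cast_sub hp.one_le]
    ring
  have hc2 : (((p + 1) * m : ℕ) : ℝ)
      = ((p : ℝ) ^ 2 - 1) * (Nat.card (Subgroup.center G) : ℝ) := by
    rw [← hzcast, hm']
    push_cast [Nat.cast_sub hp.one_le]
    ring
  have hexp1 : (p + 1) * (m - 1) = (p ^ 2 - 1) * Nat.card (Subgroup.center G) - p - 1 := by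
    rw [show Nat.card (Subgroup.center G) = z from rfl, ← h1]
    obtain ⟨t, ht⟩ := Nat.exists_eq_succ_of_ne_zero hm.ne'
    rw [ht]
    simp only [Nat.succ_sub_one]
    rw [Nat.mul_succ]
    omega
  have hexp2 : p + 1 - 1 = p := by omega
  rw [hc1, hc2, hexp1, hexp2]
end

section
/- Let m ≥ 2 and let G be a finite group such that G/Z(G) is isomorphic to the dihedral group D_{2m} of order 2m. Then the Laplacian spectrum of the non-commuting graph 𝒜_G is {0^1, (m|Z(G)|)^{(m − 1)|Z(G)| − 1}, (2(m − 1)|Z(G)|)^{m|Z(G)| − m}, ((2m − 1)|Z(G)|)^m}. -/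
open Polynomial

set_option linter.unusedSectionVars false
set_option maxHeartbeats 1000000

section AuxLA
open Matrix Finset


lemma det_smul_one_sub_ones {ι : Type*} [Fintype ι] [DecidableEq ι] [Nonempty ι] {α : ℝ}
    (hα : α ≠ 0) :
    (α • (1 : Matrix ι ι ℝ) - Matrix.of (fun _ _ => (1:ℝ))).det
      = (α - Fintype.card ι) * α ^ (Fintype.card ι - 1) := by
  have h1 : α • (1 : Matrix ι ι ℝ) - Matrix.of (fun _ _ => (1:ℝ))
      = α • ((1 : Matrix ι ι ℝ) + Matrix.replicateCol Unit (fun _ => -α⁻¹) * Matrix.replicateRow Unit (fun _ => (1:ℝ))) := by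
    ext i j
    by_cases h : i = j <;>
      simp [Matrix.mul_apply, Matrix.one_apply, h, smul_eq_mul, mul_add, hα, mul_comm] <;>
      ring_nf <;> field_simp
  rw [h1, Matrix.det_smul]
  rw [@Matrix.det_one_add_replicateCol_mul_replicateRow ι ℝ _ _ _ Unit _ (fun _ => -α⁻¹) (fun _ => (1:ℝ))]
  have hd : ((fun _ => (1:ℝ)) : ι → ℝ) ⬝ᵥ (fun _ => -α⁻¹) = -((Fintype.card ι : ℝ) * α⁻¹) := by
    simp [dotProduct]
  rw [hd]
  have hc : Fintype.card ι = (Fintype.card ι - 1) + 1 :=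
    (Nat.succ_pred_eq_of_pos Fintype.card_pos).symm
  rw [hc]
  simp only [Nat.add_sub_cancel]
  rw [pow_succ]
  field_simp
  ring

lemma eval_charpoly' {n : Type*} [Fintype n] [DecidableEq n] (M : Matrix n n ℝ) (x : ℝ) :
    (M.charpoly).eval x = (x • (1 : Matrix n n ℝ) - M).det := by
  rw [Matrix.charpoly, ← Polynomial.coe_evalRingHom, RingHom.map_det]
  congr 1
  ext i j
  by_cases h : i = j <;>
    simp [Matrix.charmatrix_apply, h, Matrix.one_apply, Matrix.diagonal_apply, smul_eq_mul]

lemma multipartite_charpoly_s4 {V κ : Type*} [Fintype V] [DecidableEq V] [Nonempty V]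
    [Fintype κ] [DecidableEq κ] [LinearOrder κ] (P : V → κ) (hsurj : Function.Surjective P)
    (L : Matrix V V ℝ)
    (hL : ∀ v w, L v w =
        (if v = w then ((Nat.card V : ℝ) - (Nat.card {u // P u = P v} : ℝ)) else 0)
        - (if P v = P w then 0 else 1)) :
    L.charpoly = X * (X - C ((Nat.card V : ℝ)))^(Nat.card κ - 1)
        * ∏ c : κ, (X - C ((Nat.card V : ℝ) - (Nat.card {u // P u = c} : ℝ)))
            ^ (Nat.card {u // P u = c} - 1) := by
  simp only [Nat.card_eq_fintype_card] at hL ⊢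
  have hκne : Nonempty κ := ⟨P (Classical.arbitrary V)⟩
  set Nd : ℕ := Fintype.card V with hNd
  set k : ℕ := Fintype.card κ with hk
  have hk1 : 1 ≤ k := Fintype.card_pos
  set s : κ → ℕ := fun c => Fintype.card {u // P u = c} with hs
  have hs1 : ∀ c, 1 ≤ s c := by
    intro c
    obtain ⟨v, hv⟩ := hsurj c
    exact Fintype.card_pos_iff.mpr ⟨⟨v, hv⟩⟩
  have hsN : ∀ c, s c ≤ Nd := fun c => Fintype.card_subtype_le _
  apply Polynomial.eq_of_infinite_eval_eq
  apply Set.Infinite.mono (s := Set.Iio (0:ℝ)) _ (Set.Iio_infinite 0)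
  intro x hx
  simp only [Set.mem_Iio] at hx
  simp only [Set.mem_setOf_eq]
  -- nonvanishing facts
  have hxN : x - Nd ≠ 0 := by
    have : (0:ℝ) ≤ Nd := Nat.cast_nonneg _
    nlinarith
  have hxNc : ∀ c, x - Nd + s c ≠ 0 := by
    intro c
    have h1 : (s c : ℝ) ≤ Nd := Nat.cast_le.mpr (hsN c)
    nlinarith
  -- the block matrix
  set Mb : Matrix V V ℝ := Matrix.of (fun v w =>
    (if v = w then (x - Nd + s (P v)) else 0) - (if P v = P w then 1 else 0)) with hMb
  have hsplit : x • (1 : Matrix V V ℝ) - L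
      = Mb + Matrix.replicateCol Unit (fun _ => (1:ℝ)) * Matrix.replicateRow Unit (fun _ => (1:ℝ)) := by
    ext v w
    by_cases h : v = w
    · subst h
      simp [hL, Matrix.one_apply, Matrix.mul_apply, hMb, smul_eq_mul]
      ring
    · have hne : (Matrix.replicateCol Unit (fun _ => (1:ℝ)) * Matrix.replicateRow Unit (fun _ => (1:ℝ))) v w = 1 := by
        simp [Matrix.mul_apply]
      by_cases hP : P v = P w <;>
        simp [hL, Matrix.one_apply, h, hMb, hP, Matrix.mul_apply, smul_eq_mul]
  -- determinant of the block matrix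
  have hBT : Mb.BlockTriangular P := by
    intro v w hvw
    have h1 : P v ≠ P w := fun h => absurd h.symm (ne_of_lt hvw)
    have h2 : v ≠ w := fun h => h1 (by rw [h])
    simp [hMb, h1, h2]
  have hblock : ∀ c : κ, (Mb.toSquareBlock P c).det
      = (x - Nd) * (x - Nd + s c) ^ (s c - 1) := by
    intro c
    have hne : Nonempty {v // P v = c} := by
      obtain ⟨v, hv⟩ := hsurj c
      exact ⟨⟨v, hv⟩⟩
    have hEq : Mb.toSquareBlock P c
        = (x - Nd + s c) • (1 : Matrix {v // P v = c} {v // P v = c} ℝ)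
          - Matrix.of (fun _ _ => (1:ℝ)) := by
      ext ⟨v, hv⟩ ⟨w, hw⟩
      have : P v = P w := by rw [hv, hw]
      by_cases h : v = w <;>
        simp [Matrix.toSquareBlock_def, hMb, h, this, hv, hw, Matrix.one_apply, Subtype.ext_iff,
          smul_eq_mul]
    rw [hEq, det_smul_one_sub_ones (hxNc c)]
    have : Fintype.card {v // P v = c} = s c := rfl
    rw [this]
    ring
  have hMbdet : Mb.det = (x - Nd)^k * ∏ c : κ, (x - Nd + s c) ^ (s c - 1) := by
    rw [hBT.det_fintype]
    rw [Finset.prod_congr rfl (fun c _ => hblock c), Finset.prod_mul_distrib,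
      Finset.prod_const, Finset.card_univ]
  have hMbne : Mb.det ≠ 0 := by
    rw [hMbdet]
    exact mul_ne_zero (pow_ne_zero _ hxN)
      (Finset.prod_ne_zero_iff.mpr fun c _ => pow_ne_zero _ (hxNc c))
  have hunit : IsUnit Mb.det := isUnit_iff_ne_zero.mpr hMbne
  -- rank one update
  have hrow : ∀ v : V, ∑ w : V, Mb v w = x - Nd := by
    intro v
    have h1 : ∑ w : V, (if v = w then (x - Nd + s (P v)) else 0) = x - Nd + s (P v) := by
      simp
    have h2 : ∑ w : V, (if P v = P w then (1:ℝ) else 0) = s (P v) := by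
      rw [Finset.sum_boole]
      have hfil : Finset.filter (fun w => P v = P w) Finset.univ
          = Finset.filter (fun w => P w = P v) Finset.univ := by
        apply Finset.filter_congr
        intro w _
        simp [eq_comm]
      rw [hfil, hs]
      norm_cast
      exact (Fintype.card_subtype _).symm
    calc ∑ w : V, Mb v w
        = (∑ w : V, (if v = w then (x - Nd + s (P v)) else 0))
          - ∑ w : V, (if P v = P w then (1:ℝ) else 0) := by
          rw [← Finset.sum_sub_distrib]; rfl
      _ = x - Nd := by rw [h1, h2]; ring
  have hMb1 : Mb * ((x - Nd)⁻¹ • Matrix.replicateCol Unit (fun _ : V => (1:ℝ)))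
      = Matrix.replicateCol Unit (fun _ : V => (1:ℝ)) := by
    ext v u
    simp only [Matrix.mul_apply, Matrix.smul_apply, Matrix.replicateCol_apply, smul_eq_mul, mul_one]
    rw [← Finset.sum_mul]
    rw [hrow v]
    field_simp
  have hinv : Mb⁻¹ * Matrix.replicateCol Unit (fun _ : V => (1:ℝ))
      = (x - Nd)⁻¹ • Matrix.replicateCol Unit (fun _ : V => (1:ℝ)) := by
    conv_lhs => rw [← hMb1]
    rw [Matrix.nonsing_inv_mul_cancel_left _ _ hunit]
  have hdet : (x • (1 : Matrix V V ℝ) - L).det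
      = Mb.det * (1 + (Nd : ℝ) * (x - Nd)⁻¹) := by
    rw [hsplit, Matrix.det_add_replicateCol_mul_replicateRow hunit]
    congr 1
    rw [Matrix.mul_assoc, hinv]
    rw [Matrix.det_unique]
    simp only [Matrix.add_apply, Matrix.one_apply_eq, Matrix.mul_apply, Matrix.smul_apply,
      Matrix.replicateCol_apply, Matrix.replicateRow_apply, smul_eq_mul, mul_one, one_mul]
    rw [Finset.sum_const, Finset.card_univ]
    push_cast
    ring
  rw [eval_charpoly', hdet, hMbdet]
  -- evaluate the RHS
  simp only [eval_mul, eval_pow, eval_sub, eval_X, eval_C, Polynomial.eval_prod]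
  have hrhs : ∀ c ∈ Finset.univ, (x - ((Nd : ℝ) - (Fintype.card {u // P u = c} : ℝ)))
      ^ (Fintype.card {u // P u = c} - 1) = (x - Nd + s c) ^ (s c - 1) := by
    intro c _
    have h1 : x - ((Nd : ℝ) - (Fintype.card {u // P u = c} : ℝ)) = x - Nd + s c := by
      rw [hs]; ring
    rw [h1, hs]
  rw [Finset.prod_congr rfl hrhs]
  have hkk : k = (k - 1) + 1 := (Nat.succ_pred_eq_of_pos hk1).symm
  rw [hkk, pow_succ]
  simp only [Nat.add_sub_cancel]
  field_simp
  ring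
end AuxLA


section GroupPart

variable {m : ℕ} {G : Type*} [Group G] [Fintype G]

namespace NCAux

lemma sr_inv {n : ℕ} (i : ZMod n) : (DihedralGroup.sr i)⁻¹ = DihedralGroup.sr i :=
  inv_eq_of_mul_eq_one_right (DihedralGroup.sr_mul_self i)

variable (φ : (G ⧸ Subgroup.center G) ≃* DihedralGroup m)

/-- The canonical projection onto the dihedral group. -/
def pr : G →* DihedralGroup m := φ.toMonoidHom.comp (QuotientGroup.mk' (Subgroup.center G))

lemma pr_eq_one_iff (x : G) : pr φ x = 1 ↔ x ∈ Subgroup.center G := by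
  rw [pr]
  simp only [MonoidHom.comp_apply, MulEquiv.coe_toMonoidHom]
  rw [MulEquiv.map_eq_one_iff]
  exact QuotientGroup.eq_one_iff x

lemma pr_surj : Function.Surjective (pr φ) :=
  φ.surjective.comp (QuotientGroup.mk'_surjective _)

lemma rot_decomp [NeZero m] {a₀ : G} (ha₀ : pr φ a₀ = DihedralGroup.r 1)
    {x : G} {j : ZMod m} (hx : pr φ x = DihedralGroup.r j) :
    ∃ z ∈ Subgroup.center G, x = a₀ ^ (ZMod.val j) * z := by
  refine ⟨(a₀ ^ (ZMod.val j))⁻¹ * x, ?_, by group⟩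
  rw [← pr_eq_one_iff φ]
  rw [map_mul, map_inv, map_pow, ha₀, hx, DihedralGroup.r_one_pow,
    ZMod.natCast_rightInverse j]
  simp

lemma rot_comm [NeZero m] {a₀ : G} (ha₀ : pr φ a₀ = DihedralGroup.r 1)
    {x y : G} {j k : ZMod m} (hx : pr φ x = DihedralGroup.r j)
    (hy : pr φ y = DihedralGroup.r k) : Commute x y := by
  obtain ⟨z, hz, rfl⟩ := rot_decomp φ ha₀ hx
  obtain ⟨z', hz', rfl⟩ := rot_decomp φ ha₀ hy
  have hzc : ∀ g : G, Commute g z := fun g => Subgroup.mem_center_iff.mp hz g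
  have hz'c : ∀ g : G, Commute g z' := fun g => Subgroup.mem_center_iff.mp hz' g
  exact (((Commute.pow_pow_self a₀ _ _).mul_right (hz'c _)).mul_left
    (((hzc _).symm.mul_right (hz'c _))))

lemma sr_comm {x y : G} {i : ZMod m} (hx : pr φ x = DihedralGroup.sr i)
    (hy : pr φ y = DihedralGroup.sr i) : Commute x y := by
  have h1 : pr φ (x⁻¹ * y) = 1 := by
    rw [map_mul, map_inv, hx, hy, sr_inv, DihedralGroup.sr_mul_sr]
    simp
  have h2 : x⁻¹ * y ∈ Subgroup.center G := (pr_eq_one_iff φ _).mp h1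
  have h3 : y = x * (x⁻¹ * y) := by group
  rw [h3]
  have h4 : Commute x (x⁻¹ * y) := Subgroup.mem_center_iff.mp h2 x
  exact (Commute.refl x).mul_right h4

lemma rot_not_comm_sr [NeZero m] {a₀ : G} (ha₀ : pr φ a₀ = DihedralGroup.r 1)
    {x y : G} {j : ZMod m} {i : ZMod m} (hx : pr φ x = DihedralGroup.r j)
    (hxc : x ∉ Subgroup.center G) (hy : pr φ y = DihedralGroup.sr i) :
    ¬ Commute x y := by
  intro hc
  apply hxc
  rw [Subgroup.mem_center_iff]
  intro g
  cases hg : pr φ g with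
  | r k => exact (rot_comm φ ha₀ hx hg).symm.eq
  | sr k =>
    have h1 : pr φ (g * y⁻¹) = DihedralGroup.r (i - k) := by
      rw [map_mul, map_inv, hg, hy, sr_inv, DihedralGroup.sr_mul_sr]
    have h2 : Commute x (g * y⁻¹) := rot_comm φ ha₀ hx h1
    have h3 : Commute x g := by
      have := h2.mul_right hc
      rwa [inv_mul_cancel_right] at this
    exact h3.symm.eq

lemma sr_not_comm_sr [NeZero m] {a₀ : G} (ha₀ : pr φ a₀ = DihedralGroup.r 1)
    {x y : G} {i k : ZMod m} (hx : pr φ x = DihedralGroup.sr i)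
    (hy : pr φ y = DihedralGroup.sr k) (hik : i ≠ k) : ¬ Commute x y := by
  intro hc
  have hu : pr φ (x * y) = DihedralGroup.r (k - i) := by
    rw [map_mul, hx, hy, DihedralGroup.sr_mul_sr]
  have hunc : x * y ∉ Subgroup.center G := by
    rw [← pr_eq_one_iff φ, hu, DihedralGroup.one_def]
    intro h
    have hki : k - i = 0 := DihedralGroup.r.inj h
    exact hik (sub_eq_zero.mp hki).symm
  have h2 : Commute (x * y) x := ((Commute.refl x).mul_right hc).symm
  exact rot_not_comm_sr φ ha₀ hu hunc hx h2

end NCAux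

end GroupPart


section MoreAux

variable {m : ℕ} {G : Type*} [Group G] [Fintype G]

namespace NCAux

variable (φ : (G ⧸ Subgroup.center G) ≃* DihedralGroup m)

variable [NeZero m]

/-- auxiliary partition function on the dihedral group -/
def partAux : DihedralGroup m → Fin (m+1)
  | .r _ => Fin.last m
  | .sr i => ⟨i.val, Nat.lt_succ_of_lt (ZMod.val_lt i)⟩

/-- partition function: which "abelian part" an element belongs to -/
def part (x : G) : Fin (m+1) := partAux (pr φ x)

lemma part_r {x : G} {j : ZMod m} (hx : pr φ x = DihedralGroup.r j) :
    part φ x = Fin.last m := by rw [part, hx]; rfl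

lemma part_sr {x : G} {i : ZMod m} (hx : pr φ x = DihedralGroup.sr i) :
    part φ x = ⟨i.val, Nat.lt_succ_of_lt (ZMod.val_lt i)⟩ := by rw [part, hx]; rfl

lemma val_inj {i k : ZMod m} (h : i.val = k.val) : i = k := by
  have h1 := ZMod.natCast_rightInverse (n := m) i
  have h2 := ZMod.natCast_rightInverse (n := m) k
  rw [← h1, ← h2, h]

lemma part_sr_ne_last {i : ZMod m} :
    (⟨i.val, Nat.lt_succ_of_lt (ZMod.val_lt i)⟩ : Fin (m+1)) ≠ Fin.last m := by
  intro h
  have := Fin.mk.injEq (n := m+1) i.val (Nat.lt_succ_of_lt (ZMod.val_lt i)) m (Nat.lt_succ_self m)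
  rw [Fin.last] at h
  have h2 : i.val = m := by exact_mod_cast Fin.mk.inj_iff.mp h
  exact absurd h2 (Nat.ne_of_lt (ZMod.val_lt i))

lemma commute_iff_part {a₀ : G} (ha₀ : pr φ a₀ = DihedralGroup.r 1)
    {x y : G} (hx : x ∉ Subgroup.center G) (hy : y ∉ Subgroup.center G) :
    Commute x y ↔ part φ x = part φ y := by
  cases hxp : pr φ x with
  | r j =>
    cases hyp : pr φ y with
    | r k =>
      rw [part_r φ hxp, part_r φ hyp]
      exact ⟨fun _ => rfl, fun _ => rot_comm φ ha₀ hxp hyp⟩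
    | sr i =>
      rw [part_r φ hxp, part_sr φ hyp]
      constructor
      · intro hc
        exact absurd hc (rot_not_comm_sr φ ha₀ hxp hx hyp)
      · intro hc
        exact absurd hc.symm (part_sr_ne_last (i := i))
  | sr i =>
    cases hyp : pr φ y with
    | r k =>
      rw [part_sr φ hxp, part_r φ hyp]
      constructor
      · intro hc
        exact absurd hc.symm (rot_not_comm_sr φ ha₀ hyp hy hxp)
      · intro hc
        exact absurd hc (part_sr_ne_last (i := i))
    | sr k =>
      rw [part_sr φ hxp, part_sr φ hyp]
      by_cases hik : i = k
      · subst hik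
        exact ⟨fun _ => rfl, fun _ => sr_comm φ hxp hyp⟩
      · constructor
        · intro hc
          exact absurd hc (sr_not_comm_sr φ ha₀ hxp hyp hik)
        · intro hc
          exact absurd (val_inj (by exact_mod_cast Fin.mk.inj_iff.mp hc)) hik

omit [NeZero m] in
lemma card_fiber_pr (d : DihedralGroup m) :
    Nat.card {x : G // pr φ x = d} = Nat.card (Subgroup.center G) := by
  obtain ⟨g₀, hg₀⟩ := pr_surj φ d
  refine Nat.card_congr ⟨fun x => ⟨g₀⁻¹ * x.1, ?_⟩, fun z => ⟨g₀ * z.1, ?_⟩, ?_, ?_⟩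
  · rw [← pr_eq_one_iff φ, map_mul, map_inv, hg₀, x.2]
    simp
  · rw [map_mul, hg₀, (pr_eq_one_iff φ z.1).mpr z.2, mul_one]
  · intro x; ext; simp
  · intro z; ext; simp

lemma card_fiber_part_sr {c : Fin (m+1)} (hc : (c : ℕ) < m) :
    Nat.card {x : G // x ∉ Subgroup.center G ∧ part φ x = c}
      = Nat.card (Subgroup.center G) := by
  rw [← card_fiber_pr φ (DihedralGroup.sr ((c : ℕ) : ZMod m))]
  apply Nat.card_congr
  apply Equiv.subtypeEquivRight
  intro x
  constructor
  · rintro ⟨hxc, hpart⟩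
    cases hxp : pr φ x with
    | r j =>
      exfalso
      have h1 : Fin.last m = c := (part_r φ hxp).symm.trans hpart
      have h2 : (c : ℕ) = m := by rw [← h1]; rfl
      omega
    | sr i =>
      have h1 : i.val = (c : ℕ) := by
        have h2 := (part_sr φ hxp).symm.trans hpart
        simpa [Fin.ext_iff] using h2
      congr 1
      apply val_inj
      rw [h1, ZMod.val_cast_of_lt hc]
  · intro hx
    have hxc : x ∉ Subgroup.center G := by
      rw [← pr_eq_one_iff φ, hx, DihedralGroup.one_def]
      intro h; cases h
    refine ⟨hxc, ?_⟩
    rw [part_sr φ hx]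
    ext
    simp [ZMod.val_cast_of_lt hc]

end NCAux

end MoreAux

/-- Laplacian spectrum of the non-commuting graph of a finite group
`G` with `G/Z(G) ≅ D_{2m}`, `m ≥ 2`. -/
theorem laplacian_spectrum_nc_graph_central_factor_dihedral
    (m : ℕ) (hm : 2 ≤ m) (G : Type*) [Group G] [Fintype G]
    (h : Nonempty ((G ⧸ Subgroup.center G) ≃* DihedralGroup m)) :
    ncCharpoly G =
      X *
      (X - C ((m : ℝ) * (Nat.card (Subgroup.center G) : ℝ))) ^
        ((m - 1) * Nat.card (Subgroup.center G) - 1) *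
      (X - C (2 * ((m : ℝ) - 1) * (Nat.card (Subgroup.center G) : ℝ))) ^
        (m * Nat.card (Subgroup.center G) - m) *
      (X - C ((2 * (m : ℝ) - 1) * (Nat.card (Subgroup.center G) : ℝ))) ^ m := by
  classical
  obtain ⟨φ⟩ := h
  haveI : NeZero m := ⟨by omega⟩
  haveI : Fact (1 < m) := ⟨hm⟩
  set Z := Subgroup.center G with hZ
  set n := Nat.card Z with hn
  have hn1 : 1 ≤ n := Nat.card_pos
  obtain ⟨a₀, ha₀⟩ := NCAux.pr_surj φ (DihedralGroup.r 1)
  have ha₀nc : a₀ ∉ Z := by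
    rw [hZ, ← NCAux.pr_eq_one_iff φ, ha₀, DihedralGroup.one_def]
    intro hcon
    have h1 : (1 : ZMod m) = 0 := DihedralGroup.r.inj hcon
    exact one_ne_zero h1
  have hsrnc : ∀ {x : G} {i : ZMod m}, NCAux.pr φ x = DihedralGroup.sr i → x ∉ Z := by
    intro x i hx
    rw [hZ, ← NCAux.pr_eq_one_iff φ, hx, DihedralGroup.one_def]
    intro h; cases h
  set V := {x : G // x ∉ Z} with hV
  haveI : Nonempty V := ⟨⟨a₀, ha₀nc⟩⟩
  set P : V → Fin (m+1) := fun v => NCAux.part φ v.1 with hP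
  -- cardinalities
  have hGcard : Nat.card G = 2 * m * n := by
    rw [hn, hZ, Subgroup.card_eq_card_quotient_mul_card_subgroup (Subgroup.center G)]
    congr 1
    rw [Nat.card_congr φ.toEquiv, DihedralGroup.nat_card]
  have hVcard : Nat.card V = (2 * m - 1) * n := by
    have h1 : Fintype.card V = Fintype.card G - Fintype.card {x : G // x ∈ Z} :=
      Fintype.card_subtype_compl _
    have h2 : Nat.card {x : G // x ∈ Z} = n := by rw [hn]
    rw [Nat.card_eq_fintype_card, h1, ← Nat.card_eq_fintype_card, ← Nat.card_eq_fintype_card,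
      h2, hGcard, Nat.sub_mul, one_mul]
  -- fibers
  have hfiber_eq : ∀ c : Fin (m+1), Nat.card {v : V // P v = c}
      = Nat.card {x : G // x ∉ Z ∧ NCAux.part φ x = c} := fun c =>
    Nat.card_congr (Equiv.subtypeSubtypeEquivSubtypeInter (fun x : G => x ∉ Z) (fun x : G => NCAux.part φ x = c))
  have hfib_sr : ∀ c : Fin (m+1), ((c:ℕ) < m) → Nat.card {v : V // P v = c} = n :=
    fun c hc => (hfiber_eq c).trans (NCAux.card_fiber_part_sr φ hc)
  have hsum : (∑ c : Fin (m+1), Nat.card {v : V // P v = c}) = Nat.card V := by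
    rw [Nat.card_congr (Equiv.sigmaFiberEquiv P).symm, Nat.card_eq_fintype_card,
      Fintype.card_sigma]
    exact Finset.sum_congr rfl (fun c _ => Nat.card_eq_fintype_card)
  have hfib_last : Nat.card {v : V // P v = Fin.last m} = (m-1) * n := by
    have h1 := hsum
    rw [Fin.sum_univ_castSucc] at h1
    have h2 : ∀ i : Fin m, Nat.card {v : V // P v = Fin.castSucc i} = n :=
      fun i => hfib_sr _ (by simpa using i.isLt)
    rw [Finset.sum_congr rfl (fun i _ => h2 i), Finset.sum_const, Finset.card_univ,
      Fintype.card_fin, smul_eq_mul, hVcard] at h1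
    have h3 : (2*m - 1) * n = m * n + (m-1) * n := by
      rw [show 2*m-1 = m + (m-1) by omega, Nat.add_mul]
    omega
  -- surjectivity of the partition map
  have hPsurj : Function.Surjective P := by
    intro c
    by_cases hc : (c : ℕ) < m
    · obtain ⟨x, hx⟩ := NCAux.pr_surj φ (DihedralGroup.sr ((c:ℕ) : ZMod m))
      refine ⟨⟨x, hsrnc hx⟩, ?_⟩
      show NCAux.part φ x = c
      rw [NCAux.part_sr φ hx]
      ext
      simp [ZMod.val_cast_of_lt hc]
    · refine ⟨⟨a₀, ha₀nc⟩, ?_⟩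
      show NCAux.part φ a₀ = c
      rw [NCAux.part_r φ ha₀]
      have : (c : ℕ) = m := by omega
      ext
      simp [Fin.last, this]
  -- adjacency
  have hadj : ∀ v w : V, (nonCommGraph G).Adj v w ↔ ¬ (P v = P w) := by
    intro v w
    show ¬ Commute (v : G) (w : G) ↔ _
    rw [NCAux.commute_iff_part φ ha₀ v.2 w.2]
  -- the entries of the Laplacian
  have hL : ∀ v w : V, (ncLap G) v w =
      (if v = w then ((Nat.card V : ℝ) - (Nat.card {u : V // P u = P v} : ℝ)) else 0)
      - (if P v = P w then 0 else 1) := by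
    intro v w
    unfold ncLap SimpleGraph.lapMatrix SimpleGraph.degMatrix
    rw [Matrix.sub_apply]
    congr 1
    · by_cases hvw : v = w
      · subst hvw
        rw [Matrix.diagonal_apply_eq, if_pos rfl]
        rw [← SimpleGraph.card_neighborSet_eq_degree]
        have e1 : Nat.card ((nonCommGraph G).neighborSet v) = Nat.card {u : V // ¬ (P u = P v)} := by
          apply Nat.card_congr
          apply Equiv.subtypeEquivRight
          intro u
          rw [SimpleGraph.mem_neighborSet, hadj]
          exact ⟨fun hne => fun hh => hne hh.symm, fun hne => fun hh => hne hh.symm⟩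
        have e2 : Nat.card {u : V // ¬ (P u = P v)}
            = Nat.card V - Nat.card {u : V // P u = P v} := by
          rw [Nat.card_eq_fintype_card, Nat.card_eq_fintype_card, Nat.card_eq_fintype_card]
          exact Fintype.card_subtype_compl _
        have e4 : Nat.card {u : V // P u = P v} ≤ Nat.card V := by
          rw [Nat.card_eq_fintype_card, Nat.card_eq_fintype_card]
          exact Fintype.card_subtype_le _
        simp only [Fintype.card_eq_nat_card]
        rw [e1, e2]
        push_cast [Nat.cast_sub e4]
        ring
      · rw [Matrix.diagonal_apply_ne _ hvw, if_neg hvw]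
    · rw [SimpleGraph.adjMatrix_apply]
      by_cases hPvw : P v = P w
      · rw [if_pos hPvw, if_neg (by rw [hadj]; exact fun hh => hh hPvw)]
      · rw [if_neg hPvw, if_pos ((hadj v w).mpr hPvw)]
  -- apply the generic multipartite computation
  have key := multipartite_charpoly_s4 P hPsurj (ncLap G) hL
  have hcp : ∀ (ft1 ft2 : Fintype V) (d1 d2 : DecidableEq V) (M : Matrix V V ℝ),
      @Matrix.charpoly ℝ _ V d1 ft1 M = @Matrix.charpoly ℝ _ V d2 ft2 M := by
    intro ft1 ft2 d1 d2 M
    rw [Subsingleton.elim ft1 ft2, Subsingleton.elim d1 d2]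
  have hnc : ncCharpoly G = (ncLap G).charpoly := by
    unfold ncCharpoly
    exact hcp _ _ _ _ _
  rw [hnc, key]
  -- now rewrite cardinalities
  have hcV : ((Nat.card V : ℕ) : ℝ) = (2 * (m:ℝ) - 1) * (n:ℝ) := by
    rw [hVcard]
    push_cast [Nat.cast_sub (by omega : 1 ≤ 2*m)]
    ring
  have hsplitprod : ∏ c : Fin (m+1),
      (X - C ((Nat.card V : ℝ) - (Nat.card {u : V // P u = c} : ℝ)))
        ^ (Nat.card {u : V // P u = c} - 1)
      = (X - C (2 * ((m:ℝ) - 1) * (n:ℝ))) ^ (m * n - m)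
        * (X - C ((m : ℝ) * (n : ℝ))) ^ ((m - 1) * n - 1) := by
    rw [Fin.prod_univ_castSucc]
    have hfac : ∀ i : Fin m,
        (X - C ((Nat.card V : ℝ) - (Nat.card {u : V // P u = Fin.castSucc i} : ℝ)))
          ^ (Nat.card {u : V // P u = Fin.castSucc i} - 1)
        = (X - C (2 * ((m:ℝ) - 1) * (n:ℝ))) ^ (n - 1) := by
      intro i
      have h1 : Nat.card {u : V // P u = Fin.castSucc i} = n :=
        hfib_sr _ (by simpa using i.isLt)
      rw [h1, hcV]
      congr 2
      push_cast
      ring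
    rw [Finset.prod_congr rfl (fun i _ => hfac i), Finset.prod_const, Finset.card_univ,
      Fintype.card_fin, ← pow_mul]
    have h2 : Nat.card {u : V // P u = Fin.last m} = (m - 1) * n := hfib_last
    rw [h2, hcV]
    have h3 : (n - 1) * m = m * n - m := by
      rw [Nat.sub_mul, one_mul, Nat.mul_comm n m]
    rw [h3]
    congr 3
    push_cast [Nat.cast_sub (by omega : 1 ≤ m)]
    ring
  rw [hsplitprod, hcV]
  have h4 : Nat.card (Fin (m+1)) - 1 = m := by simp
  rw [h4]
  ring
end

section
/- Let n ≥ 2 and let Q_{4n} = ⟨x, y : y^{2n} = 1, x² = yⁿ, xyx⁻¹ = y⁻¹⟩ be the generalized quaternion group of order 4n. Then the Laplacian spectrum of the non-commuting graph 𝒜_{Q_{4n}} is {0^1, (2n)^{2n − 3}, (4n − 4)^n, (4n − 2)^n}. -/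
open Polynomial

open Polynomial QuaternionGroup


open Polynomial QuaternionGroup

section QGfacts

variable {n : ℕ}

lemma natCast_nn_eq_zero (hn : 2 ≤ n) :
    ((n : ZMod (2 * n)) + (n : ZMod (2 * n))) = 0 := by
  rw [← Nat.cast_add]
  exact (ZMod.natCast_eq_zero_iff _ _).mpr ⟨1, by ring⟩

lemma two_mul_eq_zero_iff (hn : 2 ≤ n) (i : ZMod (2 * n)) :
    i + i = 0 ↔ i = 0 ∨ i = (n : ZMod (2 * n)) := by
  haveI : NeZero (2 * n) := ⟨by omega⟩
  constructor
  · intro h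
    have hi : ((i.val : ℕ) : ZMod (2 * n)) = i := ZMod.natCast_rightInverse i
    have hv : i.val < 2 * n := ZMod.val_lt i
    rw [← hi, ← Nat.cast_add, ZMod.natCast_eq_zero_iff] at h
    rw [show i.val + i.val = 2 * i.val by ring] at h
    have hdvd : n ∣ i.val := (Nat.mul_dvd_mul_iff_left (by norm_num : 0 < 2)).mp h
    rcases hdvd with ⟨c, hc⟩
    have hc2 : n * c < n * 2 := by omega
    have hclt : c < 2 := lt_of_mul_lt_mul_left hc2 (Nat.zero_le n)
    interval_cases c
    · left; rw [← hi]; simp [hc]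
    · right; rw [← hi, hc]; simp
  · rintro (rfl | rfl)
    · simp
    · exact natCast_nn_eq_zero hn

lemma two_ne_zero_zmod (hn : 2 ≤ n) : ((2 : ℕ) : ZMod (2 * n)) ≠ 0 := by
  intro h
  rw [ZMod.natCast_eq_zero_iff] at h
  exact absurd (Nat.le_of_dvd (by omega) h) (by omega)

lemma commute_a_a (i j : ZMod (2 * n)) : Commute (a i : QuaternionGroup n) (a j) := by
  unfold Commute SemiconjBy
  simp [add_comm]

lemma commute_a_xa_iff (hn : 2 ≤ n) (i j : ZMod (2 * n)) :
    Commute (a i : QuaternionGroup n) (xa j) ↔ i = 0 ∨ i = (n : ZMod (2 * n)) := by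
  unfold Commute SemiconjBy
  rw [a_mul_xa, xa_mul_a, xa.injEq, ← two_mul_eq_zero_iff hn]
  constructor <;> intro h <;> linear_combination -h

lemma commute_xa_xa_iff (hn : 2 ≤ n) (i j : ZMod (2 * n)) :
    Commute (xa i : QuaternionGroup n) (xa j) ↔ j = i ∨ j = i + (n : ZMod (2 * n)) := by
  unfold Commute SemiconjBy
  rw [xa_mul_xa, xa_mul_xa, a.injEq]
  rw [show (j = i ∨ j = i + n) ↔ (j - i = 0 ∨ j - i = (n : ZMod (2*n))) by
    constructor
    · rintro (rfl | rfl) <;> simp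
    · rintro (h | h)
      · left; linear_combination h
      · right; linear_combination h]
  rw [← two_mul_eq_zero_iff hn]
  constructor <;> intro h <;> linear_combination h

lemma mem_center_iff (hn : 2 ≤ n) {g : QuaternionGroup n} :
    g ∈ Subgroup.center (QuaternionGroup n) ↔ g = a 0 ∨ g = a (n : ZMod (2 * n)) := by
  constructor
  · intro hg
    rcases g with i | i
    · have h1 := (Subgroup.mem_center_iff.mp hg) (xa 0)
      rw [xa_mul_a, a_mul_xa, xa.injEq] at h1
      have : i = 0 ∨ i = (n : ZMod (2*n)) := by
        rw [← two_mul_eq_zero_iff hn]; linear_combination h1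
      rcases this with rfl | rfl
      · exact Or.inl rfl
      · exact Or.inr rfl
    · exfalso
      have h1 := (Subgroup.mem_center_iff.mp hg) (a 1)
      rw [a_mul_xa, xa_mul_a, xa.injEq] at h1
      have h2 : ((2 : ℕ) : ZMod (2*n)) = 0 := by push_cast; linear_combination -h1
      exact two_ne_zero_zmod hn h2
  · have key : ∀ j : ZMod (2*n), j + j = 0 → (a j : QuaternionGroup n) ∈
        Subgroup.center (QuaternionGroup n) := by
      intro j hj
      rw [Subgroup.mem_center_iff]
      rintro (k | k)
      · simp [add_comm]
      · rw [xa_mul_a, a_mul_xa, xa.injEq]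
        linear_combination hj
    rintro (rfl | rfl)
    · exact key 0 (by simp)
    · exact key _ (natCast_nn_eq_zero hn)

end QGfacts


section Idx

/-- Index type for non-central `a i`. -/
abbrev QT1 (n : ℕ) := {i : ZMod (2*n) // i ≠ 0 ∧ i ≠ (n : ZMod (2*n))}

/-- Index type for the vertices of the non-commuting graph of `Q_{4n}`. -/
abbrev QIdx (n : ℕ) := QT1 n ⊕ (Fin n ⊕ Fin n)

variable {n : ℕ}

lemma valA (hn : 2 ≤ n) (k : Fin n) : ((k : ℕ) : ZMod (2*n)).val = (k : ℕ) :=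
  ZMod.val_cast_of_lt (by omega)

lemma valB (hn : 2 ≤ n) (k : Fin n) :
    (((k : ℕ) : ZMod (2*n)) + (n : ZMod (2*n))).val = (k : ℕ) + n := by
  rw [← Nat.cast_add]
  exact ZMod.val_cast_of_lt (by omega)

variable {G : Type*} [Group G]

lemma center_transport (e : G ≃* QuaternionGroup n) (x : G) :
    x ∈ Subgroup.center G ↔ e x ∈ Subgroup.center (QuaternionGroup n) := by
  simp only [Subgroup.mem_center_iff]
  constructor
  · intro h g
    obtain ⟨y, rfl⟩ := e.surjective g
    rw [← map_mul, ← map_mul, h]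
  · intro h g
    apply e.injective
    rw [map_mul, map_mul, h (e g)]

lemma symm_not_center (e : G ≃* QuaternionGroup n) {q : QuaternionGroup n}
    (hq : q ∉ Subgroup.center (QuaternionGroup n)) :
    e.symm q ∉ Subgroup.center G := fun hx =>
  hq (by simpa using (center_transport e (e.symm q)).mp hx)

lemma not_center_a (hn : 2 ≤ n) {i : ZMod (2*n)} (h1 : i ≠ 0) (h2 : i ≠ (n : ZMod (2*n))) :
    (a i : QuaternionGroup n) ∉ Subgroup.center (QuaternionGroup n) := by
  rw [mem_center_iff hn]
  rintro (h | h)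
  · exact h1 (by injection h)
  · exact h2 (by injection h)

lemma not_center_xa (hn : 2 ≤ n) (i : ZMod (2*n)) :
    (xa i : QuaternionGroup n) ∉ Subgroup.center (QuaternionGroup n) := by
  rw [mem_center_iff hn]
  rintro (h | h) <;> cases h

/-- The vertex parametrisation. -/
def vmap (hn : 2 ≤ n) (e : G ≃* QuaternionGroup n) :
    QIdx n → {x : G // x ∉ Subgroup.center G}
  | Sum.inl ⟨i, h⟩ => ⟨e.symm (a i), symm_not_center e (not_center_a hn h.1 h.2)⟩
  | Sum.inr (Sum.inl k) => ⟨e.symm (xa ((k : ℕ) : ZMod (2*n))),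
      symm_not_center e (not_center_xa hn _)⟩
  | Sum.inr (Sum.inr k) => ⟨e.symm (xa (((k : ℕ) : ZMod (2*n)) + (n : ZMod (2*n)))),
      symm_not_center e (not_center_xa hn _)⟩

lemma vmap_bijective (hn : 2 ≤ n) (e : G ≃* QuaternionGroup n) :
    Function.Bijective (vmap hn e) := by
  constructor
  · rintro (⟨i, hi⟩ | k | k) (⟨j, hj⟩ | l | l) h <;>
      simp only [vmap, Subtype.mk.injEq, EmbeddingLike.apply_eq_iff_eq] at h
    · exact congrArg Sum.inl (Subtype.ext (by injection h))
    · exact absurd h (by simp)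
    · exact absurd h (by simp)
    · exact absurd h (by simp)
    · have h2 : ((k:ℕ) : ZMod (2*n)) = ((l:ℕ) : ZMod (2*n)) := by injection h
      have h' := congrArg ZMod.val h2
      rw [valA hn, valA hn] at h'
      exact congrArg _ (congrArg _ (Fin.ext h'))
    · exfalso
      have h2 : ((k:ℕ) : ZMod (2*n)) = ((l:ℕ) : ZMod (2*n)) + (n : ZMod (2*n)) := by
        injection h
      have h' := congrArg ZMod.val h2
      rw [valA hn, valB hn] at h'
      omega
    · exact absurd h (by simp)
    · exfalso
      have h2 : ((k:ℕ) : ZMod (2*n)) + (n : ZMod (2*n)) = ((l:ℕ) : ZMod (2*n)) := by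
        injection h
      have h' := congrArg ZMod.val h2
      rw [valA hn, valB hn] at h'
      omega
    · have h2 : ((k:ℕ) : ZMod (2*n)) + (n : ZMod (2*n))
          = ((l:ℕ) : ZMod (2*n)) + (n : ZMod (2*n)) := by injection h
      have h' := congrArg ZMod.val h2
      rw [valB hn, valB hn] at h'
      exact congrArg _ (congrArg _ (Fin.ext (by omega)))
  · rintro ⟨x, hx⟩
    have hx' : e x ∉ Subgroup.center (QuaternionGroup n) := by
      rw [← center_transport e]; exact hx
    haveI : NeZero (2*n) := ⟨by omega⟩
    rcases hq : e x with i | i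
    · have hi : i ≠ 0 ∧ i ≠ (n : ZMod (2*n)) := by
        rw [hq, mem_center_iff hn] at hx'
        push_neg at hx'
        exact ⟨fun h => hx'.1 (by rw [h]), fun h => hx'.2 (by rw [h])⟩
      refine ⟨Sum.inl ⟨i, hi⟩, ?_⟩
      refine Subtype.ext ?_
      show e.symm (a i) = x
      rw [← hq]; exact e.symm_apply_apply x
    · by_cases hv : i.val < n
      · refine ⟨Sum.inr (Sum.inl ⟨i.val, hv⟩), ?_⟩
        refine Subtype.ext ?_
        have h2 : ((i.val : ℕ) : ZMod (2*n)) = i := ZMod.natCast_rightInverse i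
        show e.symm (xa _) = x
        rw [h2, ← hq]; exact e.symm_apply_apply x
      · have hv2 : i.val < 2*n := ZMod.val_lt i
        refine ⟨Sum.inr (Sum.inr ⟨i.val - n, by omega⟩), ?_⟩
        refine Subtype.ext ?_
        have h2 : (((i.val - n : ℕ) : ZMod (2*n)) + (n : ZMod (2*n))) = i := by
          rw [← Nat.cast_add, show i.val - n + n = i.val by omega]
          exact ZMod.natCast_rightInverse i
        show e.symm (xa _) = x
        rw [h2, ← hq]; exact e.symm_apply_apply x

/-- The vertex equivalence. -/
noncomputable def veq (hn : 2 ≤ n) (e : G ≃* QuaternionGroup n) :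
    QIdx n ≃ {x : G // x ∉ Subgroup.center G} :=
  Equiv.ofBijective _ (vmap_bijective hn e)

@[simp] lemma veq_apply (hn : 2 ≤ n) (e : G ≃* QuaternionGroup n) (i : QIdx n) :
    veq hn e i = vmap hn e i := rfl

end Idx

section Graph

/-- Projection of the xa-indices. -/
def bpi {n : ℕ} : Fin n ⊕ Fin n → Fin n := Sum.elim id id

/-- The underlying quaternion index of an xa-index. -/
def xelt (n : ℕ) : Fin n ⊕ Fin n → ZMod (2*n)
  | Sum.inl k => ((k : ℕ) : ZMod (2*n))
  | Sum.inr k => ((k : ℕ) : ZMod (2*n)) + (n : ZMod (2*n))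

variable {n : ℕ}

lemma xelt_inj (hn : 2 ≤ n) : Function.Injective (xelt n) := by
  rintro (k | k) (l | l) h <;> have h' := congrArg ZMod.val h <;>
    simp only [xelt, valA hn, valB hn] at h' <;>
    first
    | (exact congrArg _ (Fin.ext (by omega)))
    | omega

lemma xelt_add (hn : 2 ≤ n) (b : Fin n ⊕ Fin n) :
    xelt n b + (n : ZMod (2*n)) = xelt n b.swap := by
  cases b with
  | inl k => rfl
  | inr k =>
    show ((k : ℕ) : ZMod (2*n)) + (n : ZMod (2*n)) + (n : ZMod (2*n)) = _
    rw [add_assoc, natCast_nn_eq_zero hn, add_zero]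
    rfl

lemma bpi_swap (b : Fin n ⊕ Fin n) : bpi b.swap = bpi b := by cases b <;> rfl

lemma eq_or_swap_iff (b b' : Fin n ⊕ Fin n) :
    (b' = b ∨ b' = b.swap) ↔ bpi b' = bpi b := by
  cases b <;> cases b' <;> simp [bpi, Sum.swap, Fin.ext_iff]

variable {G : Type*} [Group G] [Fintype G]
  [DecidablePred (fun x : G => x ∉ Subgroup.center G)]
  [DecidableRel (nonCommGraph G).Adj]

lemma commute_symm_iff (e : G ≃* QuaternionGroup n) (u v : QuaternionGroup n) :
    Commute (e.symm u : G) (e.symm v) ↔ Commute u v := by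
  constructor
  · intro h
    have h2 : e (e.symm u * e.symm v) = e (e.symm v * e.symm u) := congrArg e h
    simpa [map_mul, commute_iff_eq] using h2
  · intro h
    have h2 : e.symm (u * v) = e.symm (v * u) := congrArg e.symm h
    simpa [map_mul, commute_iff_eq] using h2

lemma vmap_eq_iff (hn : 2 ≤ n) (e : G ≃* QuaternionGroup n)
    (u v : QuaternionGroup n) (h1 : e.symm u ∉ Subgroup.center G)
    (h2 : e.symm v ∉ Subgroup.center G) :
    (⟨e.symm u, h1⟩ : {x : G // x ∉ Subgroup.center G}) = ⟨e.symm v, h2⟩ ↔ u = v := by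
  rw [Subtype.mk.injEq]
  exact ⟨fun h => e.symm.injective h, fun h => congrArg _ h⟩

lemma not_adj_aa (hn : 2 ≤ n) (e : G ≃* QuaternionGroup n) (t t' : QT1 n) :
    ¬ (nonCommGraph G).Adj (vmap hn e (Sum.inl t)) (vmap hn e (Sum.inl t')) := by
  obtain ⟨i, hi⟩ := t; obtain ⟨j, hj⟩ := t'
  show ¬ ¬ Commute (e.symm (QuaternionGroup.a i) : G) (e.symm (QuaternionGroup.a j))
  rw [commute_symm_iff]
  exact not_not_intro (commute_a_a i j)

lemma vmap_inr (hn : 2 ≤ n) (e : G ≃* QuaternionGroup n) (b : Fin n ⊕ Fin n) :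
    vmap hn e (Sum.inr b)
      = ⟨e.symm (QuaternionGroup.xa (xelt n b)), symm_not_center e (not_center_xa hn _)⟩ := by
  cases b <;> rfl

lemma adj_ax (hn : 2 ≤ n) (e : G ≃* QuaternionGroup n) (t : QT1 n) (b : Fin n ⊕ Fin n) :
    (nonCommGraph G).Adj (vmap hn e (Sum.inl t)) (vmap hn e (Sum.inr b)) := by
  obtain ⟨i, hi⟩ := t
  rw [vmap_inr hn e]
  show ¬ Commute (e.symm (QuaternionGroup.a i) : G) (e.symm (QuaternionGroup.xa (xelt n b)))
  rw [commute_symm_iff, commute_a_xa_iff hn]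
  rintro (h | h)
  · exact hi.1 h
  · exact hi.2 h

lemma adj_xa (hn : 2 ≤ n) (e : G ≃* QuaternionGroup n) (t : QT1 n) (b : Fin n ⊕ Fin n) :
    (nonCommGraph G).Adj (vmap hn e (Sum.inr b)) (vmap hn e (Sum.inl t)) :=
  ((nonCommGraph G).adj_comm _ _).mp (adj_ax hn e t b)

lemma adj_xx_iff (hn : 2 ≤ n) (e : G ≃* QuaternionGroup n) (b b' : Fin n ⊕ Fin n) :
    (nonCommGraph G).Adj (vmap hn e (Sum.inr b)) (vmap hn e (Sum.inr b'))
      ↔ bpi b ≠ bpi b' := by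
  rw [vmap_inr hn e, vmap_inr hn e]
  show ¬ Commute (e.symm _ : G) (e.symm _) ↔ _
  rw [commute_symm_iff, commute_xa_xa_iff hn, xelt_add hn b]
  rw [show (xelt n b' = xelt n b ∨ xelt n b' = xelt n b.swap)
      ↔ (b' = b ∨ b' = b.swap) by
    constructor
    · rintro (h | h)
      · exact Or.inl (xelt_inj hn h)
      · exact Or.inr (xelt_inj hn h)
    · rintro (rfl | rfl) <;> simp]
  rw [eq_or_swap_iff]
  exact ⟨fun h h2 => h h2.symm, fun h h2 => h h2.symm⟩

lemma zero_ne_n (hn : 2 ≤ n) : (0 : ZMod (2*n)) ≠ (n : ZMod (2*n)) := by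
  haveI : NeZero (2*n) := ⟨by omega⟩
  intro h
  have h' := congrArg ZMod.val h
  rw [ZMod.val_zero, ZMod.val_cast_of_lt (by omega)] at h'
  omega

lemma card_QT1 [NeZero (2*n)] (hn : 2 ≤ n) : Fintype.card (QT1 n) = 2*n - 2 := by
  have hcompl := Fintype.card_subtype_compl (p := fun i : ZMod (2*n) =>
    i = 0 ∨ i = (n : ZMod (2*n)))
  have h2 : Fintype.card (QT1 n)
      = Fintype.card {i : ZMod (2*n) // ¬(i = 0 ∨ i = (n : ZMod (2*n)))} :=
    Fintype.card_congr (Equiv.subtypeEquivRight (fun i => by tauto))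
  have h3 : Fintype.card {i : ZMod (2*n) // i = 0 ∨ i = (n : ZMod (2*n))} = 2 := by
    rw [Fintype.card_subtype]
    have : Finset.univ.filter (fun i : ZMod (2*n) => i = 0 ∨ i = (n : ZMod (2*n)))
        = {0, (n : ZMod (2*n))} := by
      ext x
      simp [Finset.mem_insert]
    rw [this, Finset.card_insert_of_notMem (by simp [zero_ne_n hn]), Finset.card_singleton]
  rw [h2, hcompl, h3, ZMod.card]

end Graph
section Deg

variable {n : ℕ} {G : Type*} [Group G] [Fintype G] [DecidableEq G]
  [DecidablePred (fun x : G => x ∉ Subgroup.center G)]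
  [DecidableRel (nonCommGraph G).Adj]

@[simp] lemma bpi_inl (k : Fin n) : bpi (Sum.inl k) = k := rfl
@[simp] lemma bpi_inr (k : Fin n) : bpi (Sum.inr k) = k := rfl

lemma sum_ite_ne (c : Fin n) : ∑ k : Fin n, (if c ≠ k then (1:ℝ) else 0) = (n:ℝ) - 1 := by
  have h : ∀ k : Fin n, (if c ≠ k then (1:ℝ) else 0) = 1 - (if c = k then 1 else 0) := by
    intro k; by_cases h : c = k <;> simp [h]
  rw [Finset.sum_congr rfl (fun k _ => h k), Finset.sum_sub_distrib]
  simp [Finset.sum_ite_eq]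

lemma deg_a [NeZero (2*n)] (hn : 2 ≤ n) (e : G ≃* QuaternionGroup n) (t : QT1 n) :
    (((nonCommGraph G).degree (vmap hn e (Sum.inl t)) : ℕ) : ℝ) = 2*(n:ℝ) := by
  classical
  rw [SimpleGraph.degree_eq_sum_if_adj]
  rw [← Equiv.sum_comp (veq hn e)
    (fun j => if (nonCommGraph G).Adj (vmap hn e (Sum.inl t)) j then (1:ℝ) else 0)]
  simp only [veq_apply]
  rw [Fintype.sum_sum_type]
  erw [Finset.sum_congr rfl (fun t' _ => if_neg (not_adj_aa hn e t t')),
    Finset.sum_congr rfl (fun b _ => if_pos (adj_ax hn e t b))]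
  simp only [Finset.sum_const, Finset.card_univ, Fintype.card_sum, Fintype.card_fin,
    nsmul_eq_mul, Finset.sum_const_zero, zero_add, mul_one]
  push_cast
  ring

lemma deg_x [NeZero (2*n)] (hn : 2 ≤ n) (e : G ≃* QuaternionGroup n) (b : Fin n ⊕ Fin n) :
    (((nonCommGraph G).degree (vmap hn e (Sum.inr b)) : ℕ) : ℝ) = 4*(n:ℝ) - 4 := by
  classical
  rw [SimpleGraph.degree_eq_sum_if_adj]
  rw [← Equiv.sum_comp (veq hn e)
    (fun j => if (nonCommGraph G).Adj (vmap hn e (Sum.inr b)) j then (1:ℝ) else 0)]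
  simp only [veq_apply]
  rw [Fintype.sum_sum_type]
  erw [Finset.sum_congr rfl (fun t' _ => if_pos (adj_xa hn e t' b))]
  have hb : ∀ b' : Fin n ⊕ Fin n,
      (if (nonCommGraph G).Adj (vmap hn e (Sum.inr b)) (vmap hn e (Sum.inr b'))
        then (1:ℝ) else 0) = if bpi b ≠ bpi b' then (1:ℝ) else 0 := by
    intro b'
    by_cases h : bpi b = bpi b'
    · rw [if_neg (by rw [adj_xx_iff hn e]; simpa using h), if_neg (by simpa using h)]
    · rw [if_pos ((adj_xx_iff hn e b b').mpr h), if_pos h]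
  erw [Finset.sum_congr rfl (fun b' _ => hb b')]
  rw [show (∑ b' : Fin n ⊕ Fin n, if bpi b ≠ bpi b' then (1:ℝ) else 0)
    = ∑ k : Fin n, (if bpi b ≠ k then (1:ℝ) else 0)
      + ∑ k : Fin n, (if bpi b ≠ k then (1:ℝ) else 0) from Fintype.sum_sum_type _]
  rw [sum_ite_ne]
  simp only [Finset.sum_const, Finset.card_univ, card_QT1 hn, nsmul_eq_mul, mul_one]
  have : ((2*n-2 : ℕ) : ℝ) = 2*(n:ℝ) - 2 := by
    push_cast [Nat.cast_sub (by omega : 2 ≤ 2*n)]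
    ring
  rw [this]
  ring

lemma lapMatrix_apply' {V : Type*} [Fintype V] [DecidableEq V] (H : SimpleGraph V)
    [DecidableRel H.Adj] (u v : V) :
    H.lapMatrix ℝ u v
      = (if u = v then ((H.degree u : ℕ) : ℝ) else 0) - (if H.Adj u v then 1 else 0) := by
  simp only [SimpleGraph.lapMatrix, Matrix.sub_apply, SimpleGraph.degMatrix,
    Matrix.diagonal_apply, SimpleGraph.adjMatrix_apply]

/-- Model for the Laplacian matrix of the non-commuting graph of `Q_{4n}`. -/
def Lmodel (n : ℕ) : Matrix (QIdx n) (QIdx n) ℝ :=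
  Matrix.fromBlocks ((2*(n:ℝ)) • 1) (Matrix.of fun _ _ => -1) (Matrix.of fun _ _ => -1)
    (Matrix.of fun b1 b2 => if b1 = b2 then 4*(n:ℝ)-4 else if bpi b1 = bpi b2 then 0 else -1)

lemma reindex_lap_eq [NeZero (2*n)] (hn : 2 ≤ n) (e : G ≃* QuaternionGroup n) :
    Matrix.reindex (veq hn e).symm (veq hn e).symm ((nonCommGraph G).lapMatrix ℝ)
      = Lmodel n := by
  have hinj : Function.Injective (vmap hn e) := (vmap_bijective hn e).1
  ext i j
  rw [Matrix.reindex_apply, Matrix.submatrix_apply, Equiv.symm_symm, veq_apply, veq_apply,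
    lapMatrix_apply']
  rcases i with t | b <;> rcases j with t' | b'
  · rw [if_neg (not_adj_aa hn e t t'), sub_zero]
    simp only [hinj.eq_iff, Sum.inl.injEq]
    show _ = ((2*(n:ℝ)) • (1 : Matrix (QT1 n) (QT1 n) ℝ)) t t'
    by_cases h : t = t'
    · rw [if_pos h, deg_a hn e t]
      simp [Matrix.one_apply, h]
    · rw [if_neg h]
      simp [Matrix.one_apply, h]
  · rw [if_pos (adj_ax hn e t b'), if_neg (by simp [hinj.eq_iff])]
    show (0:ℝ) - 1 = Matrix.of (fun (_ : QT1 n) (_ : Fin n ⊕ Fin n) => (-1:ℝ)) t b'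
    simp
  · rw [if_pos (adj_xa hn e t' b), if_neg (by simp [hinj.eq_iff])]
    show (0:ℝ) - 1 = Matrix.of (fun (_ : Fin n ⊕ Fin n) (_ : QT1 n) => (-1:ℝ)) b t'
    simp
  · simp only [hinj.eq_iff, Sum.inr.injEq]
    show _ = Matrix.of (fun b1 b2 : Fin n ⊕ Fin n => if b1 = b2 then 4*(n:ℝ)-4
      else if bpi b1 = bpi b2 then 0 else -1) b b'
    by_cases h : b = b'
    · rw [if_pos h, if_neg (by rw [adj_xx_iff hn e, h]; simp), deg_x hn e b]
      simp [h]
    · rw [if_neg h]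
      by_cases h2 : bpi b = bpi b'
      · rw [if_neg (by rw [adj_xx_iff hn e]; simpa using h2)]
        simp [h, h2]
      · rw [if_pos ((adj_xx_iff hn e b b').mpr h2)]
        simp [h, h2]

end Deg
section DetLemma

open Matrix in
lemma det_smul_one_sub_all_ones {ι : Type*} [Fintype ι] [DecidableEq ι] [Nonempty ι]
    {K : Type*} [Field K] {c : K} (hc : c ≠ 0) :
    (c • (1 : Matrix ι ι K) - Matrix.of (fun _ _ => 1)).det
      = c^(Fintype.card ι - 1) * (c - Fintype.card ι) := by
  have hcr : ∀ i j : ι, ((Matrix.replicateCol Unit fun _ : ι => -c⁻¹)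
      * Matrix.replicateRow Unit fun _ : ι => (1:K)) i j = -c⁻¹ := by
    intro i j
    simp [Matrix.mul_apply]
  have key : c • (1 : Matrix ι ι K) - Matrix.of (fun _ _ => 1)
      = c • (1 + Matrix.replicateCol Unit (fun _ : ι => -c⁻¹) * Matrix.replicateRow Unit (fun _ : ι => (1:K))) := by
    ext i j
    simp only [Matrix.smul_apply, Matrix.sub_apply, Matrix.add_apply, Matrix.of_apply, hcr,
      smul_eq_mul]
    by_cases h : i = j <;> simp [h, Matrix.one_apply, mul_add, mul_inv_cancel₀ hc] <;> ring
  rw [key, Matrix.det_smul, Matrix.det_one_add_replicateCol_mul_replicateRow]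
  have hdot : ((fun _ : ι => (1:K)) ⬝ᵥ fun _ : ι => -c⁻¹) = -(Fintype.card ι * c⁻¹) := by
    simp [dotProduct, Finset.sum_const, Finset.card_univ]
  rw [hdot]
  have h1 : 1 ≤ Fintype.card ι := Fintype.card_pos
  have h2 : c ^ (Fintype.card ι) = c^(Fintype.card ι - 1) * c := by
    rw [← pow_succ]
    congr 1
    omega
  rw [h2]
  field_simp
  ring

end DetLemma
section Charpoly

variable {n : ℕ}

local notation "K" => FractionRing (Polynomial ℝ)

noncomputable def phiK : Polynomial ℝ →+* K := algebraMap (Polynomial ℝ) K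
noncomputable def psiK : ℝ →+* K := phiK.comp (Polynomial.C)

lemma phiK_inj : Function.Injective (phiK) := IsFractionRing.injective _ _

lemma xK_sub_psiK_ne (r : ℝ) : phiK X - psiK r ≠ 0 := by
  intro h
  have h2 : phiK (X - C r) = 0 := by
    rw [map_sub]
    exact h
  have h3 : (X - C r : Polynomial ℝ) = 0 := phiK_inj (by rw [h2, map_zero])
  exact Polynomial.X_sub_C_ne_zero r h3

lemma psiK_natCast (m : ℕ) : ((m : ℕ) : K) = psiK (m : ℝ) := by
  rw [map_natCast]

/-- The `N1` block. -/
noncomputable def N1 (n : ℕ) : Matrix (QT1 n) (QT1 n) K :=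
  (phiK X - psiK (2*(n:ℝ))) • 1 - Matrix.of (fun _ _ => 1)

/-- The `N2` block. -/
noncomputable def N2 (n : ℕ) : Matrix (Fin n ⊕ Fin n) (Fin n ⊕ Fin n) K :=
  Matrix.fromBlocks ((phiK X - psiK (4*(n:ℝ)-3)) • 1) (-1) (-1)
    ((phiK X - psiK (4*(n:ℝ)-3)) • 1)

/-- The block diagonal part. -/
noncomputable def NN (n : ℕ) : Matrix (QIdx n) (QIdx n) K :=
  Matrix.fromBlocks (N1 n) 0 0 (N2 n)

lemma phiK_C (r : ℝ) : phiK (Polynomial.C r) = psiK r := rfl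

lemma psiK_c34 : psiK (4*(n:ℝ)-3) = psiK (4*(n:ℝ)-4) + 1 := by
  rw [show (4*(n:ℝ)-3) = (4*(n:ℝ)-4) + 1 by ring, map_add, map_one]

lemma psiK_c32 : psiK (4*(n:ℝ)-2) = psiK (4*(n:ℝ)-3) + 1 := by
  rw [show (4*(n:ℝ)-2) = (4*(n:ℝ)-3) + 1 by ring, map_add, map_one]

lemma psiK_c12 [NeZero (2*n)] (hn : 2 ≤ n) :
    psiK (4*(n:ℝ)-2) = psiK (2*(n:ℝ)) + ((2*n-2 : ℕ) : K) := by
  rw [psiK_natCast, ← map_add]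
  congr 1
  push_cast [Nat.cast_sub (show 2 ≤ 2*n by omega)]
  ring

lemma claim1 [NeZero (2*n)] (hn : 2 ≤ n) :
    (Lmodel n).charmatrix.map (phiK) = NN n + Matrix.of (fun _ _ => (1:K)) := by
  ext i j
  rw [Matrix.map_apply, Matrix.add_apply, Matrix.of_apply]
  rcases i with t | b <;> rcases j with t' | b'
  · by_cases h : t = t'
    · subst h
      rw [Matrix.charmatrix_apply_eq, map_sub, phiK_C]
      simp only [Lmodel, NN, N1, Matrix.fromBlocks_apply₁₁, Matrix.smul_apply,
        Matrix.one_apply_eq, Matrix.sub_apply, Matrix.of_apply, smul_eq_mul, mul_one]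
      ring
    · rw [Matrix.charmatrix_apply_ne _ _ _ (by simp [h]), map_neg, phiK_C]
      simp only [Lmodel, NN, N1, Matrix.fromBlocks_apply₁₁, Matrix.smul_apply,
        Matrix.one_apply_ne h, Matrix.sub_apply, Matrix.of_apply, smul_eq_mul, mul_zero]
      rw [map_zero]
      ring
  · rw [Matrix.charmatrix_apply_ne _ _ _ (by simp), map_neg, phiK_C]
    simp only [Lmodel, NN, Matrix.fromBlocks_apply₁₂, Matrix.of_apply, Matrix.zero_apply]
    rw [show psiK (-1 : ℝ) = -1 by rw [map_neg, map_one]]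
    ring
  · rw [Matrix.charmatrix_apply_ne _ _ _ (by simp), map_neg, phiK_C]
    simp only [Lmodel, NN, Matrix.fromBlocks_apply₂₁, Matrix.of_apply, Matrix.zero_apply]
    rw [show psiK (-1 : ℝ) = -1 by rw [map_neg, map_one]]
    ring
  · rcases b with k | k <;> rcases b' with l | l <;> by_cases h : k = l
    · subst h
      rw [Matrix.charmatrix_apply_eq, map_sub, phiK_C]
      simp only [Lmodel, NN, N2, Matrix.fromBlocks_apply₂₂, Matrix.fromBlocks_apply₁₁,
        Matrix.of_apply, if_pos rfl, Matrix.smul_apply, Matrix.one_apply_eq, smul_eq_mul,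
        mul_one, eq_self_iff_true, if_true]
      rw [psiK_c34]
      ring
    · rw [Matrix.charmatrix_apply_ne _ _ _ (by simp [h]), map_neg, phiK_C]
      simp only [Lmodel, NN, N2, Matrix.fromBlocks_apply₂₂, Matrix.fromBlocks_apply₁₁,
        Matrix.of_apply, Sum.inl.injEq, if_neg h, bpi_inl, Matrix.smul_apply,
        Matrix.one_apply_ne h, smul_eq_mul, mul_zero]
      erw [if_neg h]
      rw [show psiK (-1 : ℝ) = -1 by rw [map_neg, map_one]]
      ring
    · subst h
      rw [Matrix.charmatrix_apply_ne _ _ _ (by simp), map_neg, phiK_C]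
      simp only [Lmodel, NN, N2, Matrix.fromBlocks_apply₂₂, Matrix.fromBlocks_apply₁₂,
        Matrix.of_apply, bpi_inl, bpi_inr, Matrix.neg_apply, Matrix.one_apply_eq]
      rw [if_neg (by simp)]
      simp only [eq_self_iff_true, if_true, map_zero]
      ring
    · rw [Matrix.charmatrix_apply_ne _ _ _ (by simp), map_neg, phiK_C]
      simp only [Lmodel, NN, N2, Matrix.fromBlocks_apply₂₂, Matrix.fromBlocks_apply₁₂,
        Matrix.of_apply, bpi_inl, bpi_inr, Matrix.neg_apply, Matrix.one_apply_ne h]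
      erw [if_neg (by simp), if_neg h]
      rw [show psiK (-1 : ℝ) = -1 by rw [map_neg, map_one]]
      ring
    · subst h
      rw [Matrix.charmatrix_apply_ne _ _ _ (by simp), map_neg, phiK_C]
      simp only [Lmodel, NN, N2, Matrix.fromBlocks_apply₂₂, Matrix.fromBlocks_apply₂₁,
        Matrix.of_apply, bpi_inl, bpi_inr, Matrix.neg_apply, Matrix.one_apply_eq]
      rw [if_neg (by simp)]
      simp only [eq_self_iff_true, if_true, map_zero]
      ring
    · rw [Matrix.charmatrix_apply_ne _ _ _ (by simp), map_neg, phiK_C]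
      simp only [Lmodel, NN, N2, Matrix.fromBlocks_apply₂₂, Matrix.fromBlocks_apply₂₁,
        Matrix.of_apply, bpi_inl, bpi_inr, Matrix.neg_apply, Matrix.one_apply_ne h]
      erw [if_neg (by simp), if_neg h]
      rw [show psiK (-1 : ℝ) = -1 by rw [map_neg, map_one]]
      ring
    · subst h
      rw [Matrix.charmatrix_apply_eq, map_sub, phiK_C]
      simp only [Lmodel, NN, N2, Matrix.fromBlocks_apply₂₂, Matrix.of_apply, if_pos rfl,
        Matrix.smul_apply, Matrix.one_apply_eq, smul_eq_mul, mul_one, eq_self_iff_true, if_true]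
      rw [psiK_c34]
      ring
    · rw [Matrix.charmatrix_apply_ne _ _ _ (by simp [h]), map_neg, phiK_C]
      simp only [Lmodel, NN, N2, Matrix.fromBlocks_apply₂₂, Matrix.of_apply, Sum.inr.injEq,
        if_neg h, bpi_inr, Matrix.smul_apply, Matrix.one_apply_ne h, smul_eq_mul, mul_zero]
      erw [if_neg h]
      rw [show psiK (-1 : ℝ) = -1 by rw [map_neg, map_one]]
      ring

lemma rowsum_smul_one {ι : Type*} [Fintype ι] [DecidableEq ι] (c : K) (i : ι) :
    ∑ j, (c • (1 : Matrix ι ι K)) i j = c := by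
  simp [Matrix.smul_apply, Matrix.one_apply, Finset.sum_ite_eq]

lemma rowsum_NN [NeZero (2*n)] (hn : 2 ≤ n) (i : QIdx n) :
    ∑ j, NN n i j = phiK X - psiK (4*(n:ℝ)-2) := by
  rcases i with t | b
  · rw [Fintype.sum_sum_type]
    simp only [NN, Matrix.fromBlocks_apply₁₁, Matrix.fromBlocks_apply₁₂, Matrix.zero_apply,
      Finset.sum_const_zero, add_zero, N1, Matrix.sub_apply, Matrix.of_apply]
    rw [Finset.sum_sub_distrib, rowsum_smul_one]
    simp only [Finset.sum_const, Finset.card_univ, card_QT1 hn, nsmul_eq_mul, mul_one]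
    rw [psiK_c12 hn]
    ring
  · rcases b with k | k
    · rw [Fintype.sum_sum_type]
      simp only [NN, Matrix.fromBlocks_apply₂₁, Matrix.zero_apply, Finset.sum_const_zero,
        zero_add, Matrix.fromBlocks_apply₂₂, N2]
      rw [Fintype.sum_sum_type]
      simp only [Matrix.fromBlocks_apply₁₁, Matrix.fromBlocks_apply₁₂]
      rw [rowsum_smul_one]
      simp only [Matrix.neg_apply, Matrix.one_apply, Finset.sum_neg_distrib]
      rw [Finset.sum_ite_eq]
      simp only [Finset.mem_univ, if_pos]
      rw [psiK_c32]
      ring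
    · rw [Fintype.sum_sum_type]
      simp only [NN, Matrix.fromBlocks_apply₂₁, Matrix.zero_apply, Finset.sum_const_zero,
        zero_add, Matrix.fromBlocks_apply₂₂, N2]
      rw [Fintype.sum_sum_type]
      simp only [Matrix.fromBlocks_apply₂₁, Matrix.fromBlocks_apply₂₂]
      rw [rowsum_smul_one]
      simp only [Matrix.neg_apply, Matrix.one_apply, Finset.sum_neg_distrib]
      rw [Finset.sum_ite_eq]
      simp only [Finset.mem_univ, if_pos]
      rw [psiK_c32]
      ring

lemma det_N1 [NeZero (2*n)] (hn : 2 ≤ n) :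
    (N1 n).det = (phiK X - psiK (2*(n:ℝ)))^(2*n-3) * (phiK X - psiK (4*(n:ℝ)-2)) := by
  haveI : Fact (1 < 2*n) := ⟨by omega⟩
  haveI : Nonempty (QT1 n) := by
    refine ⟨⟨(1 : ZMod (2*n)), one_ne_zero, ?_⟩⟩
    intro h
    have h' := congrArg ZMod.val h
    rw [ZMod.val_one, ZMod.val_cast_of_lt (by omega)] at h'
    omega
  have hc : (phiK X - psiK (2*(n:ℝ))) ≠ 0 := xK_sub_psiK_ne _
  rw [N1, det_smul_one_sub_all_ones hc, card_QT1 hn]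
  rw [show 2*n-2-1 = 2*n-3 by omega]
  congr 1
  rw [psiK_c12 hn]
  ring

lemma det_N2 [NeZero (2*n)] (hn : 2 ≤ n) :
    (N2 n).det = (phiK X - psiK (4*(n:ℝ)-4))^n * (phiK X - psiK (4*(n:ℝ)-2))^n := by
  have hβ : (phiK X - psiK (4*(n:ℝ)-3)) ≠ 0 := xK_sub_psiK_ne _
  haveI : Invertible ((phiK X - psiK (4*(n:ℝ)-3)) • (1 : Matrix (Fin n) (Fin n) K)) :=
    ⟨(phiK X - psiK (4*(n:ℝ)-3))⁻¹ • 1,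
      by rw [Matrix.smul_mul, Matrix.one_mul, smul_smul, inv_mul_cancel₀ hβ, one_smul],
      by rw [Matrix.smul_mul, Matrix.one_mul, smul_smul, mul_inv_cancel₀ hβ, one_smul]⟩
  rw [N2, Matrix.det_fromBlocks₁₁]
  have hinv : ⅟((phiK X - psiK (4*(n:ℝ)-3)) • (1 : Matrix (Fin n) (Fin n) K))
      = (phiK X - psiK (4*(n:ℝ)-3))⁻¹ • 1 :=
    invOf_eq_left_inv
      (by rw [Matrix.smul_mul, Matrix.one_mul, smul_smul, inv_mul_cancel₀ hβ, one_smul])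
  rw [hinv]
  have h2 : (-1 : Matrix (Fin n) (Fin n) K) * ((phiK X - psiK (4*(n:ℝ)-3))⁻¹ • 1) * (-1)
      = (phiK X - psiK (4*(n:ℝ)-3))⁻¹ • 1 := by
    simp
  rw [h2, ← sub_smul, Matrix.det_smul, Matrix.det_smul, Matrix.det_one, mul_one, mul_one,
    Fintype.card_fin, ← mul_pow]
  have h3 : (phiK X - psiK (4*(n:ℝ)-3))
        * ((phiK X - psiK (4*(n:ℝ)-3)) - (phiK X - psiK (4*(n:ℝ)-3))⁻¹)
      = (phiK X - psiK (4*(n:ℝ)-4)) * (phiK X - psiK (4*(n:ℝ)-2)) := by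
    rw [show phiK X - psiK (4*(n:ℝ)-4) = (phiK X - psiK (4*(n:ℝ)-3)) + 1 by
      rw [psiK_c34]; ring]
    rw [show phiK X - psiK (4*(n:ℝ)-2) = (phiK X - psiK (4*(n:ℝ)-3)) - 1 by
      rw [psiK_c32]; ring]
    rw [mul_sub, mul_inv_cancel₀ hβ]
    ring
  rw [h3, mul_pow]

lemma charpoly_Lmodel [NeZero (2*n)] (hn : 2 ≤ n) :
    (Lmodel n).charpoly
      = X * (X - C (2*(n:ℝ)))^(2*n-3) * (X - C (4*(n:ℝ)-4))^n * (X - C (4*(n:ℝ)-2))^n := by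
  apply phiK_inj
  rw [Matrix.charpoly, RingHom.map_det, RingHom.mapMatrix_apply, claim1 hn]
  set lam : K := phiK X - psiK (4*(n:ℝ)-2) with hlamdef
  have hlam : lam ≠ 0 := xK_sub_psiK_ne _
  -- J as rank one
  have hJ : Matrix.of (fun _ _ : QIdx n => (1:K))
      = NN n * (Matrix.replicateCol Unit (fun _ : QIdx n => lam⁻¹)
        * Matrix.replicateRow Unit (fun _ : QIdx n => (1:K))) := by
    ext i j
    rw [Matrix.mul_apply]
    simp only [Matrix.mul_apply, Matrix.replicateCol_apply, Matrix.replicateRow_apply, Finset.univ_unique,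
      Finset.sum_singleton, Matrix.of_apply, mul_one]
    rw [← Finset.sum_mul, rowsum_NN hn i, ← hlamdef, mul_inv_cancel₀ hlam]
  have hfact : NN n + Matrix.of (fun _ _ : QIdx n => (1:K))
      = NN n * (1 + Matrix.replicateCol Unit (fun _ : QIdx n => lam⁻¹)
        * Matrix.replicateRow Unit (fun _ : QIdx n => (1:K))) := by
    rw [Matrix.mul_add, Matrix.mul_one, hJ]
  rw [hfact, Matrix.det_mul, Matrix.det_one_add_replicateCol_mul_replicateRow]
  have hdot : (dotProduct (fun _ : QIdx n => (1:K)) (fun _ : QIdx n => lam⁻¹))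
      = psiK (4*(n:ℝ)-2) * lam⁻¹ := by
    rw [dotProduct]
    simp only [one_mul, Finset.sum_const, Finset.card_univ, nsmul_eq_mul]
    congr 1
    rw [show Fintype.card (QIdx n) = 4*n-2 by
      simp [Fintype.card_sum, card_QT1 hn, Fintype.card_fin]; omega]
    rw [psiK_natCast]
    congr 1
    push_cast [Nat.cast_sub (by omega : 2 ≤ 4*n)]
    ring
  rw [hdot]
  have hNN : (NN n).det = (N1 n).det * (N2 n).det := Matrix.det_fromBlocks_zero₂₁ _ _ _
  rw [hNN, det_N1 hn, det_N2 hn]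
  have hx : lam * (1 + psiK (4*(n:ℝ)-2) * lam⁻¹) = phiK X := by
    rw [mul_add, mul_one, mul_comm (psiK _) lam⁻¹, ← mul_assoc, mul_inv_cancel₀ hlam, one_mul,
      hlamdef]
    ring
  have hexp : phiK (X * (X - C (2*(n:ℝ)))^(2*n-3) * (X - C (4*(n:ℝ)-4))^n
      * (X - C (4*(n:ℝ)-2))^n)
      = phiK X * (phiK X - psiK (2*(n:ℝ)))^(2*n-3) * (phiK X - psiK (4*(n:ℝ)-4))^n
      * lam^n := by
    simp only [map_mul, map_pow, map_sub, hlamdef]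
    rfl
  rw [hexp]
  rw [show ((phiK X - psiK (2*(n:ℝ)))^(2*n-3) * lam)
      * ((phiK X - psiK (4*(n:ℝ)-4))^n * lam^n) * (1 + psiK (4*(n:ℝ)-2) * lam⁻¹)
      = (phiK X - psiK (2*(n:ℝ)))^(2*n-3) * (phiK X - psiK (4*(n:ℝ)-4))^n * lam^n
        * (lam * (1 + psiK (4*(n:ℝ)-2) * lam⁻¹)) from by ring]
  rw [hx]
  ring

end Charpoly
theorem charpoly_lap (n : ℕ) (hn : 2 ≤ n) (G : Type*) [Group G] [Fintype G] [DecidableEq G]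
    [DecidablePred (fun x : G => x ∉ Subgroup.center G)] [DecidableRel (nonCommGraph G).Adj]
    (e : G ≃* QuaternionGroup n) :
    ((nonCommGraph G).lapMatrix ℝ).charpoly = X * (X - C (2*(n:ℝ)))^(2*n-3)
      * (X - C (4*(n:ℝ)-4))^n * (X - C (4*(n:ℝ)-2))^n := by
  haveI : NeZero (2*n) := ⟨by omega⟩
  rw [← Matrix.charpoly_reindex (veq hn e).symm, reindex_lap_eq hn e, charpoly_Lmodel hn]

/-- Laplacian spectrum of the non-commuting graph of the generalized
quaternion group `Q_{4n}` of order `4n`, `n ≥ 2`. -/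
theorem laplacian_spectrum_nc_graph_generalized_quaternion
    (n : ℕ) (hn : 2 ≤ n) (G : Type*) [Group G] [Fintype G]
    (h : Nonempty (G ≃* QuaternionGroup n)) :
    ncCharpoly G =
      X *
      (X - C (2 * (n : ℝ))) ^ (2 * n - 3) *
      (X - C (4 * (n : ℝ) - 4)) ^ n *
      (X - C (4 * (n : ℝ) - 2)) ^ n := by
  obtain ⟨e⟩ := h
  unfold ncCharpoly ncLap
  exact @charpoly_lap n hn G _ _ (Classical.decEq G) (fun _ => Classical.dec _)
    (fun _ _ => Classical.dec _) e
end

section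
/- Let n ≥ 2, let F = GF(2^n) be the field with 2^n elements, and let ϑ be the Frobenius automorphism of F (ϑ(x) = x² for all x ∈ F). Let A(n, ϑ) be the group of all 3 × 3 lower unitriangular matrices U(a, b) over F with entry a in position (2,1), b in position (3,1), ϑ(a) in position (3,2), and 1's on the diagonal, for a, b ∈ F, under matrix multiplication. Then the Laplacian spectrum of the non-commuting graph 𝒜_{A(n, ϑ)} is {0^1, (2^{2n} − 2^{n+1})^{(2^n − 1)²}, (2^{2n} − 2^n)^{2^n − 2}}. -/
open Polynomial Matrix Finset

section DetTools
variable {R : Type*} [CommRing R] {β : Type*} [Fintype β] [DecidableEq β]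

def Pmat (b₀ : β) : Matrix β β R := Matrix.of fun x y => if y = b₀ then 1 else if x = y then 1 else 0

def Qmat (b₀ : β) : Matrix β β R :=
  Matrix.of fun x y => if y = b₀ then (if x = b₀ then 1 else -1) else if x = y then 1 else 0

lemma rowsum_Qmat (b₀ x : β) : ∑ y : β, (Qmat b₀ : Matrix β β R) x y = if x = b₀ then 1 else 0 := by
  simp only [Qmat, Matrix.of_apply]
  rw [← Finset.add_sum_erase _ _ (Finset.mem_univ b₀), if_pos rfl]
  have h : ∑ y ∈ Finset.univ.erase b₀,
      (if y = b₀ then (if x = b₀ then (1:R) else -1) else if x = y then 1 else 0)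
      = ∑ y ∈ Finset.univ.erase b₀, (if x = y then 1 else 0) :=
    Finset.sum_congr rfl fun y hy => by rw [if_neg (Finset.ne_of_mem_erase hy)]
  rw [h, Finset.sum_ite_eq]
  by_cases hx : x = b₀ <;> simp [hx]

lemma colsum_Pmat (b₀ z : β) :
    ∑ y : β, (Pmat b₀ : Matrix β β R) y z = if z = b₀ then (Fintype.card β : R) else 1 := by
  simp only [Pmat, Matrix.of_apply]
  by_cases hz : z = b₀
  · simp [hz, Finset.card_univ]
  · simp only [if_neg hz]
    rw [Finset.sum_ite_eq']
    simp

lemma Qmat_mul_Pmat (b₀ : β) : (Qmat b₀ : Matrix β β R) * Pmat b₀ = 1 := by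
  ext x z
  by_cases hz : z = b₀
  · subst hz
    rw [Matrix.mul_apply]
    simp only [Pmat, Matrix.of_apply, eq_self_iff_true, if_true, mul_one]
    rw [rowsum_Qmat (R := R) z x, Matrix.one_apply]
  · rw [Matrix.mul_apply]
    have h : ∀ y : β, (Qmat b₀ : Matrix β β R) x y * (Pmat b₀ : Matrix β β R) y z
        = if y = z then (Qmat b₀ : Matrix β β R) x y else 0 := by
      intro y
      simp only [Pmat, Matrix.of_apply, if_neg hz]
      by_cases hyz : y = z <;> simp [hyz]
    simp only [h]
    rw [Finset.sum_ite_eq']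
    simp only [Finset.mem_univ, if_true, Qmat, Matrix.of_apply, if_neg hz, Matrix.one_apply]

lemma Qmat_mul_const_mul_Pmat (b₀ : β) (c : R) :
    (Qmat b₀ : Matrix β β R) * (Matrix.of fun _ _ => c) * (Pmat b₀)
      = Matrix.of fun x z => (if x = b₀ then 1 else 0) * c *
          (if z = b₀ then (Fintype.card β : R) else 1) := by
  ext x z
  rw [Matrix.mul_apply]
  have h1 : ∀ y' : β, ((Qmat b₀ : Matrix β β R) * (Matrix.of (fun _ _ => c) : Matrix β β R)) x y'
      = (if x = b₀ then 1 else 0) * c := by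
    intro y'
    rw [Matrix.mul_apply]
    simp only [Matrix.of_apply]
    rw [← Finset.sum_mul, rowsum_Qmat]
  simp only [h1]
  rw [← Finset.mul_sum, colsum_Pmat]
  simp [mul_assoc]

lemma det_conj_eq (b₀ : β) (M : Matrix β β R) :
    ((Qmat b₀ : Matrix β β R) * M * Pmat b₀).det = M.det := by
  have h : (Qmat b₀ : Matrix β β R).det * (Pmat b₀ : Matrix β β R).det = 1 := by
    rw [← Matrix.det_mul, Qmat_mul_Pmat, Matrix.det_one]
  rw [Matrix.det_mul, Matrix.det_mul]
  rw [mul_comm, ← mul_assoc, mul_comm (Matrix.det (Pmat b₀))] at *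
  rw [h, one_mul]

lemma det_smul_one_add_const [Nonempty β] (d c : R) :
    (d • (1 : Matrix β β R) + Matrix.of fun _ _ => c).det
      = (d + (Fintype.card β : R) * c) * d ^ (Fintype.card β - 1) := by
  obtain ⟨b₀⟩ := ‹Nonempty β›
  have key : (Qmat b₀ : Matrix β β R) * (d • 1 + Matrix.of fun _ _ => c) * (Pmat b₀)
      = d • 1 + Matrix.of (fun x z => (if x = b₀ then 1 else 0) * c *
          (if z = b₀ then (Fintype.card β : R) else 1)) := by
    rw [Matrix.mul_add, Matrix.add_mul]
    congr 1
    · rw [Matrix.mul_smul, Matrix.mul_one, Matrix.smul_mul, Qmat_mul_Pmat]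
    · exact Qmat_mul_const_mul_Pmat b₀ c
  rw [← det_conj_eq b₀ (d • 1 + Matrix.of fun _ _ => c), key]
  letI : Unique {x : β // x = b₀} := ⟨⟨⟨b₀, rfl⟩⟩, fun x => Subtype.ext x.2⟩
  set e := Equiv.sumCompl (fun x : β => x = b₀) with he
  rw [← Matrix.det_reindex_self e.symm]
  have hblocks : Matrix.reindex e.symm e.symm
        (d • 1 + Matrix.of (fun x z => (if x = b₀ then 1 else 0) * c *
          (if z = b₀ then (Fintype.card β : R) else 1)))
      = Matrix.fromBlocks (Matrix.of fun _ _ => d + (Fintype.card β : R) * c)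
          (Matrix.of fun _ _ => c) 0 (d • 1) := by
    ext i j
    cases i with
    | inl i => cases j with
      | inl j =>
        have hij : i = j := Subsingleton.elim i j
        subst hij
        simp [Matrix.reindex_apply, Matrix.fromBlocks, he, i.2, mul_comm]
      | inr j =>
        have hi : (i : β) = b₀ := i.2
        have hj : ¬ (j : β) = b₀ := j.2
        have hne : (i : β) ≠ (j : β) := by rw [hi]; exact fun h => hj h.symm
        have hne2 : b₀ ≠ (j : β) := fun h => hj h.symm
        simp [Matrix.reindex_apply, Matrix.fromBlocks, he, hi, hj, Matrix.one_apply, hne, hne2]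
    | inr i =>
      have hi : ¬ (i : β) = b₀ := i.2
      cases j with
      | inl j =>
        have hj : (j : β) = b₀ := j.2
        have hne : (i : β) ≠ (j : β) := by rw [hj]; exact hi
        simp [Matrix.reindex_apply, Matrix.fromBlocks, he, hi, hj, Matrix.one_apply, hne]
      | inr j =>
        by_cases hij : i = j
        · subst hij
          simp [Matrix.reindex_apply, Matrix.fromBlocks, he, hi]
        · have hne : (i : β) ≠ (j : β) := fun h => hij (Subtype.ext h)
          simp [Matrix.reindex_apply, Matrix.fromBlocks, he, hi, Matrix.one_apply, hne, hij]
  rw [hblocks, Matrix.det_fromBlocks_zero₂₁, Matrix.det_smul, Matrix.det_one, Matrix.det_unique]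
  simp only [Matrix.of_apply, mul_one]
  congr 1
  rw [Fintype.card_subtype_compl, Fintype.card_subtype_eq]

section Kron
open Kronecker
variable {α : Type*} [Fintype α] [DecidableEq α]

lemma det_kron [Nonempty β] (W : Matrix α α R) (t : R) :
    (Matrix.of fun p q : α × β => (if p = q then t else 0) + W p.1 q.1).det
      = t ^ (Fintype.card α * (Fintype.card β - 1))
        * (t • 1 + (Fintype.card β : R) • W).det := by
  obtain ⟨b₀⟩ := ‹Nonempty β›
  set Q' : Matrix (α × β) (α × β) R := (1 : Matrix α α R) ⊗ₖ (Qmat b₀ : Matrix β β R) with hQ'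
  set P' : Matrix (α × β) (α × β) R := (1 : Matrix α α R) ⊗ₖ (Pmat b₀ : Matrix β β R) with hP'
  have hQP : Q' * P' = 1 := by
    rw [hQ', hP', ← Matrix.mul_kronecker_mul, Matrix.one_mul, Qmat_mul_Pmat,
      Matrix.one_kronecker_one]
  have hM : (Matrix.of fun p q : α × β => (if p = q then t else 0) + W p.1 q.1)
      = t • 1 + W ⊗ₖ (Matrix.of fun _ _ => (1 : R)) := by
    ext p q
    simp only [Matrix.of_apply, Matrix.add_apply, Matrix.smul_apply, Matrix.one_apply,
      Matrix.kroneckerMap_apply, smul_eq_mul, mul_ite, mul_one, mul_zero]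
  set RJ : Matrix β β R := Matrix.of (fun x z => (if x = b₀ then 1 else 0) * 1 *
      (if z = b₀ then (Fintype.card β : R) else 1)) with hRJ
  have hconj : Q' * (t • 1 + W ⊗ₖ (Matrix.of fun _ _ => (1 : R))) * P' = t • 1 + W ⊗ₖ RJ := by
    rw [Matrix.mul_add, Matrix.add_mul]
    congr 1
    · rw [Matrix.mul_smul, Matrix.mul_one, Matrix.smul_mul, hQP]
    · rw [hQ', hP', ← Matrix.mul_kronecker_mul, ← Matrix.mul_kronecker_mul, Matrix.one_mul,
        Matrix.mul_one, Qmat_mul_const_mul_Pmat, hRJ]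
  have hdet1 : Q'.det * P'.det = 1 := by rw [← Matrix.det_mul, hQP, Matrix.det_one]
  have hdetM : (Matrix.of fun p q : α × β => (if p = q then t else 0) + W p.1 q.1).det
      = (t • 1 + W ⊗ₖ RJ).det := by
    rw [hM, ← hconj, Matrix.det_mul, Matrix.det_mul]
    ring_nf
    rw [mul_comm, ← mul_assoc, mul_comm (Matrix.det P')] at *
    rw [hdet1, one_mul]
  rw [hdetM]
  letI : Unique {x : β // x = b₀} := ⟨⟨⟨b₀, rfl⟩⟩, fun x => Subtype.ext x.2⟩
  set e : ((α × {x : β // x = b₀}) ⊕ (α × {x : β // ¬ x = b₀})) ≃ α × β :=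
    (Equiv.prodSumDistrib α _ _).symm.trans
      ((Equiv.refl α).prodCongr (Equiv.sumCompl (fun x : β => x = b₀))) with he
  rw [← Matrix.det_reindex_self e.symm]
  have hblocks : Matrix.reindex e.symm e.symm (t • 1 + W ⊗ₖ RJ)
      = Matrix.fromBlocks
          (Matrix.of fun p q : α × {x : β // x = b₀} =>
            (if p.1 = q.1 then t else 0) + W p.1 q.1 * (Fintype.card β : R))
          (Matrix.of fun p q => W p.1 q.1) 0 (t • 1) := by
    ext i j
    cases i with
    | inl i => cases j with
      | inl j =>
        have hi : (i.2 : β) = b₀ := i.2.2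
        have hj : (j.2 : β) = b₀ := j.2.2
        have h2 : i.2 = j.2 := Subsingleton.elim _ _
        simp only [Matrix.reindex_apply, Matrix.submatrix_apply, Equiv.symm_symm, he,
          Equiv.trans_apply, Equiv.prodSumDistrib, Matrix.fromBlocks_apply₁₁]
        simp [Matrix.add_apply, Matrix.smul_apply, Matrix.one_apply, Matrix.kroneckerMap_apply,
          hRJ, hi, hj, Prod.ext_iff, h2, mul_comm]
      | inr j =>
        have hi : (i.2 : β) = b₀ := i.2.2
        have hj : ¬ (j.2 : β) = b₀ := j.2.2
        have hne : (i.2 : β) ≠ (j.2 : β) := fun h => hj (h ▸ hi)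
        have hne2 : b₀ ≠ (j.2 : β) := fun h => hj h.symm
        simp only [Matrix.reindex_apply, Matrix.submatrix_apply, Equiv.symm_symm, he,
          Equiv.trans_apply, Equiv.prodSumDistrib, Matrix.fromBlocks_apply₁₂]
        simp [Matrix.add_apply, Matrix.smul_apply, Matrix.one_apply, Matrix.kroneckerMap_apply,
          hRJ, hi, hj, Prod.ext_iff, hne, hne2]
    | inr i => cases j with
      | inl j =>
        have hi : ¬ (i.2 : β) = b₀ := i.2.2
        have hj : (j.2 : β) = b₀ := j.2.2
        have hne : (i.2 : β) ≠ (j.2 : β) := fun h => hi (h.trans hj)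
        simp only [Matrix.reindex_apply, Matrix.submatrix_apply, Equiv.symm_symm, he,
          Equiv.trans_apply, Equiv.prodSumDistrib, Matrix.fromBlocks_apply₂₁]
        simp [Matrix.add_apply, Matrix.smul_apply, Matrix.one_apply, Matrix.kroneckerMap_apply,
          hRJ, hi, hj, Prod.ext_iff, hne]
      | inr j =>
        have hi : ¬ (i.2 : β) = b₀ := i.2.2
        simp only [Matrix.reindex_apply, Matrix.submatrix_apply, Equiv.symm_symm, he,
          Equiv.trans_apply, Equiv.prodSumDistrib, Matrix.fromBlocks_apply₂₂]
        by_cases hij : i = j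
        · subst hij
          simp [Matrix.add_apply, Matrix.smul_apply, Matrix.one_apply,
            Matrix.kroneckerMap_apply, hRJ, hi]
        · have h1 : ((i.1, (i.2 : β)) : α × β) ≠ (j.1, (j.2 : β)) := by
            intro h
            have h1' := congrArg Prod.fst h
            have h2' := congrArg Prod.snd h
            simp only at h1' h2'
            exact hij (Prod.ext_iff.mpr ⟨h1', Subtype.ext h2'⟩)
          simp [Matrix.add_apply, Matrix.smul_apply, Matrix.one_apply,
            Matrix.kroneckerMap_apply, hRJ, hi, h1, hij, Prod.ext_iff]
  rw [hblocks, Matrix.det_fromBlocks_zero₂₁, Matrix.det_smul, Matrix.det_one, mul_one]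
  have hcard : Fintype.card (α × {x : β // ¬ x = b₀}) = Fintype.card α * (Fintype.card β - 1) := by
    rw [Fintype.card_prod, Fintype.card_subtype_compl, Fintype.card_subtype_eq]
  rw [hcard, mul_comm]
  congr 1
  rw [← Matrix.det_reindex_self (Equiv.prodUnique α {x : β // x = b₀})]
  congr 1
  ext a a'
  simp only [Matrix.reindex_apply, Matrix.submatrix_apply, Equiv.prodUnique,
    Matrix.of_apply, Matrix.add_apply, Matrix.smul_apply, Matrix.one_apply, smul_eq_mul,
    mul_ite, mul_one, mul_zero, Equiv.coe_fn_symm_mk, Matrix.smul_apply]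
  simp [Equiv.prodPUnit, Equiv.prodCongr, mul_comm]

end Kron
end DetTools


theorem nc_charpoly_aux (F : Type*) [Field F] [Fintype F] (h4 : 4 ≤ Fintype.card F)
    (G : Type*) [Group G] [Fintype G] (U : F × F ≃ G)
    (hU : ∀ a b a' b' : F, U (a, b) * U (a', b') = U (a + a', b + b' + a' * a ^ 2)) :
    ncCharpoly G =
      X *
      (X - C ((Fintype.card F : ℝ) ^ 2 - 2 * Fintype.card F)) ^ ((Fintype.card F - 1) ^ 2) *
      (X - C ((Fintype.card F : ℝ) ^ 2 - Fintype.card F)) ^ (Fintype.card F - 2) := by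
  classical
  -- commuting characterization
  have hsq : ∀ a a' : F, (a' * a ^ 2 = a * a' ^ 2) ↔ (a = 0 ∨ a' = 0 ∨ a = a') := by
    intro a a'
    constructor
    · intro h
      have h0 : a * a' * (a - a') = 0 := by linear_combination h
      rcases mul_eq_zero.mp h0 with h1 | h1
      · rcases mul_eq_zero.mp h1 with h2 | h2
        · exact Or.inl h2
        · exact Or.inr (Or.inl h2)
      · exact Or.inr (Or.inr (sub_eq_zero.mp h1))
    · rintro (rfl | rfl | rfl) <;> ring
  have hcomm : ∀ a b a' b' : F, (Commute (U (a, b)) (U (a', b'))) ↔ (a = 0 ∨ a' = 0 ∨ a = a') := by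
    intro a b a' b'
    unfold Commute SemiconjBy
    rw [hU, hU, Equiv.apply_eq_iff_eq, Prod.mk.injEq]
    constructor
    · rintro ⟨-, h2⟩
      rw [← hsq]
      linear_combination h2
    · intro h
      refine ⟨by ring, ?_⟩
      have h2 := (hsq a a').mpr h
      linear_combination h2
  -- center characterization
  have hcenter : ∀ y : F × F, (U y ∈ Subgroup.center G) ↔ y.1 = 0 := by
    intro y
    obtain ⟨a, b⟩ := y
    rw [Subgroup.mem_center_iff]
    constructor
    · intro h
      by_contra ha
      have hex : ∃ c : F, c ≠ 0 ∧ c ≠ a := by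
        have hcard : (({0, a} : Finset F)ᶜ).Nonempty := by
          rw [← Finset.card_pos, Finset.card_compl]
          have : ({0, a} : Finset F).card ≤ 2 := Finset.card_insert_le _ _ |>.trans (by simp)
          omega
        obtain ⟨c, hc⟩ := hcard
        simp only [Finset.mem_compl, Finset.mem_insert, Finset.mem_singleton, not_or] at hc
        exact ⟨c, hc.1, hc.2⟩
      obtain ⟨c, hc0, hca⟩ := hex
      have := h (U (c, 0))
      have hC : Commute (U (a, b)) (U (c, 0)) := this.symm
      rw [hcomm] at hC
      rcases hC with h1 | h1 | h1
      · exact ha h1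
      · exact hc0 h1
      · exact hca h1.symm
    · intro ha g
      subst ha
      have hg : U (U.symm g) = g := U.apply_symm_apply g
      rw [← hg]
      obtain ⟨c, d⟩ := U.symm g
      have h1 := (hcomm 0 b c d).mpr (Or.inl rfl)
      exact h1.symm
  -- the vertex equivalence
  set α := {a : F // a ≠ 0} with hα
  have hnc : ∀ (p : α × F), U (p.1.1, p.2) ∉ Subgroup.center G := by
    intro p h
    rw [hcenter] at h
    exact p.1.2 h
  set ee : α × F ≃ {x : G // x ∉ Subgroup.center G} :=
    { toFun := fun p => ⟨U (p.1.1, p.2), hnc p⟩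
      invFun := fun x => (⟨(U.symm x.1).1, fun h0 => x.2 (by
          have : U (U.symm x.1) ∈ Subgroup.center G := by
            rw [hcenter]; exact h0
          rwa [U.apply_symm_apply] at this)⟩, (U.symm x.1).2)
      left_inv := fun p => by
        ext
        · simp
        · simp
      right_inv := fun x => by
        apply Subtype.ext
        simp } with hee
  -- adjacency characterization
  have hadj : ∀ p q : α × F,
      ((nonCommGraph G).Adj (ee p) (ee q)) ↔ ¬ (p.1 = q.1) := by
    intro p q
    show ¬ (Commute (U (p.1.1, p.2)) (U (q.1.1, q.2))) ↔ _
    rw [hcomm]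
    simp only [p.1.2, q.1.2, false_or]
    rw [not_iff_not]
    exact ⟨fun h => Subtype.ext h, fun h => congrArg Subtype.val h⟩
    -- degree computation
  set DgR : ℝ := ((Fintype.card α : ℝ) - 1) * (Fintype.card F : ℝ) with hDgR
  have hdeg : ∀ (p : α × F) (inst : Fintype ((nonCommGraph G).neighborSet (ee p))),
      ((@SimpleGraph.degree _ (nonCommGraph G) (ee p) inst : ℕ) : ℝ) = DgR := by
    intro p inst
    rw [Subsingleton.elim inst (SimpleGraph.neighborSetFintype _ _)]
    rw [SimpleGraph.degree_eq_sum_if_adj]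
    rw [← Equiv.sum_comp ee (fun j => if (nonCommGraph G).Adj (ee p) j then (1:ℝ) else 0)]
    have h1 : ∀ q : α × F, (if (nonCommGraph G).Adj (ee p) (ee q) then (1:ℝ) else 0)
        = if p.1 = q.1 then 0 else 1 := by
      intro q
      by_cases h : p.1 = q.1
      · simp [hadj, h]
      · simp [hadj, h]
    simp only [h1]
    rw [Fintype.sum_prod_type]
    have hin : ∀ x : α, (∑ _b : F, (if p.1 = x then (0:ℝ) else 1))
        = (if p.1 = x then (0:ℝ) else 1) * (Fintype.card F : ℝ) := fun x => by
      rw [Finset.sum_const, Finset.card_univ, nsmul_eq_mul, mul_comm]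
    simp only [hin]
    rw [← Finset.sum_mul]
    have h2 : (∑ a' : α, if p.1 = a' then (0:ℝ) else 1) = (Fintype.card α : ℝ) - 1 := by
      have h3 : ∀ a' : α, (if p.1 = a' then (0:ℝ) else 1) = 1 - (if p.1 = a' then 1 else 0) := by
        intro a'; by_cases h : p.1 = a' <;> simp [h]
      simp only [h3]
      rw [Finset.sum_sub_distrib, Finset.sum_const, Finset.card_univ, Finset.sum_ite_eq]
      simp
    rw [h2]
  set M₀ : Matrix (α × F) (α × F) ℝ := Matrix.of (fun p q =>
      (if p = q then DgR else 0) - (if p.1 = q.1 then 0 else 1)) with hM₀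
  have hLap : ncLap G = Matrix.reindex ee ee M₀ := by
    unfold ncLap SimpleGraph.lapMatrix
    ext i j
    rw [Matrix.reindex_apply, Matrix.submatrix_apply]
    obtain ⟨p, rfl⟩ : ∃ p, ee p = i := ⟨ee.symm i, ee.apply_symm_apply i⟩
    obtain ⟨q, rfl⟩ : ∃ q, ee q = j := ⟨ee.symm j, ee.apply_symm_apply j⟩
    rw [Equiv.symm_apply_apply, Equiv.symm_apply_apply]
    rw [Matrix.sub_apply]
    by_cases hpq : p = q
    · subst hpq
      have hAdj : ¬ (nonCommGraph G).Adj (ee p) (ee p) := SimpleGraph.irrefl _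
      simp [SimpleGraph.degMatrix, Matrix.diagonal_apply_eq, SimpleGraph.adjMatrix_apply,
        hAdj, hM₀]
      exact hdeg p _
    · have hne : ee p ≠ ee q := fun h => hpq (ee.injective h)
      simp only [SimpleGraph.degMatrix, Matrix.diagonal_apply_ne _ hne,
        SimpleGraph.adjMatrix_apply, hM₀, Matrix.of_apply, if_neg hpq]
      by_cases h1 : p.1 = q.1
      · have hA : ¬ (nonCommGraph G).Adj (ee p) (ee q) := by rw [hadj]; simp [h1]
        simp [hA, h1]
      · have hA : (nonCommGraph G).Adj (ee p) (ee q) := (hadj p q).mpr h1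
        simp [hA, h1]
  have hchar : ncCharpoly G = M₀.charpoly := by
    unfold ncCharpoly
    rw [hLap]
    refine Eq.trans ?_ (Matrix.charpoly_reindex (e := ee) M₀)
    congr!
  rw [hchar]
  set t : Polynomial ℝ := X - C DgR with ht
  set Wm : Matrix α α (Polynomial ℝ) := Matrix.of (fun a a' => if a = a' then 0 else 1) with hWm
  have hcm : Matrix.charmatrix M₀ = Matrix.of (fun p q : α × F =>
      (if p = q then t else 0) + Wm p.1 q.1) := by
    ext p q
    by_cases hpq : p = q
    · subst hpq
      rw [Matrix.charmatrix_apply_eq]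
      simp [hM₀, hWm, ht]
    · rw [Matrix.charmatrix_apply_ne _ _ _ hpq]
      by_cases h1 : p.1 = q.1
      · simp [hM₀, hWm, hpq, h1]
      · simp [hM₀, hWm, hpq, h1]
  unfold Matrix.charpoly
  rw [hcm]
  haveI : Nonempty F := ⟨0⟩
  haveI : Nonempty α := ⟨⟨1, one_ne_zero⟩⟩
  rw [det_kron]
  have hW1 : t • (1 : Matrix α α (Polynomial ℝ)) + (Fintype.card F : Polynomial ℝ) • Wm
      = (t - (Fintype.card F : Polynomial ℝ)) • 1
        + Matrix.of (fun _ _ => (Fintype.card F : Polynomial ℝ)) := by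
    ext a a'
    by_cases h : a = a'
    · subst h
      simp [hWm, Matrix.one_apply]
    · simp [hWm, Matrix.one_apply, h]
  rw [hW1, det_smul_one_add_const]
  -- numerics
  have h1q : 1 ≤ Fintype.card F := by omega
  have hcardα : Fintype.card α = Fintype.card F - 1 := by
    calc Fintype.card α = Fintype.card {a : F // ¬ a = 0} :=
          Fintype.card_congr (Equiv.refl α)
    _ = Fintype.card F - Fintype.card {a : F // a = 0} := Fintype.card_subtype_compl _
    _ = Fintype.card F - 1 := by rw [Fintype.card_subtype_eq]
  have e1 : ((Fintype.card F : ℕ) : Polynomial ℝ) = C ((Fintype.card F : ℕ) : ℝ) :=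
    (Polynomial.C_eq_natCast _).symm
  have e2 : ((Fintype.card α : ℕ) : Polynomial ℝ) = C ((Fintype.card α : ℕ) : ℝ) :=
    (Polynomial.C_eq_natCast _).symm
  have hqR1 : ((Fintype.card α : ℕ) : ℝ) = (Fintype.card F : ℝ) - 1 := by
    rw [hcardα, Nat.cast_sub h1q, Nat.cast_one]
  have hDgR' : DgR = (Fintype.card F : ℝ)^2 - 2*(Fintype.card F : ℝ) := by
    rw [hDgR, hqR1]; ring
  have factor1 : t - ((Fintype.card F : ℕ) : Polynomial ℝ)
      + ((Fintype.card α : ℕ) : Polynomial ℝ) * ((Fintype.card F : ℕ) : Polynomial ℝ) = X := by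
    rw [ht, e1, e2, hqR1, ← Polynomial.C_mul]
    have hx : ((Fintype.card F : ℝ) - 1) * (Fintype.card F : ℝ) = DgR + (Fintype.card F : ℝ) := by
      rw [hDgR']; ring
    rw [hx, Polynomial.C_add]
    ring
  have base2 : t - ((Fintype.card F : ℕ) : Polynomial ℝ)
      = X - C ((Fintype.card F : ℝ)^2 - (Fintype.card F : ℝ)) := by
    rw [ht, e1]
    have hx : ((Fintype.card F : ℝ)^2 - (Fintype.card F : ℝ)) = DgR + (Fintype.card F : ℝ) := by
      rw [hDgR']; ring
    rw [hx, Polynomial.C_add]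
    ring
  have base1 : t = X - C ((Fintype.card F : ℝ)^2 - 2*(Fintype.card F : ℝ)) := by
    rw [ht, hDgR']
  have exp1 : Fintype.card α * (Fintype.card F - 1) = (Fintype.card F - 1)^2 := by
    rw [hcardα, sq]
  have exp2 : Fintype.card α - 1 = Fintype.card F - 2 := by omega
  rw [exp1, exp2, factor1, base2, base1]
  ring

/-- Laplacian spectrum of the non-commuting graph of Hanaki's group
`A(n, ϑ)`, realized as any group `G` whose elements are parametrized by pairs
`(a, b) ∈ GF(2^n) × GF(2^n)` via a bijection `U` satisfying
`U(a, b) * U(a', b') = U(a + a', b + b' + a'·ϑ(a))`, where `ϑ(a) = a²` is the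
Frobenius automorphism. -/
theorem laplacian_spectrum_nc_graph_Hanaki_A_n_theta
    (n : ℕ) (hn : 2 ≤ n) (G : Type*) [Group G] [Fintype G]
    (U : GaloisField 2 n × GaloisField 2 n ≃ G)
    (hU : ∀ a b a' b' : GaloisField 2 n,
      U (a, b) * U (a', b') = U (a + a', b + b' + a' * a ^ 2)) :
    ncCharpoly G =
      X *
      (X - C ((2 : ℝ) ^ (2 * n) - 2 ^ (n + 1))) ^ ((2 ^ n - 1) ^ 2) *
      (X - C ((2 : ℝ) ^ (2 * n) - 2 ^ n)) ^ (2 ^ n - 2) := by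
  letI : Fintype (GaloisField 2 n) := Fintype.ofFinite _
  have hcard : Fintype.card (GaloisField 2 n) = 2 ^ n := by
    rw [← Nat.card_eq_fintype_card]
    exact GaloisField.card 2 n (by omega)
  have h4 : 4 ≤ Fintype.card (GaloisField 2 n) := by
    rw [hcard]
    calc (4:ℕ) = 2 ^ 2 := by norm_num
    _ ≤ 2 ^ n := Nat.pow_le_pow_right (by norm_num) hn
  have hmain := nc_charpoly_aux (GaloisField 2 n) h4 G U hU
  rw [hmain, hcard]
  have c1 : ((2^n : ℕ) : ℝ)^2 - 2*((2^n : ℕ) : ℝ) = (2:ℝ)^(2*n) - 2^(n+1) := by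
    push_cast
    rw [two_mul, pow_add, pow_succ]
    ring
  have c2 : ((2^n : ℕ) : ℝ)^2 - ((2^n : ℕ) : ℝ) = (2:ℝ)^(2*n) - 2^n := by
    push_cast
    rw [two_mul, pow_add]
    ring
  rw [c1, c2]
end
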